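/- arXiv:1404.0740 — 7 statements merged into one kernel-verified Lean document; each statement's English description precedes it below -/
import Mathlib

section
/- Let f ∈ L¹_loc(ℝ) and suppose 0 is a right Lebesgue point of f with value f_L(0₊) = α. Define (Sf)(λ) = (1/π) ∫₀^{√λ} f(ν) (λ − ν²)^{−1/2} dν for λ > 0. Then Sf ∈ L¹_loc((0,∞)), 0 is a right Lebesgue point of Sf, and (Sf)_L(0₊) = α/2. -/
open MeasureTheory Filter Set

lemma inv_sqrt_eq (x : ℝ) : (Real.sqrt x)⁻¹ = x ^ (-(1/2) : ℝ) := by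
  rcases le_or_gt 0 x with hx | hx
  · rw [Real.sqrt_eq_rpow, ← Real.rpow_neg hx]
  · rw [Real.sqrt_eq_zero_of_nonpos hx.le, Real.rpow_def_of_neg hx,
      show (-(1/2) : ℝ) * Real.pi = -(Real.pi/2) by ring, Real.cos_neg,
      Real.cos_pi_div_two]
    simp

lemma intInt_inv_sqrt (c b : ℝ) :
    IntervalIntegrable (fun x => (Real.sqrt (x - c))⁻¹) volume c b := by
  have h : IntervalIntegrable (fun x : ℝ => x ^ (-(1/2) : ℝ)) volume 0 (b - c) :=
    intervalIntegral.intervalIntegrable_rpow' (by norm_num)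
  have h2 := h.comp_sub_right c
  simp only [zero_add, sub_add_cancel] at h2
  simpa only [inv_sqrt_eq] using h2

lemma integral_Ioc_inv_sqrt {c b : ℝ} (hcb : c ≤ b) :
    ∫ lam in Ioc c b, (Real.sqrt (lam - c))⁻¹ = 2 * Real.sqrt (b - c) := by
  rw [← intervalIntegral.integral_of_le hcb]
  simp only [inv_sqrt_eq]
  rw [intervalIntegral.integral_comp_sub_right (fun x => x ^ (-(1/2) : ℝ)) c,
    integral_rpow (Or.inl (by norm_num))]
  rw [sub_self, Real.zero_rpow (by norm_num), Real.sqrt_eq_rpow]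
  norm_num
  ring

lemma intInt_arc {lam : ℝ} (hl : 0 < lam) :
    IntervalIntegrable (fun ν => (Real.sqrt (lam - ν^2))⁻¹) volume 0 (Real.sqrt lam) := by
  have hs : 0 < Real.sqrt lam := Real.sqrt_pos.mpr hl
  have h3 : IntervalIntegrable (fun ν => (Real.sqrt (Real.sqrt lam - ν))⁻¹) volume 0
      (Real.sqrt lam) := by
    have h : IntervalIntegrable (fun x : ℝ => x ^ (-(1/2) : ℝ)) volume 0 (Real.sqrt lam) :=
      intervalIntegral.intervalIntegrable_rpow' (by norm_num)
    have h2 := (h.comp_sub_left (Real.sqrt lam)).symm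
    simp only [sub_zero, sub_self] at h2
    simpa only [← inv_sqrt_eq] using h2
  refine (h3.const_mul (Real.sqrt (Real.sqrt lam))⁻¹).mono_fun' ?_ ?_
  · exact ((Real.continuous_sqrt.measurable.comp
      (measurable_const.sub (measurable_id.pow_const 2))).inv).aestronglyMeasurable.restrict
  · rw [Set.uIoc_of_le hs.le]
    refine (ae_restrict_iff' measurableSet_Ioc).mpr (Eventually.of_forall fun x hx => ?_)
    obtain ⟨hx0, hxl⟩ := hx
    show ‖(Real.sqrt (lam - x ^ 2))⁻¹‖ ≤
      (Real.sqrt (Real.sqrt lam))⁻¹ * (Real.sqrt (Real.sqrt lam - x))⁻¹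
    rw [Real.norm_eq_abs, abs_of_nonneg (inv_nonneg.mpr (Real.sqrt_nonneg _))]
    rcases hxl.eq_or_lt with heq | hlt
    · rw [heq]
      simp [Real.sq_sqrt hl.le]
    · have h1 : 0 < Real.sqrt lam - x := sub_pos.mpr hlt
      have key : Real.sqrt lam * (Real.sqrt lam - x) ≤ lam - x^2 := by
        nlinarith [Real.sq_sqrt hl.le, hx0.le]
      have hpos : 0 < Real.sqrt (Real.sqrt lam * (Real.sqrt lam - x)) :=
        Real.sqrt_pos.mpr (by positivity)
      calc (Real.sqrt (lam - x^2))⁻¹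
          ≤ (Real.sqrt (Real.sqrt lam * (Real.sqrt lam - x)))⁻¹ :=
            inv_anti₀ hpos (Real.sqrt_le_sqrt key)
        _ = (Real.sqrt (Real.sqrt lam))⁻¹ * (Real.sqrt (Real.sqrt lam - x))⁻¹ := by
            rw [Real.sqrt_mul (Real.sqrt_nonneg _), mul_inv]

lemma integral_arc {lam : ℝ} (hl : 0 < lam) :
    ∫ ν in Ioc (0:ℝ) (Real.sqrt lam), (Real.sqrt (lam - ν^2))⁻¹ = Real.pi / 2 := by
  have hs : 0 < Real.sqrt lam := Real.sqrt_pos.mpr hl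
  rw [← intervalIntegral.integral_of_le hs.le]
  have hcont : ContinuousOn (fun ν : ℝ => Real.arcsin (ν / Real.sqrt lam))
      (Icc 0 (Real.sqrt lam)) :=
    (Real.continuous_arcsin.comp (continuous_id.div_const _)).continuousOn
  have hderiv : ∀ x ∈ Ioo (0:ℝ) (Real.sqrt lam),
      HasDerivWithinAt (fun ν : ℝ => Real.arcsin (ν / Real.sqrt lam))
        ((Real.sqrt (lam - x^2))⁻¹) (Ioi x) x := by
    intro x hx
    have hx1 : x / Real.sqrt lam < 1 := (div_lt_one hs).mpr hx.2
    have hx0 : 0 < x / Real.sqrt lam := div_pos hx.1 hs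
    have hd : HasDerivAt (fun ν : ℝ => Real.arcsin (ν / Real.sqrt lam))
        (1 / Real.sqrt (1 - (x / Real.sqrt lam)^2) * (1 / Real.sqrt lam)) x :=
      by have := (Real.hasDerivAt_arcsin (x := x / Real.sqrt lam) (by linarith : (-1:ℝ) < x / Real.sqrt lam).ne' (ne_of_lt hx1)).comp x
            ((hasDerivAt_id x).div_const (Real.sqrt lam)); exact this
    refine hd.hasDerivWithinAt.congr_deriv ?_
    have hnn : 0 ≤ 1 - (x / Real.sqrt lam)^2 := by nlinarith
    have h1 : (1 - (x / Real.sqrt lam)^2) * lam = lam - x^2 := by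
      rw [div_pow, Real.sq_sqrt hl.le]; field_simp
    rw [one_div, one_div, ← mul_inv, ← Real.sqrt_mul hnn lam, h1]
  have := intervalIntegral.integral_eq_sub_of_hasDeriv_right_of_le hs.le hcont hderiv
    (intInt_arc hl)
  rw [this, div_self (ne_of_gt hs), Real.arcsin_one, zero_div, Real.arcsin_zero, sub_zero]

noncomputable def Ker (g : ℝ → ℝ) (p : ℝ × ℝ) : ℝ :=
  if 0 < p.2 ∧ p.2 ≤ Real.sqrt p.1 then g p.2 / Real.sqrt (p.1 - p.2^2) else 0

lemma ker_section (g : ℝ → ℝ) (lam : ℝ) (ν : ℝ) :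
    Ker g (lam, ν) =
      (Ioc (0:ℝ) (Real.sqrt lam)).indicator (fun ν => g ν / Real.sqrt (lam - ν^2)) ν := by
  simp only [Ker, indicator_apply, mem_Ioc]

lemma ker_section' (g : ℝ → ℝ) {ν : ℝ} (hν : 0 < ν) (lam : ℝ) :
    Ker g (lam, ν) =
      (Ici (ν^2)).indicator (fun lam => g ν / Real.sqrt (lam - ν^2)) lam := by
  simp only [Ker, indicator_apply, mem_Ici, hν, true_and, Real.le_sqrt' hν]

lemma ker_zero (g : ℝ → ℝ) {ν : ℝ} (hν : ν ≤ 0) (lam : ℝ) : Ker g (lam, ν) = 0 := by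
  simp [Ker, hν.not_gt]

lemma meas_ker {g : ℝ → ℝ} (hg : Measurable g) : StronglyMeasurable (Ker g) := by
  have : Measurable (Ker g) := by
    refine Measurable.ite ?_ ?_ measurable_const
    · exact MeasurableSet.inter (measurableSet_lt measurable_const measurable_snd)
        (measurableSet_le measurable_snd (Real.continuous_sqrt.measurable.comp measurable_fst))
    · exact (hg.comp measurable_snd).div
        (Real.continuous_sqrt.measurable.comp (measurable_fst.sub (measurable_snd.pow_const 2)))
  exact this.stronglyMeasurable

lemma ker_integrable_fixed_nu {g : ℝ → ℝ} {b : ℝ} (ν : ℝ) :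
    Integrable (fun lam => Ker g (lam, ν)) (volume.restrict (Ioc 0 b)) := by
  rcases le_or_gt ν 0 with hν | hν
  · have : (fun lam => Ker g (lam, ν)) = fun _ => (0:ℝ) := funext fun lam => ker_zero g hν lam
    rw [this]; exact integrable_zero _ _ _
  · simp only [ker_section' g hν]
    rw [integrable_indicator_iff measurableSet_Ici, IntegrableOn,
      Measure.restrict_restrict measurableSet_Ici]
    have hsub : Ici (ν^2) ∩ Ioc 0 b ⊆ Icc (ν^2) b := fun x hx => ⟨hx.1, hx.2.2⟩
    refine IntegrableOn.mono_set ?_ hsub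
    by_cases hb : ν^2 ≤ b
    · have h2 : IntegrableOn (fun lam => (Real.sqrt (lam - ν^2))⁻¹) (Icc (ν^2) b) :=
        (intervalIntegrable_iff_integrableOn_Icc_of_le hb).mp (intInt_inv_sqrt (ν^2) b)
      simpa [div_eq_mul_inv, IntegrableOn] using h2.const_mul (g ν)
    · rw [Icc_eq_empty hb]; exact integrableOn_empty

lemma ker_norm_integral_eq_zero (g : ℝ → ℝ) {b ν : ℝ}
    (hν : ν ∉ Ioc (0:ℝ) (Real.sqrt b)) :
    ∫ lam in Ioc (0:ℝ) b, ‖Ker g (lam, ν)‖ = 0 := by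
  have h : ∀ lam ∈ Ioc (0:ℝ) b, ‖Ker g (lam, ν)‖ = 0 := by
    intro lam hlam
    have hz : Ker g (lam, ν) = 0 := by
      simp only [Ker]
      rw [if_neg]
      rintro ⟨h1, h2⟩
      exact hν ⟨h1, h2.trans (Real.sqrt_le_sqrt hlam.2)⟩
    simp [hz]
  rw [setIntegral_congr_fun measurableSet_Ioc h, integral_zero]

lemma ker_norm_integral_le {g : ℝ → ℝ} {b ν : ℝ} (hb : 0 < b)
    (hν : ν ∈ Ioc (0:ℝ) (Real.sqrt b)) :
    ∫ lam in Ioc (0:ℝ) b, ‖Ker g (lam, ν)‖ ≤ 2 * Real.sqrt b * |g ν| := by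
  obtain ⟨hν0, hνb⟩ := hν
  have hν2b : ν^2 ≤ b := (Real.le_sqrt' hν0).mp hνb
  have hnorm : ∀ lam, ‖Ker g (lam, ν)‖ =
      (Ici (ν^2)).indicator (fun lam => |g ν| * (Real.sqrt (lam - ν^2))⁻¹) lam := by
    intro lam
    rw [ker_section' g hν0]
    by_cases hlam : lam ∈ Ici (ν^2) <;>
      simp [indicator_apply, hlam, abs_div, abs_of_nonneg (Real.sqrt_nonneg (lam - ν^2)),
        div_eq_mul_inv]
  simp only [hnorm]
  rw [setIntegral_indicator measurableSet_Ici]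
  have hset : Ioc (0:ℝ) b ∩ Ici (ν^2) = Icc (ν^2) b := by
    ext x
    simp only [mem_inter_iff, mem_Ioc, mem_Ici, mem_Icc]
    constructor
    · rintro ⟨⟨_, h2⟩, h3⟩; exact ⟨h3, h2⟩
    · rintro ⟨h1, h2⟩
      exact ⟨⟨lt_of_lt_of_le (pow_pos hν0 2) h1, h2⟩, h1⟩
  rw [hset, integral_const_mul, integral_Icc_eq_integral_Ioc, integral_Ioc_inv_sqrt hν2b]
  have h1 : Real.sqrt (b - ν^2) ≤ Real.sqrt b := Real.sqrt_le_sqrt (by nlinarith [pow_pos hν0 2])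
  calc |g ν| * (2 * Real.sqrt (b - ν^2)) ≤ |g ν| * (2 * Real.sqrt b) :=
        mul_le_mul_of_nonneg_left (by linarith) (abs_nonneg _)
    _ = 2 * Real.sqrt b * |g ν| := by ring

lemma ker_prod_integrable {g : ℝ → ℝ} (hgm : Measurable g)
    (hgi : ∀ t : ℝ, IntegrableOn g (Ioc 0 t)) {b : ℝ} (hb : 0 < b) :
    Integrable (Ker g) ((volume.restrict (Ioc (0:ℝ) b)).prod volume) := by
  rw [integrable_prod_iff' (meas_ker hgm).aestronglyMeasurable]
  constructor
  · exact Eventually.of_forall fun ν => ker_integrable_fixed_nu ν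
  · have hbound : Integrable ((Ioc (0:ℝ) (Real.sqrt b)).indicator
        (fun ν => 2 * Real.sqrt b * |g ν|)) := by
      rw [integrable_indicator_iff measurableSet_Ioc]
      exact (hgi (Real.sqrt b)).abs.const_mul _
    refine Integrable.mono' hbound ?_ ?_
    · exact (StronglyMeasurable.integral_prod_left'
        (μ := volume.restrict (Ioc (0:ℝ) b)) (meas_ker hgm).norm).aestronglyMeasurable
    · refine Eventually.of_forall fun ν => ?_
      rw [Real.norm_eq_abs, abs_of_nonneg (integral_nonneg fun lam => norm_nonneg _)]
      by_cases hν : ν ∈ Ioc (0:ℝ) (Real.sqrt b)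
      · rw [indicator_of_mem hν]
        exact ker_norm_integral_le hb hν
      · rw [indicator_of_notMem hν, ker_norm_integral_eq_zero g hν]

lemma ker_swap_bound {g : ℝ → ℝ} (hgm : Measurable g)
    (hgi : ∀ t : ℝ, IntegrableOn g (Ioc 0 t)) {b : ℝ} (hb : 0 < b) :
    ∫ lam in Ioc (0:ℝ) b, ∫ ν, ‖Ker g (lam, ν)‖ ≤
      2 * Real.sqrt b * ∫ ν in Ioc (0:ℝ) (Real.sqrt b), |g ν| := by
  have hker := ker_prod_integrable hgm hgi hb
  have hswap : (∫ lam in Ioc (0:ℝ) b, ∫ ν, ‖Ker g (lam, ν)‖) =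
      ∫ ν, ∫ lam in Ioc (0:ℝ) b, ‖Ker g (lam, ν)‖ :=
    MeasureTheory.integral_integral_swap (f := fun lam ν => ‖Ker g (lam, ν)‖) hker.norm
  rw [hswap]
  have hFz : ∀ ν ∉ Ioc (0:ℝ) (Real.sqrt b),
      (∫ lam in Ioc (0:ℝ) b, ‖Ker g (lam, ν)‖) = 0 :=
    fun ν hν => ker_norm_integral_eq_zero g hν
  have heq : (∫ ν, ∫ lam in Ioc (0:ℝ) b, ‖Ker g (lam, ν)‖) =
      ∫ ν in Ioc (0:ℝ) (Real.sqrt b), ∫ lam in Ioc (0:ℝ) b, ‖Ker g (lam, ν)‖ := by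
    rw [← integral_indicator measurableSet_Ioc]
    congr 1
    funext ν
    by_cases hν : ν ∈ Ioc (0:ℝ) (Real.sqrt b)
    · rw [indicator_of_mem hν]
    · rw [indicator_of_notMem hν, hFz ν hν]
  rw [heq]
  have hFi : IntegrableOn (fun ν => ∫ lam in Ioc (0:ℝ) b, ‖Ker g (lam, ν)‖)
      (Ioc (0:ℝ) (Real.sqrt b)) := hker.integral_norm_prod_right.integrableOn
  calc (∫ ν in Ioc (0:ℝ) (Real.sqrt b), ∫ lam in Ioc (0:ℝ) b, ‖Ker g (lam, ν)‖)
      ≤ ∫ ν in Ioc (0:ℝ) (Real.sqrt b), 2 * Real.sqrt b * |g ν| :=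
        setIntegral_mono_on hFi ((hgi _).abs.const_mul _) measurableSet_Ioc
          (fun ν hν => ker_norm_integral_le hb hν)
    _ = 2 * Real.sqrt b * ∫ ν in Ioc (0:ℝ) (Real.sqrt b), |g ν| := integral_const_mul _ _

/-- If `f ∈ L¹_loc(ℝ)` and `0` is a right Lebesgue point of `f` with value `α`,
then `Sf(λ) = (1/π) ∫₀^{√λ} f(ν) (λ - ν²)^{-1/2} dν` is locally integrable on `(0,∞)`,
`0` is a right Lebesgue point of `Sf`, and `(Sf)_L(0₊) = α/2`. -/
theorem stmt_0 (f : ℝ → ℝ) (α : ℝ)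
    (hf : LocallyIntegrable f)
    (hlp : Tendsto (fun h : ℝ => (1 / h) * ∫ y in Ioc (0 : ℝ) h, |f y - α|)
      (nhdsWithin 0 (Ioi 0)) (nhds 0)) :
    LocallyIntegrableOn
      (fun lam : ℝ =>
        Real.pi⁻¹ * ∫ ν in Ioc (0 : ℝ) (Real.sqrt lam), f ν / Real.sqrt (lam - ν ^ 2))
      (Ioi 0) ∧
    Tendsto (fun h : ℝ => (1 / h) * ∫ lam in Ioc (0 : ℝ) h,
        |Real.pi⁻¹ * (∫ ν in Ioc (0 : ℝ) (Real.sqrt lam), f ν / Real.sqrt (lam - ν ^ 2))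
          - α / 2|)
      (nhdsWithin 0 (Ioi 0)) (nhds 0) := by
  obtain ⟨f', hf'm, hff'⟩ : ∃ f', StronglyMeasurable f' ∧ f =ᵐ[volume] f' :=
    ⟨hf.aestronglyMeasurable.mk f, hf.aestronglyMeasurable.stronglyMeasurable_mk,
      hf.aestronglyMeasurable.ae_eq_mk⟩
  have hf'meas : Measurable f' := hf'm.measurable
  have hfi : ∀ t : ℝ, IntegrableOn f' (Ioc 0 t) := by
    intro t
    refine Integrable.congr ?_ hff'.restrict
    exact (hf.integrableOn_isCompact isCompact_Icc).mono_set Ioc_subset_Icc_self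
  set g : ℝ → ℝ := fun ν => f' ν - α with hgdef
  have hgm : Measurable g := hf'meas.sub measurable_const
  have hgi : ∀ t : ℝ, IntegrableOn g (Ioc 0 t) := fun t =>
    (hfi t).sub (integrableOn_const measure_Ioc_lt_top.ne)
  -- pointwise identity between the statement's integral and the kernel integral
  have hSf' : ∀ lam : ℝ,
      (∫ ν in Ioc (0:ℝ) (Real.sqrt lam), f ν / Real.sqrt (lam - ν ^ 2)) =
      ∫ ν, Ker f' (lam, ν) := by
    intro lam
    rw [← integral_indicator measurableSet_Ioc]
    refine integral_congr_ae ?_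
    filter_upwards [hff'] with ν hν
    rw [ker_section f' lam ν]
    by_cases hm : ν ∈ Ioc (0:ℝ) (Real.sqrt lam) <;> simp [indicator_apply, hm, hν]
  have hpi : (0:ℝ) < Real.pi := Real.pi_pos
  -- Part 1 : local integrability
  have hloc : LocallyIntegrableOn
      (fun lam : ℝ =>
        Real.pi⁻¹ * ∫ ν in Ioc (0 : ℝ) (Real.sqrt lam), f ν / Real.sqrt (lam - ν ^ 2))
      (Ioi 0) := by
    intro x hx
    have hx0 : (0:ℝ) < x := hx
    refine ⟨Ioc 0 (x+1), ?_, ?_⟩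
    · exact mem_nhdsWithin_of_mem_nhds
        (mem_of_superset (Ioo_mem_nhds hx0 (lt_add_one x)) Ioo_subset_Ioc_self)
    · have hb : (0:ℝ) < x + 1 := by linarith
      have h1 := (ker_prod_integrable hf'meas hfi hb).integral_prod_left
      refine (h1.const_mul (Real.pi⁻¹)).congr ?_
      exact Eventually.of_forall fun lam =>
        (congrArg (fun t => Real.pi⁻¹ * t) (hSf' lam)).symm
  refine ⟨hloc, ?_⟩
  -- Part 2 : the main estimate
  have hineq : ∀ b : ℝ, 0 < b →
      (∫ lam in Ioc (0:ℝ) b,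
        |Real.pi⁻¹ * (∫ ν in Ioc (0 : ℝ) (Real.sqrt lam), f ν / Real.sqrt (lam - ν ^ 2))
          - α / 2|) ≤
      Real.pi⁻¹ * (2 * Real.sqrt b * ∫ ν in Ioc (0:ℝ) (Real.sqrt b), |g ν|) := by
    intro b hb
    have hker := ker_prod_integrable hgm hgi hb
    have hkerf := ker_prod_integrable hf'meas hfi hb
    have hae : ∀ᵐ lam ∂(volume.restrict (Ioc (0:ℝ) b)),
        |Real.pi⁻¹ * (∫ ν in Ioc (0 : ℝ) (Real.sqrt lam), f ν / Real.sqrt (lam - ν ^ 2))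
          - α / 2| ≤ Real.pi⁻¹ * ∫ ν, ‖Ker g (lam, ν)‖ := by
      filter_upwards [hkerf.prod_right_ae, ae_restrict_mem measurableSet_Ioc] with lam hint hlam
      have hlam0 : 0 < lam := hlam.1
      have hif' : IntegrableOn (fun ν => f' ν / Real.sqrt (lam - ν^2))
          (Ioc 0 (Real.sqrt lam)) := by
        exact (integrable_indicator_iff measurableSet_Ioc).mp
          (hint.congr (Eventually.of_forall fun ν => ker_section f' lam ν))
      have hiconst : IntegrableOn (fun ν => α / Real.sqrt (lam - ν^2))
          (Ioc 0 (Real.sqrt lam)) := by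
        have := (intInt_arc hlam0).1
        simpa [div_eq_mul_inv, IntegrableOn] using this.const_mul α
      have hig : IntegrableOn (fun ν => g ν / Real.sqrt (lam - ν^2))
          (Ioc 0 (Real.sqrt lam)) := by
        have h2 := hif'.sub hiconst
        refine h2.congr (Eventually.of_forall fun ν => ?_)
        simp [hgdef, sub_div]
      have hval : (∫ ν in Ioc (0:ℝ) (Real.sqrt lam), f ν / Real.sqrt (lam - ν ^ 2)) =
          (∫ ν in Ioc (0:ℝ) (Real.sqrt lam), g ν / Real.sqrt (lam - ν^2))
            + α * (Real.pi/2) := by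
        have h1 : (∫ ν in Ioc (0:ℝ) (Real.sqrt lam), f ν / Real.sqrt (lam - ν ^ 2)) =
            ∫ ν in Ioc (0:ℝ) (Real.sqrt lam), f' ν / Real.sqrt (lam - ν^2) :=
          integral_congr_ae ((hff'.restrict).mono fun ν hν => by simp only [hν])
        rw [h1]
        have h2 : ∀ ν : ℝ, f' ν / Real.sqrt (lam - ν^2) =
            g ν / Real.sqrt (lam - ν^2) + α / Real.sqrt (lam - ν^2) := by
          intro ν
          rw [hgdef]
          rw [← add_div, sub_add_cancel]
        simp_rw [h2]
        rw [integral_add hig hiconst]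
        congr 1
        have h3 : (∫ ν in Ioc (0:ℝ) (Real.sqrt lam), α / Real.sqrt (lam - ν^2)) =
            α * ∫ ν in Ioc (0:ℝ) (Real.sqrt lam), (Real.sqrt (lam - ν^2))⁻¹ := by
          simp_rw [div_eq_mul_inv]
          exact integral_const_mul α _
        rw [h3, integral_arc hlam0]
      rw [hval]
      have heq2 : Real.pi⁻¹ * ((∫ ν in Ioc (0:ℝ) (Real.sqrt lam),
          g ν / Real.sqrt (lam - ν^2)) + α * (Real.pi/2)) - α/2
          = Real.pi⁻¹ * ∫ ν in Ioc (0:ℝ) (Real.sqrt lam), g ν / Real.sqrt (lam - ν^2) := by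
        field_simp
        ring
      rw [heq2, abs_mul, abs_of_nonneg (inv_nonneg.mpr hpi.le)]
      refine mul_le_mul_of_nonneg_left ?_ (inv_nonneg.mpr hpi.le)
      have h4 : (∫ ν, ‖Ker g (lam, ν)‖) =
          ∫ ν in Ioc (0:ℝ) (Real.sqrt lam), ‖g ν / Real.sqrt (lam - ν^2)‖ := by
        rw [← integral_indicator measurableSet_Ioc]
        congr 1
        funext ν
        rw [ker_section g lam ν, norm_indicator_eq_indicator_norm]
      rw [h4, ← Real.norm_eq_abs]
      exact norm_integral_le_integral_norm _
    calc (∫ lam in Ioc (0:ℝ) b,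
          |Real.pi⁻¹ * (∫ ν in Ioc (0 : ℝ) (Real.sqrt lam), f ν / Real.sqrt (lam - ν ^ 2))
            - α / 2|)
        ≤ ∫ lam in Ioc (0:ℝ) b, Real.pi⁻¹ * ∫ ν, ‖Ker g (lam, ν)‖ :=
          integral_mono_of_nonneg (Eventually.of_forall fun lam => abs_nonneg _)
            (hker.integral_norm_prod_left.const_mul _) hae
      _ = Real.pi⁻¹ * ∫ lam in Ioc (0:ℝ) b, ∫ ν, ‖Ker g (lam, ν)‖ := integral_const_mul _ _
      _ ≤ Real.pi⁻¹ * (2 * Real.sqrt b * ∫ ν in Ioc (0:ℝ) (Real.sqrt b), |g ν|) :=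
          mul_le_mul_of_nonneg_left (ker_swap_bound hgm hgi hb) (inv_nonneg.mpr hpi.le)
  -- Part 3 : the limit
  have hsqrt_tendsto : Tendsto Real.sqrt (nhdsWithin 0 (Ioi 0)) (nhdsWithin 0 (Ioi 0)) := by
    refine tendsto_nhdsWithin_of_tendsto_nhds_of_eventually_within _ ?_ ?_
    · have h := Real.continuous_sqrt.tendsto 0
      rw [Real.sqrt_zero] at h
      exact h.mono_left nhdsWithin_le_nhds
    · filter_upwards [self_mem_nhdsWithin] with x hx
      exact Real.sqrt_pos.mpr hx
  have hcomp : Tendsto (fun h : ℝ => (2/Real.pi) *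
      ((1/Real.sqrt h) * ∫ y in Ioc (0:ℝ) (Real.sqrt h), |f y - α|))
      (nhdsWithin 0 (Ioi 0)) (nhds 0) := by
    have h := (hlp.comp hsqrt_tendsto).const_mul (2/Real.pi)
    simpa [Function.comp] using h
  refine squeeze_zero' ?_ ?_ hcomp
  · filter_upwards [self_mem_nhdsWithin] with h hh
    exact mul_nonneg (one_div_nonneg.mpr (le_of_lt hh))
      (integral_nonneg fun _ => abs_nonneg _)
  · filter_upwards [self_mem_nhdsWithin] with h hh
    have hh0 : (0:ℝ) < h := hh
    have key := hineq h hh0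
    have hgf : (∫ ν in Ioc (0:ℝ) (Real.sqrt h), |g ν|) =
        ∫ ν in Ioc (0:ℝ) (Real.sqrt h), |f ν - α| := by
      refine integral_congr_ae ((hff'.restrict).mono fun ν hν => ?_)
      simp [hgdef, hν]
    rw [hgf] at key
    have hstep : (1/h) * (∫ lam in Ioc (0:ℝ) h,
        |Real.pi⁻¹ * (∫ ν in Ioc (0 : ℝ) (Real.sqrt lam), f ν / Real.sqrt (lam - ν ^ 2))
          - α / 2|) ≤
        (1/h) * (Real.pi⁻¹ * (2 * Real.sqrt h *
          ∫ ν in Ioc (0:ℝ) (Real.sqrt h), |f ν - α|)) :=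
      mul_le_mul_of_nonneg_left key (one_div_nonneg.mpr hh0.le)
    refine hstep.trans (le_of_eq ?_)
    have hs0 : (0:ℝ) < Real.sqrt h := Real.sqrt_pos.mpr hh0
    have hss : Real.sqrt h * Real.sqrt h = h := Real.mul_self_sqrt hh0.le
    set I := ∫ ν in Ioc (0:ℝ) (Real.sqrt h), |f ν - α|
    set s := Real.sqrt h
    rw [← hss]
    field_simp
end

section
/- Let f ∈ L¹(ℝ; (1+ν²)^{−3/2} dν) and suppose 0 is a right Lebesgue point of f with value f_L(0₊) = α₊ and a left Lebesgue point of f with value f_L(0₋) = α₋. Then lim_{λ↓0} λ ∫_ℝ f(ν) (ν² + λ)^{−3/2} dν = α₊ + α₋. -/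
open MeasureTheory Filter Set Topology ENNReal

lemma cont_rpow {b : ℝ → ℝ} (hb : Continuous b) (hpos : ∀ x, 0 < b x) (p : ℝ) :
    Continuous fun x => b x ^ p :=
  continuous_iff_continuousAt.2 fun x =>
    (Real.continuousAt_rpow_const (b x) p (.inl (hpos x).ne')).comp hb.continuousAt

lemma integrable_w : Integrable (fun ν : ℝ => ((1:ℝ) + ν ^ 2) ^ (-((3:ℝ)/2))) := by
  have h : ∀ ν : ℝ, ‖((1:ℝ) + ν ^ 2) ^ (-((3:ℝ)/2))‖ ≤ (1 + ν ^ 2)⁻¹ := by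
    intro ν
    have h1 : (0:ℝ) < 1 + ν ^ 2 := by positivity
    rw [Real.norm_eq_abs, abs_of_nonneg (Real.rpow_nonneg h1.le _)]
    calc ((1:ℝ) + ν ^ 2) ^ (-((3:ℝ)/2)) ≤ (1 + ν ^ 2) ^ (-(1:ℝ)) :=
          Real.rpow_le_rpow_of_exponent_le (by nlinarith [sq_nonneg ν]) (by norm_num)
      _ = (1 + ν ^ 2)⁻¹ := by rw [Real.rpow_neg_one]
  exact integrable_inv_one_add_sq.mono'
    ((cont_rpow (by fun_prop) (fun ν => by positivity) _).aestronglyMeasurable) (ae_of_all _ h)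

lemma kernel_le (lam : ℝ) (hlam : 0 < lam) (ν : ℝ) :
    (ν ^ 2 + lam) ^ (-((3:ℝ)/2)) ≤ (min 1 lam) ^ (-((3:ℝ)/2)) * ((1:ℝ) + ν ^ 2) ^ (-((3:ℝ)/2)) := by
  have hm : 0 < min 1 lam := lt_min one_pos hlam
  have h1 : (0:ℝ) < 1 + ν ^ 2 := by positivity
  have key : min 1 lam * (1 + ν ^ 2) ≤ ν ^ 2 + lam := by
    rcases le_total (1:ℝ) lam with h | h
    · rw [min_eq_left h]; nlinarith
    · rw [min_eq_right h]; nlinarith [sq_nonneg ν]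
  calc (ν ^ 2 + lam) ^ (-((3:ℝ)/2)) ≤ (min 1 lam * (1 + ν ^ 2)) ^ (-((3:ℝ)/2)) :=
        Real.rpow_le_rpow_of_nonpos (by positivity) key (by norm_num)
    _ = (min 1 lam) ^ (-((3:ℝ)/2)) * ((1:ℝ) + ν ^ 2) ^ (-((3:ℝ)/2)) :=
        Real.mul_rpow hm.le h1.le

lemma integrable_kernel (lam : ℝ) (hlam : 0 < lam) :
    Integrable (fun ν : ℝ => (ν ^ 2 + lam) ^ (-((3:ℝ)/2))) := by
  apply (integrable_w.const_mul ((min 1 lam) ^ (-((3:ℝ)/2)))).mono'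
    ((cont_rpow (by fun_prop) (fun ν => by positivity) _).aestronglyMeasurable)
  refine ae_of_all _ fun ν => ?_
  rw [Real.norm_eq_abs, abs_of_nonneg (Real.rpow_nonneg (by positivity) _)]
  exact kernel_le lam hlam ν

lemma hasDeriv_G (lam : ℝ) (hlam : 0 < lam) (ν : ℝ) :
    HasDerivAt (fun x : ℝ => x * (x ^ 2 + lam) ^ (-((1:ℝ)/2)))
      (lam * (ν ^ 2 + lam) ^ (-((3:ℝ)/2))) ν := by
  have hpos : (0:ℝ) < ν ^ 2 + lam := by positivity
  have h1 : HasDerivAt (fun x : ℝ => x ^ 2 + lam) (2 * ν) ν := by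
    simpa using ((hasDerivAt_pow 2 ν).add_const lam)
  have h2 : HasDerivAt (fun x : ℝ => (x ^ 2 + lam) ^ (-((1:ℝ)/2)))
      ((2 * ν) * (-((1:ℝ)/2)) * (ν ^ 2 + lam) ^ (-((1:ℝ)/2) - 1)) ν :=
    h1.rpow_const (.inl hpos.ne')
  have h3 := (hasDerivAt_id ν).mul h2
  refine h3.congr_deriv ?_
  have e1 : (ν ^ 2 + lam) ^ (-((1:ℝ)/2)) = (ν ^ 2 + lam) * (ν ^ 2 + lam) ^ (-((3:ℝ)/2)) := by
    rw [← Real.rpow_one_add' hpos.le (by norm_num)]; norm_num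
  have e2 : (ν ^ 2 + lam) ^ (-((1:ℝ)/2) - 1) = (ν ^ 2 + lam) ^ (-((3:ℝ)/2)) := by
    norm_num
  rw [e2, id_eq, e1]; ring

lemma tendsto_G (lam : ℝ) (hlam : 0 < lam) :
    Tendsto (fun x : ℝ => x * (x ^ 2 + lam) ^ (-((1:ℝ)/2))) atTop (𝓝 1) := by
  have h0 : Tendsto (fun x : ℝ => x ^ 2 + lam) atTop atTop :=
    (tendsto_pow_atTop two_ne_zero).atTop_add tendsto_const_nhds
  have h1 : Tendsto (fun x : ℝ => x ^ 2 / (x ^ 2 + lam)) atTop (𝓝 1) := by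
    have := h0.inv_tendsto_atTop.const_mul lam
    have h2 : Tendsto (fun x : ℝ => 1 - lam * (x ^ 2 + lam)⁻¹) atTop (𝓝 (1 - lam * 0)) :=
      (tendsto_const_nhds.sub this)
    rw [mul_zero, sub_zero] at h2
    apply h2.congr'
    filter_upwards [eventually_gt_atTop 0] with x hx
    have hpos : (0:ℝ) < x ^ 2 + lam := by positivity
    field_simp; ring
  have hc : ContinuousAt (fun y : ℝ => y ^ ((1:ℝ)/2)) 1 :=
    Real.continuousAt_rpow_const 1 _ (.inl one_ne_zero)
  have h2 := (hc.tendsto.comp h1)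
  rw [Real.one_rpow] at h2
  apply h2.congr'
  filter_upwards [eventually_gt_atTop 0] with x hx
  have hpos : (0:ℝ) < x ^ 2 + lam := by positivity
  simp only [Function.comp_apply]
  have hA : (x ^ 2 : ℝ) ^ ((1:ℝ)/2) = x := by
    rw [← Real.rpow_natCast x 2, ← Real.rpow_mul hx.le]; norm_num
  rw [Real.div_rpow (by positivity) hpos.le, hA, Real.rpow_neg hpos.le, div_eq_mul_inv]

lemma kernel_mass (lam : ℝ) (hlam : 0 < lam) (a : ℝ) :
    ∫ ν in Ioi a, lam * (ν ^ 2 + lam) ^ (-((3:ℝ)/2)) =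
      1 - a * (a ^ 2 + lam) ^ (-((1:ℝ)/2)) := by
  have hint := integrable_kernel lam hlam
  exact integral_Ioi_of_hasDerivAt_of_tendsto'
    (fun x _ => hasDeriv_G lam hlam x) ((hint.const_mul lam).integrableOn)
    (tendsto_G lam hlam)


-- representation: ∫⁻ s in Ioi 0, (if s < t then c else 0) = c * ofReal t
lemma rep_lemma (c : ℝ≥0∞) (t : ℝ) :
    ∫⁻ s in Ioi (0:ℝ), (if s < t then c else 0) = c * ENNReal.ofReal t := by
  have : (fun s : ℝ => if s < t then c else 0) = (Iio t).indicator (fun _ => c) := by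
    funext s; simp [Set.indicator_apply]
  rw [this, lintegral_indicator measurableSet_Iio, setLIntegral_const,
    Measure.restrict_apply measurableSet_Iio]
  have : Iio t ∩ Ioi (0:ℝ) = Ioo 0 t := by ext x; simp [and_comm]
  rw [this, Real.volume_Ioo, sub_zero]

lemma swap_lemma {K : ℝ → ℝ} (hK : Continuous K) (hKnn : ∀ ν, 0 ≤ K ν) (δ : ℝ)
    (c : ℝ → ℝ≥0∞) (hc : Measurable c) (hc' : ∀ ν, c ν ≠ ∞) :
    ∫⁻ ν in Ioc (0:ℝ) δ, c ν * ENNReal.ofReal (K ν) =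
      ∫⁻ s in Ioi (0:ℝ), ∫⁻ ν in Ioc (0:ℝ) δ, (if s < K ν then c ν else 0) := by
  have hmeas : AEMeasurable (Function.uncurry fun (ν s : ℝ) => if s < K ν then c ν else 0)
      ((volume.restrict (Ioc (0:ℝ) δ)).prod (volume.restrict (Ioi (0:ℝ)))) := by
    apply Measurable.aemeasurable
    have hset : MeasurableSet {p : ℝ × ℝ | p.2 < K p.1} :=
      measurableSet_lt measurable_snd (hK.measurable.comp measurable_fst)
    have : (Function.uncurry fun (ν s : ℝ) => if s < K ν then c ν else 0) =
        fun p : ℝ × ℝ => Set.indicator {p : ℝ × ℝ | p.2 < K p.1} (fun p => c p.1) p := by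
      funext p; simp [Function.uncurry, Set.indicator_apply]
    rw [this]
    exact (hc.comp measurable_fst).indicator hset
  calc ∫⁻ ν in Ioc (0:ℝ) δ, c ν * ENNReal.ofReal (K ν)
      = ∫⁻ ν in Ioc (0:ℝ) δ, ∫⁻ s in Ioi (0:ℝ), (if s < K ν then c ν else 0) := by
        apply lintegral_congr fun ν => ?_
        rw [rep_lemma]
    _ = ∫⁻ s in Ioi (0:ℝ), ∫⁻ ν in Ioc (0:ℝ) δ, (if s < K ν then c ν else 0) :=
        lintegral_lintegral_swap hmeas

lemma rearrange (g K : ℝ → ℝ) (δ ε : ℝ) (hδ : 0 < δ) (hε : 0 ≤ ε)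
    (hgm : Measurable g) (hg : IntegrableOn g (Ioc 0 δ))
    (hK : Continuous K) (hKnn : ∀ ν, 0 ≤ K ν)
    (hKmono : ∀ x ∈ Ioc (0:ℝ) δ, ∀ y ∈ Ioc (0:ℝ) δ, x ≤ y → K y ≤ K x)
    (havg : ∀ c ∈ Ioc (0:ℝ) δ, (∫ ν in Ioc (0:ℝ) c, |g ν|) ≤ ε * c) :
    ∫ ν in Ioc (0:ℝ) δ, |g ν| * K ν ≤ ε * ∫ ν in Ioc (0:ℝ) δ, K ν := by
  set G : ℝ → ℝ≥0∞ := fun ν => ENNReal.ofReal |g ν| with hG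
  have hKi : IntegrableOn K (Ioc 0 δ) := hK.integrableOn_Ioc
  -- the lintegral inequality
  have key : ∫⁻ ν in Ioc (0:ℝ) δ, G ν * ENNReal.ofReal (K ν) ≤
      ∫⁻ ν in Ioc (0:ℝ) δ, (ENNReal.ofReal ε) * ENNReal.ofReal (K ν) := by
    rw [swap_lemma hK hKnn δ G (hgm.abs.ennreal_ofReal) (fun ν => ENNReal.ofReal_ne_top),
      swap_lemma hK hKnn δ (fun _ => ENNReal.ofReal ε) measurable_const
        (fun ν => ENNReal.ofReal_ne_top)]
    apply lintegral_mono_ae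
    rw [ae_restrict_iff' measurableSet_Ioi]
    refine ae_of_all _ fun s hs => ?_
    -- inner inequality for fixed s > 0
    set A : Set ℝ := Ioc 0 δ ∩ {ν | s < K ν} with hA
    have hAmeas : MeasurableSet {ν : ℝ | s < K ν} :=
      measurableSet_lt measurable_const hK.measurable
    have lhs_eq : ∫⁻ ν in Ioc (0:ℝ) δ, (if s < K ν then G ν else 0) = ∫⁻ ν in A, G ν := by
      have : (fun ν => if s < K ν then G ν else 0) = {ν | s < K ν}.indicator G := by
        funext ν; simp [Set.indicator_apply]
      rw [this, lintegral_indicator hAmeas, Measure.restrict_restrict hAmeas]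
      rw [hA, Set.inter_comm]
    have rhs_eq : ∫⁻ ν in Ioc (0:ℝ) δ, (if s < K ν then ENNReal.ofReal ε else 0) =
        ENNReal.ofReal ε * volume A := by
      have : (fun ν => if s < K ν then ENNReal.ofReal ε else 0) =
          {ν | s < K ν}.indicator (fun _ => ENNReal.ofReal ε) := by
        funext ν; simp [Set.indicator_apply]
      rw [this, lintegral_indicator hAmeas, Measure.restrict_restrict hAmeas,
        setLIntegral_const]
      congr 1
      rw [hA, Set.inter_comm]
    rw [lhs_eq, rhs_eq]
    rcases Set.eq_empty_or_nonempty A with hemp | hne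
    · rw [hemp]; simp
    -- A nonempty
    have hbdd : BddAbove A := BddAbove.mono (Set.inter_subset_left) (bddAbove_Ioc)
    set c := sSup A with hc
    have hcmem : ∀ x ∈ A, x ≤ c := fun x hx => le_csSup hbdd hx
    obtain ⟨x₀, hx₀⟩ := hne
    have hc_pos : 0 < c := lt_of_lt_of_le hx₀.1.1 (hcmem x₀ hx₀)
    have hc_le : c ≤ δ := csSup_le ⟨x₀, hx₀⟩ fun x hx => hx.1.2
    have hsub1 : A ⊆ Ioc 0 c := fun x hx => ⟨hx.1.1, hcmem x hx⟩
    have hsub2 : Ioo 0 c ⊆ A := by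
      intro x hx
      obtain ⟨ν, hν, hxν⟩ := exists_lt_of_lt_csSup ⟨x₀, hx₀⟩ hx.2
      have hxIoc : x ∈ Ioc (0:ℝ) δ := ⟨hx.1, le_trans hxν.le hν.1.2⟩
      exact ⟨hxIoc, lt_of_lt_of_le hν.2 (hKmono x hxIoc ν hν.1 hxν.le)⟩
    have hvolA : volume A = ENNReal.ofReal c := by
      apply le_antisymm
      · calc volume A ≤ volume (Ioc 0 c) := measure_mono hsub1
          _ = ENNReal.ofReal c := by rw [Real.volume_Ioc, sub_zero]
      · calc ENNReal.ofReal c = volume (Ioo 0 c) := by rw [Real.volume_Ioo, sub_zero]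
          _ ≤ volume A := measure_mono hsub2
    calc ∫⁻ ν in A, G ν ≤ ∫⁻ ν in Ioc 0 c, G ν := lintegral_mono_set hsub1
      _ = ENNReal.ofReal (∫ ν in Ioc (0:ℝ) c, |g ν|) := by
          rw [ofReal_integral_eq_lintegral_ofReal
            ((hg.mono_set (Ioc_subset_Ioc le_rfl hc_le)).abs)
            (ae_of_all _ fun ν => abs_nonneg _)]
      _ ≤ ENNReal.ofReal (ε * c) := ENNReal.ofReal_le_ofReal (havg c ⟨hc_pos, hc_le⟩)
      _ = ENNReal.ofReal ε * volume A := by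
          rw [hvolA, ENNReal.ofReal_mul hε]
  -- convert back to real integrals
  have h1 : ∫ ν in Ioc (0:ℝ) δ, |g ν| * K ν =
      (∫⁻ ν in Ioc (0:ℝ) δ, G ν * ENNReal.ofReal (K ν)).toReal := by
    rw [integral_eq_lintegral_of_nonneg_ae (ae_of_all _ fun ν => mul_nonneg (abs_nonneg _) (hKnn ν))
      ((hgm.abs.mul hK.measurable).aestronglyMeasurable)]
    congr 1
    apply lintegral_congr fun ν => ?_
    rw [ENNReal.ofReal_mul (abs_nonneg _)]
  have h2 : ∫⁻ ν in Ioc (0:ℝ) δ, (ENNReal.ofReal ε) * ENNReal.ofReal (K ν) =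
      ENNReal.ofReal (ε * ∫ ν in Ioc (0:ℝ) δ, K ν) := by
    rw [lintegral_const_mul' _ _ ENNReal.ofReal_ne_top,
      ← ofReal_integral_eq_lintegral_ofReal hKi (ae_of_all _ hKnn),
      ← ENNReal.ofReal_mul hε]
  rw [h1]
  calc (∫⁻ ν in Ioc (0:ℝ) δ, G ν * ENNReal.ofReal (K ν)).toReal ≤
      (∫⁻ ν in Ioc (0:ℝ) δ, (ENNReal.ofReal ε) * ENNReal.ofReal (K ν)).toReal := by
        apply ENNReal.toReal_mono _ key
        rw [h2]; exact ENNReal.ofReal_ne_top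
    _ = ε * ∫ ν in Ioc (0:ℝ) δ, K ν := by
        rw [h2, ENNReal.toReal_ofReal]
        have : 0 ≤ ∫ ν in Ioc (0:ℝ) δ, K ν := integral_nonneg fun ν => hKnn ν
        exact mul_nonneg hε this


lemma integrable_fK (f : ℝ → ℝ) (hmeas : Measurable f)
    (hfw : Integrable (fun ν : ℝ => f ν * ((1:ℝ) + ν ^ 2) ^ (-((3:ℝ)/2))))
    (lam : ℝ) (hlam : 0 < lam) :
    Integrable (fun ν : ℝ => f ν * (ν ^ 2 + lam) ^ (-((3:ℝ)/2))) := by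
  have hwpos : ∀ ν : ℝ, (0:ℝ) < ((1:ℝ) + ν ^ 2) ^ (-((3:ℝ)/2)) :=
    fun ν => Real.rpow_pos_of_pos (by positivity) _
  apply ((hfw.abs.const_mul ((min 1 lam) ^ (-((3:ℝ)/2)))).mono'
    ((hmeas.mul (cont_rpow (by fun_prop) (fun ν : ℝ => by positivity)
      (-((3:ℝ)/2))).measurable).aestronglyMeasurable))
  refine ae_of_all _ fun ν => ?_
  rw [Real.norm_eq_abs, Pi.mul_apply, abs_mul, abs_of_nonneg (Real.rpow_nonneg (by positivity) _)]
  calc |f ν| * (ν ^ 2 + lam) ^ (-((3:ℝ)/2))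
      ≤ |f ν| * ((min 1 lam) ^ (-((3:ℝ)/2)) * ((1:ℝ) + ν ^ 2) ^ (-((3:ℝ)/2))) :=
        mul_le_mul_of_nonneg_left (kernel_le lam hlam ν) (abs_nonneg _)
    _ = (min 1 lam) ^ (-((3:ℝ)/2)) * (|f ν| * ((1:ℝ) + ν ^ 2) ^ (-((3:ℝ)/2))) := by ring
    _ = (min 1 lam) ^ (-((3:ℝ)/2)) * |f ν * ((1:ℝ) + ν ^ 2) ^ (-((3:ℝ)/2))| := by
        rw [abs_mul, abs_of_nonneg (hwpos ν).le]

lemma half (f : ℝ → ℝ) (α : ℝ) (hmeas : Measurable f)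
    (hfw : Integrable (fun ν : ℝ => f ν * ((1:ℝ) + ν ^ 2) ^ (-((3:ℝ)/2))))
    (hlp : Tendsto (fun h : ℝ => (1 / h) * ∫ y in Ioc (0 : ℝ) h, |f y - α|)
      (𝓝[>] (0:ℝ)) (𝓝 0)) :
    Tendsto (fun lam : ℝ => lam * ∫ ν in Ioi (0:ℝ), f ν * (ν ^ 2 + lam) ^ (-((3:ℝ)/2)))
      (𝓝[>] (0:ℝ)) (𝓝 α) := by
  have hwpos : ∀ ν : ℝ, (0:ℝ) < ((1:ℝ) + ν ^ 2) ^ (-((3:ℝ)/2)) :=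
    fun ν => Real.rpow_pos_of_pos (by positivity) _
  -- integrability of f * K_lam
  have hfK : ∀ lam : ℝ, 0 < lam →
      Integrable (fun ν : ℝ => f ν * (ν ^ 2 + lam) ^ (-((3:ℝ)/2))) := by
    intro lam hlam
    apply ((hfw.abs.const_mul ((min 1 lam) ^ (-((3:ℝ)/2)))).mono'
      ((hmeas.mul (cont_rpow (by fun_prop) (fun ν : ℝ => by positivity)
        (-((3:ℝ)/2))).measurable).aestronglyMeasurable))
    refine ae_of_all _ fun ν => ?_
    rw [Real.norm_eq_abs, Pi.mul_apply, abs_mul, abs_of_nonneg (Real.rpow_nonneg (by positivity) _)]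
    calc |f ν| * (ν ^ 2 + lam) ^ (-((3:ℝ)/2))
        ≤ |f ν| * ((min 1 lam) ^ (-((3:ℝ)/2)) * ((1:ℝ) + ν ^ 2) ^ (-((3:ℝ)/2))) :=
          mul_le_mul_of_nonneg_left (kernel_le lam hlam ν) (abs_nonneg _)
      _ = (min 1 lam) ^ (-((3:ℝ)/2)) * (|f ν| * ((1:ℝ) + ν ^ 2) ^ (-((3:ℝ)/2))) := by ring
      _ = (min 1 lam) ^ (-((3:ℝ)/2)) * |f ν * ((1:ℝ) + ν ^ 2) ^ (-((3:ℝ)/2))| := by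
          rw [abs_mul, abs_of_nonneg (hwpos ν).le]
  set M : ℝ := ∫ ν : ℝ, |f ν * ((1:ℝ) + ν ^ 2) ^ (-((3:ℝ)/2))| with hM
  have hM0 : 0 ≤ M := integral_nonneg fun ν => abs_nonneg _
  rw [Metric.tendsto_nhds]
  intro ε hε
  set ε' : ℝ := ε / 2 with hε'
  have hε'pos : 0 < ε' := by positivity
  -- choose δ from the Lebesgue point hypothesis
  have h1 : ∀ᶠ h in 𝓝[>] (0:ℝ), (1 / h) * ∫ y in Ioc (0 : ℝ) h, |f y - α| < ε' :=
    hlp.eventually_lt_const hε'pos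
  obtain ⟨t, ht, hsub⟩ := mem_nhdsGT_iff_exists_Ioo_subset.1 h1
  set δ : ℝ := min (t / 2) 1 with hδdef
  have hδpos : 0 < δ := lt_min (by simpa using half_pos ht.out) one_pos
  have hδltt : δ < t := lt_of_le_of_lt (min_le_left _ _) (by linarith [ht.out])
  have havg : ∀ c ∈ Ioc (0:ℝ) δ, (∫ ν in Ioc (0:ℝ) c, |f ν - α|) ≤ ε' * c := by
    intro c hc
    have hct : c ∈ Ioo (0:ℝ) t := ⟨hc.1, lt_of_le_of_lt hc.2 hδltt⟩
    have h2 := hsub hct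
    have h0 : (0:ℝ) < c := hc.1
    have h3 : (∫ ν in Ioc (0:ℝ) c, |f ν - α|) = c * ((1 / c) * ∫ ν in Ioc (0:ℝ) c, |f ν - α|) := by
      field_simp
    rw [h3]
    calc c * ((1 / c) * ∫ ν in Ioc (0:ℝ) c, |f ν - α|) ≤ c * ε' :=
          mul_le_mul_of_nonneg_left h2.le h0.le
      _ = ε' * c := by ring
  -- constant for the far region
  set B : ℝ := (1 + δ ^ 2) / δ ^ 2 with hB
  have hBpos : 0 < B := by positivity
  set Cδ : ℝ := B ^ ((3:ℝ)/2) with hCδ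
  have hCδpos : 0 < Cδ := Real.rpow_pos_of_pos hBpos _
  -- far kernel bound
  have hfar : ∀ lam : ℝ, 0 < lam → ∀ ν : ℝ, δ ≤ ν →
      (ν ^ 2 + lam) ^ (-((3:ℝ)/2)) ≤ Cδ * ((1:ℝ) + ν ^ 2) ^ (-((3:ℝ)/2)) := by
    intro lam hlam ν hν
    have hν0 : 0 < ν := lt_of_lt_of_le hδpos hν
    have h1' : (1 + ν ^ 2) / B ≤ ν ^ 2 + lam := by
      rw [div_le_iff₀ hBpos]
      have hδν : δ ^ 2 ≤ ν ^ 2 := by nlinarith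
      rw [hB, ← mul_div_assoc, le_div_iff₀ (by positivity : (0:ℝ) < δ ^ 2)]
      nlinarith
    calc (ν ^ 2 + lam) ^ (-((3:ℝ)/2)) ≤ ((1 + ν ^ 2) / B) ^ (-((3:ℝ)/2)) :=
          Real.rpow_le_rpow_of_nonpos (by positivity) h1' (by norm_num)
      _ = Cδ * ((1:ℝ) + ν ^ 2) ^ (-((3:ℝ)/2)) := by
          rw [Real.div_rpow (by positivity) hBpos.le, hCδ, Real.rpow_neg hBpos.le, div_eq_mul_inv, inv_inv, mul_comm]
  -- local integrability of f near 0
  have hfloc : IntegrableOn f (Ioc (0:ℝ) δ) := by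
    set C2 : ℝ := (1 + δ ^ 2) ^ ((3:ℝ)/2) with hC2
    apply Integrable.mono' ((hfw.abs.const_mul C2).restrict (s := Ioc (0:ℝ) δ))
      hmeas.aestronglyMeasurable.restrict
    rw [ae_restrict_iff' measurableSet_Ioc]
    refine ae_of_all _ fun ν hν => ?_
    have h1p : (0:ℝ) < 1 + ν ^ 2 := by positivity
    have hw1 : ((1:ℝ) + ν ^ 2) ^ (-((3:ℝ)/2)) * ((1:ℝ) + ν ^ 2) ^ ((3:ℝ)/2) = 1 := by
      rw [← Real.rpow_add h1p]; norm_num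
    have hident : |f ν| = |f ν * ((1:ℝ) + ν ^ 2) ^ (-((3:ℝ)/2))| * ((1:ℝ) + ν ^ 2) ^ ((3:ℝ)/2) := by
      rw [abs_mul, abs_of_nonneg (hwpos ν).le, mul_assoc, hw1, mul_one]
    rw [Real.norm_eq_abs, hident]
    have hle : ((1:ℝ) + ν ^ 2) ^ ((3:ℝ)/2) ≤ C2 := by
      apply Real.rpow_le_rpow (by positivity) ?_ (by norm_num)
      nlinarith [hν.1, hν.2]
    calc |f ν * ((1:ℝ) + ν ^ 2) ^ (-((3:ℝ)/2))| * ((1:ℝ) + ν ^ 2) ^ ((3:ℝ)/2)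
        ≤ |f ν * ((1:ℝ) + ν ^ 2) ^ (-((3:ℝ)/2))| * C2 :=
          mul_le_mul_of_nonneg_left hle (abs_nonneg _)
      _ = C2 * |f ν * ((1:ℝ) + ν ^ 2) ^ (-((3:ℝ)/2))| := by ring
  have hgloc : IntegrableOn (fun ν => f ν - α) (Ioc (0:ℝ) δ) :=
    hfloc.sub (integrableOn_const measure_Ioc_lt_top.ne)
  -- the main eventual estimate
  have hev : ∀ᶠ lam in 𝓝[>] (0:ℝ),
      |lam * (∫ ν in Ioi (0:ℝ), f ν * (ν ^ 2 + lam) ^ (-((3:ℝ)/2))) - α| ≤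
        ε' + (lam * (Cδ * M) + |α| * (1 - δ * (δ ^ 2 + lam) ^ (-((1:ℝ)/2)))) := by
    filter_upwards [self_mem_nhdsWithin] with lam hlam'
    have hlam : 0 < lam := hlam'
    set K : ℝ → ℝ := fun ν => (ν ^ 2 + lam) ^ (-((3:ℝ)/2)) with hKdef
    have hKc : Continuous K := cont_rpow (by fun_prop) (fun ν => by positivity) _
    have hKnn : ∀ ν, 0 ≤ K ν := fun ν => Real.rpow_nonneg (by positivity) _
    have hKint : Integrable K := integrable_kernel lam hlam
    have hfKi : Integrable (fun ν => f ν * K ν) := hfK lam hlam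
    have hmass : lam * ∫ ν in Ioi (0:ℝ), K ν = 1 := by
      have h := kernel_mass lam hlam 0
      rw [integral_const_mul] at h
      simpa using h
    have hsub2 : lam * (∫ ν in Ioi (0:ℝ), f ν * K ν) - α =
        lam * ∫ ν in Ioi (0:ℝ), (f ν - α) * K ν := by
      have e1 : ∫ ν in Ioi (0:ℝ), (f ν - α) * K ν =
          (∫ ν in Ioi (0:ℝ), f ν * K ν) - α * ∫ ν in Ioi (0:ℝ), K ν := by
        rw [← integral_const_mul α (fun ν => K ν),
          ← integral_sub hfKi.integrableOn ((hKint.const_mul α).integrableOn)]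
        exact integral_congr_ae (ae_of_all _ fun ν => by ring)
      rw [e1, mul_sub, ← mul_assoc, mul_comm lam α, mul_assoc, hmass, mul_one]
    have habsi : Integrable (fun ν => |f ν - α| * K ν) := by
      have h' : Integrable (fun ν => f ν * K ν - α * K ν) := hfKi.sub (hKint.const_mul α)
      exact h'.abs.congr (ae_of_all _ fun ν => by
        show |f ν * K ν - α * K ν| = |f ν - α| * K ν
        rw [← sub_mul, abs_mul, abs_of_nonneg (hKnn ν)])
    have habs : |lam * ∫ ν in Ioi (0:ℝ), (f ν - α) * K ν| ≤
        lam * ∫ ν in Ioi (0:ℝ), |f ν - α| * K ν := by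
      rw [abs_mul, abs_of_nonneg hlam.le]
      apply mul_le_mul_of_nonneg_left ?_ hlam.le
      calc |∫ ν in Ioi (0:ℝ), (f ν - α) * K ν| ≤ ∫ ν in Ioi (0:ℝ), |(f ν - α) * K ν| := by
            simpa only [Real.norm_eq_abs] using
              norm_integral_le_integral_norm (μ := volume.restrict (Ioi (0:ℝ)))
                (fun ν => (f ν - α) * K ν)
        _ = ∫ ν in Ioi (0:ℝ), |f ν - α| * K ν :=
            integral_congr_ae (ae_of_all _ fun ν => by
              show |(f ν - α) * K ν| = |f ν - α| * K ν
              rw [abs_mul, abs_of_nonneg (hKnn ν)])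
    have hsplitset : ∫ ν in Ioi (0:ℝ), |f ν - α| * K ν =
        (∫ ν in Ioc (0:ℝ) δ, |f ν - α| * K ν) + ∫ ν in Ioi δ, |f ν - α| * K ν := by
      rw [← Ioc_union_Ioi_eq_Ioi hδpos.le,
        setIntegral_union (Ioc_disjoint_Ioi le_rfl) measurableSet_Ioi
          habsi.integrableOn habsi.integrableOn]
    have hterm1 : lam * ∫ ν in Ioc (0:ℝ) δ, |f ν - α| * K ν ≤ ε' := by
      have hmono : ∀ x ∈ Ioc (0:ℝ) δ, ∀ y ∈ Ioc (0:ℝ) δ, x ≤ y → K y ≤ K x := by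
        intro x hx y hy hxy
        exact Real.rpow_le_rpow_of_nonpos (by positivity)
          (by nlinarith [hx.1]) (by norm_num)
      have h1 := rearrange (fun ν => f ν - α) K δ ε' hδpos hε'pos.le
        (hmeas.sub measurable_const) hgloc hKc hKnn hmono havg
      have h2 : ∫ ν in Ioc (0:ℝ) δ, K ν ≤ ∫ ν in Ioi (0:ℝ), K ν :=
        setIntegral_mono_set hKint.integrableOn (ae_of_all _ hKnn)
          (HasSubset.Subset.eventuallyLE Ioc_subset_Ioi_self)
      calc lam * ∫ ν in Ioc (0:ℝ) δ, |f ν - α| * K ν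
          ≤ lam * (ε' * ∫ ν in Ioc (0:ℝ) δ, K ν) := mul_le_mul_of_nonneg_left h1 hlam.le
        _ ≤ lam * (ε' * ∫ ν in Ioi (0:ℝ), K ν) :=
            mul_le_mul_of_nonneg_left (mul_le_mul_of_nonneg_left h2 hε'pos.le) hlam.le
        _ = ε' * (lam * ∫ ν in Ioi (0:ℝ), K ν) := by ring
        _ = ε' := by rw [hmass, mul_one]
    have hterm2 : lam * ∫ ν in Ioi δ, |f ν - α| * K ν ≤
        lam * (Cδ * M) + |α| * (1 - δ * (δ ^ 2 + lam) ^ (-((1:ℝ)/2))) := by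
      have hptw : ∀ ν ∈ Ioi δ, |f ν - α| * K ν ≤
          Cδ * |f ν * ((1:ℝ) + ν ^ 2) ^ (-((3:ℝ)/2))| + |α| * K ν := by
        intro ν hν
        have hKb := hfar lam hlam ν (le_of_lt hν)
        have e : |f ν| * K ν ≤ Cδ * |f ν * ((1:ℝ) + ν ^ 2) ^ (-((3:ℝ)/2))| := by
          calc |f ν| * K ν ≤ |f ν| * (Cδ * ((1:ℝ) + ν ^ 2) ^ (-((3:ℝ)/2))) :=
                mul_le_mul_of_nonneg_left hKb (abs_nonneg _)
            _ = Cδ * (|f ν| * ((1:ℝ) + ν ^ 2) ^ (-((3:ℝ)/2))) := by ring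
            _ = Cδ * |f ν * ((1:ℝ) + ν ^ 2) ^ (-((3:ℝ)/2))| := by
                rw [abs_mul, abs_of_nonneg (hwpos ν).le]
        calc |f ν - α| * K ν ≤ (|f ν| + |α|) * K ν :=
              mul_le_mul_of_nonneg_right (abs_sub _ _) (hKnn ν)
          _ = |f ν| * K ν + |α| * K ν := by ring
          _ ≤ Cδ * |f ν * ((1:ℝ) + ν ^ 2) ^ (-((3:ℝ)/2))| + |α| * K ν :=
              add_le_add_left e _
      have hint1 : IntegrableOn
          (fun ν => Cδ * |f ν * ((1:ℝ) + ν ^ 2) ^ (-((3:ℝ)/2))| + |α| * K ν) (Ioi δ) :=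
        ((hfw.abs.const_mul Cδ).add (hKint.const_mul |α|)).integrableOn
      have hI : ∫ ν in Ioi δ, |f ν - α| * K ν ≤
          ∫ ν in Ioi δ, (Cδ * |f ν * ((1:ℝ) + ν ^ 2) ^ (-((3:ℝ)/2))| + |α| * K ν) :=
        setIntegral_mono_on habsi.integrableOn hint1 measurableSet_Ioi hptw
      have hsplit2 : ∫ ν in Ioi δ, (Cδ * |f ν * ((1:ℝ) + ν ^ 2) ^ (-((3:ℝ)/2))| + |α| * K ν) =
          Cδ * (∫ ν in Ioi δ, |f ν * ((1:ℝ) + ν ^ 2) ^ (-((3:ℝ)/2))|) +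
            |α| * ∫ ν in Ioi δ, K ν := by
        rw [integral_add ((hfw.abs.const_mul Cδ).integrableOn)
          ((hKint.const_mul |α|).integrableOn), integral_const_mul, integral_const_mul]
      have h3 : ∫ ν in Ioi δ, |f ν * ((1:ℝ) + ν ^ 2) ^ (-((3:ℝ)/2))| ≤ M :=
        setIntegral_le_integral hfw.abs (ae_of_all _ fun ν => abs_nonneg _)
      have h4 : lam * ∫ ν in Ioi δ, K ν = 1 - δ * (δ ^ 2 + lam) ^ (-((1:ℝ)/2)) := by
        have h := kernel_mass lam hlam δ
        rwa [integral_const_mul] at h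
      have h5 : 0 ≤ ∫ ν in Ioi δ, |f ν * ((1:ℝ) + ν ^ 2) ^ (-((3:ℝ)/2))| :=
        integral_nonneg fun ν => abs_nonneg _
      calc lam * ∫ ν in Ioi δ, |f ν - α| * K ν
          ≤ lam * (Cδ * (∫ ν in Ioi δ, |f ν * ((1:ℝ) + ν ^ 2) ^ (-((3:ℝ)/2))|) +
              |α| * ∫ ν in Ioi δ, K ν) := by
            rw [← hsplit2]; exact mul_le_mul_of_nonneg_left hI hlam.le
        _ = lam * Cδ * (∫ ν in Ioi δ, |f ν * ((1:ℝ) + ν ^ 2) ^ (-((3:ℝ)/2))|) +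
              |α| * (lam * ∫ ν in Ioi δ, K ν) := by ring
        _ ≤ lam * Cδ * M + |α| * (lam * ∫ ν in Ioi δ, K ν) := by
            have := mul_le_mul_of_nonneg_left h3 (by positivity : (0:ℝ) ≤ lam * Cδ)
            linarith
        _ = lam * (Cδ * M) + |α| * (1 - δ * (δ ^ 2 + lam) ^ (-((1:ℝ)/2))) := by
            rw [h4]; ring
    calc |lam * (∫ ν in Ioi (0:ℝ), f ν * (ν ^ 2 + lam) ^ (-((3:ℝ)/2))) - α|
        = |lam * ∫ ν in Ioi (0:ℝ), (f ν - α) * K ν| := by rw [hsub2]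
      _ ≤ lam * ∫ ν in Ioi (0:ℝ), |f ν - α| * K ν := habs
      _ = (lam * ∫ ν in Ioc (0:ℝ) δ, |f ν - α| * K ν) +
            lam * ∫ ν in Ioi δ, |f ν - α| * K ν := by rw [hsplitset, mul_add]
      _ ≤ ε' + (lam * (Cδ * M) + |α| * (1 - δ * (δ ^ 2 + lam) ^ (-((1:ℝ)/2)))) :=
          add_le_add hterm1 hterm2
  -- tail vanishes
  have hphi : Tendsto
      (fun lam : ℝ => lam * (Cδ * M) + |α| * (1 - δ * (δ ^ 2 + lam) ^ (-((1:ℝ)/2))))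
      (𝓝[>] (0:ℝ)) (𝓝 0) := by
    have h1' : Tendsto (fun lam : ℝ => lam * (Cδ * M)) (𝓝 (0:ℝ)) (𝓝 (0 * (Cδ * M))) :=
      (continuous_id.mul continuous_const).tendsto 0
    have hc : ContinuousAt (fun y : ℝ => y ^ (-((1:ℝ)/2))) (δ ^ 2 + 0) :=
      Real.continuousAt_rpow_const _ _ (.inl (by positivity : (0:ℝ) < δ ^ 2 + 0).ne')
    have h2' : Tendsto (fun lam : ℝ => (δ ^ 2 + lam) ^ (-((1:ℝ)/2))) (𝓝 (0:ℝ))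
        (𝓝 ((δ ^ 2 + 0) ^ (-((1:ℝ)/2)))) :=
      hc.comp ((continuous_const.add continuous_id).continuousAt (x := (0:ℝ)))
    have hval : ((δ:ℝ) ^ 2 + 0) ^ (-((1:ℝ)/2)) = δ⁻¹ := by
      rw [add_zero, ← Real.rpow_natCast δ 2, ← Real.rpow_mul hδpos.le]
      norm_num
      exact Real.rpow_neg_one δ
    have h3' : Tendsto
        (fun lam : ℝ => |α| * (1 - δ * (δ ^ 2 + lam) ^ (-((1:ℝ)/2)))) (𝓝 (0:ℝ))
        (𝓝 (|α| * (1 - δ * δ⁻¹))) :=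
      tendsto_const_nhds.mul (tendsto_const_nhds.sub (tendsto_const_nhds.mul (hval ▸ h2')))
    have hz : |α| * (1 - δ * δ⁻¹) = 0 := by
      rw [mul_inv_cancel₀ hδpos.ne']; simp
    have hsum := h1'.add h3'
    rw [hz, zero_mul, add_zero] at hsum
    exact hsum.mono_left nhdsWithin_le_nhds
  have hsmall : ∀ᶠ lam in 𝓝[>] (0:ℝ),
      lam * (Cδ * M) + |α| * (1 - δ * (δ ^ 2 + lam) ^ (-((1:ℝ)/2))) < ε' :=
    hphi.eventually_lt_const hε'pos
  filter_upwards [hev, hsmall] with lam h1 h2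
  rw [Real.dist_eq]
  calc |lam * (∫ ν in Ioi (0:ℝ), f ν * (ν ^ 2 + lam) ^ (-((3:ℝ)/2))) - α|
      ≤ ε' + (lam * (Cδ * M) + |α| * (1 - δ * (δ ^ 2 + lam) ^ (-((1:ℝ)/2)))) := h1
    _ < ε' + ε' := by linarith
    _ = ε := by rw [hε']; ring


/-- If `f ∈ L¹(ℝ; (1+ν²)^{-3/2} dν)` and `0` is a right Lebesgue point of `f`
with value `αp` and a left Lebesgue point with value `αm`, then
`λ ∫_ℝ f(ν) (ν² + λ)^{-3/2} dν → αp + αm` as `λ ↓ 0`. -/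
theorem stmt_1 (f : ℝ → ℝ) (αp αm : ℝ)
    (hf : Integrable (fun ν : ℝ => f ν / (1 + ν ^ 2) ^ ((3 : ℝ) / 2)))
    (hrlp : Tendsto (fun h : ℝ => (1 / h) * ∫ y in Ioc (0 : ℝ) h, |f y - αp|)
      (nhdsWithin 0 (Ioi 0)) (nhds 0))
    (hllp : Tendsto (fun h : ℝ => (1 / h) * ∫ y in Ico (-h) (0 : ℝ), |f y - αm|)
      (nhdsWithin 0 (Ioi 0)) (nhds 0)) :
    Tendsto (fun lam : ℝ => lam * ∫ ν : ℝ, f ν / (ν ^ 2 + lam) ^ ((3 : ℝ) / 2))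
      (nhdsWithin 0 (Ioi 0)) (nhds (αp + αm)) := by
  have hWc : Continuous (fun ν : ℝ => ((1:ℝ) + ν ^ 2) ^ ((3:ℝ)/2)) :=
    cont_rpow (by fun_prop) (fun ν => by positivity) _
  have hWpos : ∀ ν : ℝ, (0:ℝ) < ((1:ℝ) + ν ^ 2) ^ ((3:ℝ)/2) :=
    fun ν => Real.rpow_pos_of_pos (by positivity) _
  -- measurable representative
  have hfae : AEMeasurable f (volume : Measure ℝ) := by
    have h1 : AEMeasurable (fun ν : ℝ => f ν / (1 + ν ^ 2) ^ ((3 : ℝ) / 2)) volume :=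
      hf.1.aemeasurable
    have h2 := h1.mul hWc.measurable.aemeasurable
    have h3 : (fun ν : ℝ => (f ν / (1 + ν ^ 2) ^ ((3 : ℝ) / 2)) *
        ((1:ℝ) + ν ^ 2) ^ ((3:ℝ)/2)) = f :=
      funext fun ν => div_mul_cancel₀ (f ν) (hWpos ν).ne'
    rw [← h3]; exact h2
  set f₀ : ℝ → ℝ := hfae.mk f with hf₀def
  have hmeas₀ : Measurable f₀ := hfae.measurable_mk
  have hae : f =ᵐ[volume] f₀ := hfae.ae_eq_mk
  -- div ↔ mul conversions
  have hconv : ∀ (g : ℝ → ℝ) (ν : ℝ), g ν / ((1:ℝ) + ν ^ 2) ^ ((3:ℝ)/2) =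
      g ν * ((1:ℝ) + ν ^ 2) ^ (-((3:ℝ)/2)) := by
    intro g ν
    rw [Real.rpow_neg (by positivity), div_eq_mul_inv]
  have hfw₀ : Integrable (fun ν : ℝ => f₀ ν * ((1:ℝ) + ν ^ 2) ^ (-((3:ℝ)/2))) := by
    have h1 : Integrable (fun ν : ℝ => f₀ ν / ((1:ℝ) + ν ^ 2) ^ ((3:ℝ)/2)) :=
      hf.congr (hae.mono fun ν hν => by simp only [hν])
    exact h1.congr (ae_of_all _ fun ν => by simp only []; rw [hconv])
  -- transfer Lebesgue point hypotheses to f₀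
  have hrlp₀ : Tendsto (fun h : ℝ => (1 / h) * ∫ y in Ioc (0 : ℝ) h, |f₀ y - αp|)
      (𝓝[>] (0:ℝ)) (𝓝 0) := by
    have he : (fun h : ℝ => (1 / h) * ∫ y in Ioc (0 : ℝ) h, |f y - αp|) =
        fun h : ℝ => (1 / h) * ∫ y in Ioc (0 : ℝ) h, |f₀ y - αp| := by
      funext h
      congr 1
      exact integral_congr_ae (ae_restrict_of_ae (hae.mono fun ν hν => by simp only [hν]))
    rwa [he] at hrlp
  have hllp₀ : Tendsto (fun h : ℝ => (1 / h) * ∫ y in Ico (-h) (0 : ℝ), |f₀ y - αm|)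
      (𝓝[>] (0:ℝ)) (𝓝 0) := by
    have he : (fun h : ℝ => (1 / h) * ∫ y in Ico (-h) (0:ℝ), |f y - αm|) =
        fun h : ℝ => (1 / h) * ∫ y in Ico (-h) (0:ℝ), |f₀ y - αm| := by
      funext h
      congr 1
      exact integral_congr_ae (ae_restrict_of_ae (hae.mono fun ν hν => by simp only [hν]))
    rwa [he] at hllp
  -- the reflected function
  set g : ℝ → ℝ := fun x => f₀ (-x) with hgdef
  have hgmeas : Measurable g := hmeas₀.comp measurable_neg
  have hgw : Integrable (fun ν : ℝ => g ν * ((1:ℝ) + ν ^ 2) ^ (-((3:ℝ)/2))) := by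
    have h1 := hfw₀.comp_neg
    exact h1.congr (ae_of_all _ fun ν => by simp [hgdef, neg_sq])
  have hglp : Tendsto (fun h : ℝ => (1 / h) * ∫ y in Ioc (0 : ℝ) h, |g y - αm|)
      (𝓝[>] (0:ℝ)) (𝓝 0) := by
    apply hllp₀.congr'
    filter_upwards [self_mem_nhdsWithin] with h hh
    have hh0 : (0:ℝ) ≤ h := le_of_lt hh
    congr 1
    have e1 : ∫ y in Ioc (0:ℝ) h, |g y - αm| = ∫ y in (0:ℝ)..h, |f₀ (-y) - αm| := by
      rw [intervalIntegral.integral_of_le hh0]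
    have e2 : ∫ y in (0:ℝ)..h, |f₀ (-y) - αm| = ∫ y in (-h)..(0:ℝ), |f₀ y - αm| := by
      simpa using intervalIntegral.integral_comp_neg (a := (0:ℝ)) (b := h)
        (f := fun y => |f₀ y - αm|)
    have e3 : ∫ y in (-h)..(0:ℝ), |f₀ y - αm| = ∫ y in Ico (-h) (0:ℝ), |f₀ y - αm| := by
      rw [intervalIntegral.integral_of_le (by linarith), integral_Ioc_eq_integral_Ioo,
        ← integral_Ico_eq_integral_Ioo]
    rw [e1, e2, e3]
  -- two half-line limits
  have hp := half f₀ αp hmeas₀ hfw₀ hrlp₀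
  have hm := half g αm hgmeas hgw hglp
  have hsum := hp.add hm
  apply hsum.congr'
  filter_upwards [self_mem_nhdsWithin] with lam hlam'
  have hlam : 0 < lam := hlam'
  have hKint : Integrable (fun ν : ℝ => f₀ ν * (ν ^ 2 + lam) ^ (-((3:ℝ)/2))) :=
    integrable_fK f₀ hmeas₀ hfw₀ lam hlam
  have e0 : ∫ ν : ℝ, f ν / (ν ^ 2 + lam) ^ ((3:ℝ)/2) =
      ∫ ν : ℝ, f₀ ν * (ν ^ 2 + lam) ^ (-((3:ℝ)/2)) := by
    apply integral_congr_ae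
    filter_upwards [hae] with ν hν
    rw [hν, Real.rpow_neg (by positivity), div_eq_mul_inv]
  have e1 : ∫ ν : ℝ, f₀ ν * (ν ^ 2 + lam) ^ (-((3:ℝ)/2)) =
      (∫ ν in Iic (0:ℝ), f₀ ν * (ν ^ 2 + lam) ^ (-((3:ℝ)/2))) +
        ∫ ν in Ioi (0:ℝ), f₀ ν * (ν ^ 2 + lam) ^ (-((3:ℝ)/2)) :=
    (intervalIntegral.integral_Iic_add_Ioi hKint.integrableOn hKint.integrableOn).symm
  have e2 : ∫ ν in Iic (0:ℝ), f₀ ν * (ν ^ 2 + lam) ^ (-((3:ℝ)/2)) =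
      ∫ ν in Ioi (0:ℝ), g ν * (ν ^ 2 + lam) ^ (-((3:ℝ)/2)) := by
    have h1 : ∫ ν in Iic (0:ℝ), f₀ ν * (ν ^ 2 + lam) ^ (-((3:ℝ)/2)) =
        ∫ ν in Iic (0:ℝ), (fun x => g x * (x ^ 2 + lam) ^ (-((3:ℝ)/2))) (-ν) := by
      apply integral_congr_ae (ae_of_all _ fun ν => ?_)
      simp only [hgdef, neg_neg, neg_sq]
    have h2 := integral_comp_neg_Iic (c := (0:ℝ))
      (f := fun x => g x * (x ^ 2 + lam) ^ (-((3:ℝ)/2)))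
    rw [h1, h2]
    simp only [neg_zero, integral_Ici_eq_integral_Ioi]
  show lam * (∫ ν in Ioi (0:ℝ), f₀ ν * (ν ^ 2 + lam) ^ (-((3:ℝ)/2))) +
      lam * (∫ ν in Ioi (0:ℝ), g ν * (ν ^ 2 + lam) ^ (-((3:ℝ)/2))) =
    lam * ∫ ν : ℝ, f ν / (ν ^ 2 + lam) ^ ((3:ℝ)/2)
  rw [e0, e1, e2]; ring
end

section
/- Let ξ : (0,∞) → ℝ be measurable with ∫₀^∞ |ξ(s)| (s+1)^{−1} ds < ∞, and suppose 0 is a right Lebesgue point of ξ with value ξ_L(0₊) = L. Then for every φ ∈ (0, π/2), z ∫₀^∞ ξ(s) e^{−zs} ds → L as |z| → ∞ with z ranging over the sector S_φ = {z ∈ ℂ \ {0} : |arg z| < φ}. -/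
open MeasureTheory Filter Set

section Aux
open Real Topology ENNReal


lemma aux_texp (t : ℝ) (ht : 0 ≤ t) : t * Real.exp (-t) ≤ 1 := by
  rw [Real.exp_neg]
  rw [mul_inv_le_iff₀ (Real.exp_pos t), one_mul]
  linarith [Real.add_one_le_exp t]

lemma aux_exp_mul_le {x s : ℝ} (hx : 0 < x) (hs : 0 ≤ s) :
    Real.exp (-(x*s)) * (s+1) ≤ 1 + 1/x := by
  have h1 : x * s * Real.exp (-(x*s)) ≤ 1 := aux_texp (x*s) (by positivity)
  have h2 : Real.exp (-(x*s)) ≤ 1 := Real.exp_le_one_iff.mpr (by nlinarith)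
  have h3 : Real.exp (-(x*s)) * s ≤ 1/x := by
    rw [le_div_iff₀ hx]; nlinarith
  nlinarith

lemma aux_meas_cexp (z : ℂ) : Measurable (fun s : ℝ => Complex.exp (-(z * s))) :=
  Complex.measurable_exp.comp ((measurable_const.mul Complex.measurable_ofReal).neg)

lemma aux_norm_cexp (z : ℂ) (s : ℝ) :
    ‖Complex.exp (-(z * s))‖ = Real.exp (-(z.re * s)) := by
  rw [Complex.norm_exp]
  congr 1
  simp [Complex.mul_re]

lemma integrableOn_cexp {z : ℂ} (hz : 0 < z.re) :
    IntegrableOn (fun s : ℝ => Complex.exp (-(z * s))) (Ioi 0) := by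
  apply ((exp_neg_integrableOn_Ioi 0 hz)).mono' (aux_meas_cexp z).aestronglyMeasurable
  filter_upwards with s
  rw [aux_norm_cexp, neg_mul]

lemma integral_cexp {z : ℂ} (hz : 0 < z.re) :
    ∫ s in Ioi (0:ℝ), Complex.exp (-(z * s)) = z⁻¹ := by
  have hz0 : z ≠ 0 := fun h => by simp [h] at hz
  have hd : ∀ s : ℝ, HasDerivAt (fun s : ℝ => -z⁻¹ * Complex.exp (-(z * s)))
      (Complex.exp (-(z * s))) s := by
    intro s
    have h1 : HasDerivAt (fun s : ℝ => z * (s : ℂ)) z s := by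
      simpa using (Complex.ofRealCLM.hasDerivAt (x := s)).const_mul z
    have h2 := (h1.neg.cexp).const_mul (-z⁻¹)
    refine h2.congr_deriv ?_
    simp only [Pi.neg_apply]
    rw [mul_neg, neg_mul_neg, mul_left_comm, inv_mul_cancel₀ hz0, mul_one]
  have ht : Tendsto (fun s : ℝ => -z⁻¹ * Complex.exp (-(z * s))) atTop (𝓝 0) := by
    have hb : Tendsto (fun s : ℝ => ‖(-z⁻¹ : ℂ)‖ * Real.exp (-(z.re * s))) atTop (𝓝 0) := by
      have : Tendsto (fun s : ℝ => Real.exp (-(z.re * s))) atTop (𝓝 0) :=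
        Real.tendsto_exp_neg_atTop_nhds_zero.comp (tendsto_id.const_mul_atTop hz)
      simpa using this.const_mul ‖(-z⁻¹ : ℂ)‖
    apply squeeze_zero_norm _ hb
    intro s
    rw [norm_mul, aux_norm_cexp]
  have := integral_Ioi_of_hasDerivAt_of_tendsto' (f := fun s : ℝ => -z⁻¹ * Complex.exp (-(z * s)))
    (fun s _ => hd s) (integrableOn_cexp hz) ht
  rw [this]
  simp

lemma integrableOn_xi_cexp (ξ : ℝ → ℝ) (hmeas : Measurable ξ)
    (hint : IntegrableOn (fun s : ℝ => |ξ s| / (s + 1)) (Ioi 0))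
    {z : ℂ} (hz : 0 < z.re) :
    IntegrableOn (fun s : ℝ => (ξ s : ℂ) * Complex.exp (-(z * s))) (Ioi 0) := by
  apply ((hint.const_mul (1 + 1/z.re))).mono'
    ((Complex.measurable_ofReal.comp hmeas).mul (aux_meas_cexp z)).aestronglyMeasurable
  filter_upwards [ae_restrict_mem measurableSet_Ioi] with s hs
  have hs0 : (0:ℝ) < s := hs
  rw [Pi.mul_apply, norm_mul, aux_norm_cexp]
  have : ‖(Complex.ofReal ∘ ξ) s‖ = |ξ s| := by
    simp [Function.comp, Complex.norm_real, Real.norm_eq_abs]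
  rw [this]
  have h1 : Real.exp (-(z.re * s)) * (s+1) ≤ 1 + 1/z.re := aux_exp_mul_le hz hs0.le
  have hsn : (0:ℝ) < s + 1 := by linarith
  rw [mul_div_assoc', le_div_iff₀ hsn]
  nlinarith [abs_nonneg (ξ s), Real.exp_pos (-(z.re * s))]

lemma integrableOn_exp_neg_mul {x : ℝ} (hx : 0 < x) :
    IntegrableOn (fun s : ℝ => Real.exp (-(x * s))) (Ioi 0) := by
  have := exp_neg_integrableOn_Ioi 0 hx
  simpa [neg_mul] using this

lemma integrableOn_g_exp (ξ : ℝ → ℝ) (L : ℝ) (hmeas : Measurable ξ)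
    (hint : IntegrableOn (fun s : ℝ => |ξ s| / (s + 1)) (Ioi 0))
    {x : ℝ} (hx : 0 < x) :
    IntegrableOn (fun s : ℝ => |ξ s - L| * Real.exp (-(x * s))) (Ioi 0) := by
  have hdom : IntegrableOn
      (fun s : ℝ => (1 + 1/x) * (|ξ s| / (s + 1)) + |L| * Real.exp (-(x * s))) (Ioi 0) :=
    (hint.const_mul _).add ((integrableOn_exp_neg_mul hx).const_mul _)
  apply hdom.mono' (((hmeas.sub measurable_const).abs.mul
    (Real.measurable_exp.comp (measurable_const.mul measurable_id).neg)).aestronglyMeasurable)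
  filter_upwards [ae_restrict_mem measurableSet_Ioi] with s hs
  simp only [Pi.mul_apply, Pi.sub_apply, Pi.neg_apply, Function.comp_apply, id_eq]
  have hs0 : (0:ℝ) < s := hs
  have hsn : (0:ℝ) < s + 1 := by linarith
  have h1 : Real.exp (-(x * s)) * (s+1) ≤ 1 + 1/x := aux_exp_mul_le hx hs0.le
  have h2 : |ξ s - L| ≤ |ξ s| + |L| := abs_sub (ξ s) L
  rw [Real.norm_eq_abs, abs_of_nonneg (by positivity)]
  have h3 : |ξ s| * Real.exp (-(x * s)) ≤ (1 + 1/x) * (|ξ s| / (s + 1)) := by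
    rw [mul_div_assoc', le_div_iff₀ hsn]
    nlinarith [abs_nonneg (ξ s), Real.exp_pos (-(x * s))]
  nlinarith [mul_le_mul_of_nonneg_right h2 (Real.exp_pos (-(x*s))).le,
    Real.exp_pos (-(x * s)), abs_nonneg L, abs_nonneg (ξ s)]

lemma integrableOn_g_Ioc (ξ : ℝ → ℝ) (L : ℝ) (hmeas : Measurable ξ)
    (hint : IntegrableOn (fun s : ℝ => |ξ s| / (s + 1)) (Ioi 0))
    {δ : ℝ} (hδ : 0 < δ) :
    IntegrableOn (fun s : ℝ => |ξ s - L|) (Ioc 0 δ) := by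
  have hdom : IntegrableOn (fun s : ℝ => (δ + 1) * (|ξ s| / (s + 1)) + |L|) (Ioc 0 δ) :=
    ((hint.mono_set Ioc_subset_Ioi_self).const_mul _).add (integrableOn_const
      (measure_Ioc_lt_top.ne))
  apply hdom.mono' (hmeas.sub measurable_const).abs.aestronglyMeasurable
  filter_upwards [ae_restrict_mem measurableSet_Ioc] with s hs
  have hs0 : (0:ℝ) < s := hs.1
  have hsn : (0:ℝ) < s + 1 := by linarith
  have h2 : |ξ s - L| ≤ |ξ s| + |L| := abs_sub (ξ s) L
  have h3 : |ξ s| ≤ (δ + 1) * (|ξ s| / (s + 1)) := by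
    rw [mul_div_assoc', le_div_iff₀ hsn]
    nlinarith [abs_nonneg (ξ s), hs.2]
  rw [Real.norm_eq_abs, abs_abs, Pi.sub_apply]
  linarith

lemma aux_sum_bound : ∑' k : ℕ, ((k:ℝ)+1) * Real.exp (-(k:ℝ)) ≤ 8 := by
  set r : ℝ := Real.exp (-(1/2 : ℝ)) with hr
  have hr0 : 0 ≤ r := (Real.exp_pos _).le
  have hr1 : r < 1 := Real.exp_lt_one_iff.mpr (by norm_num)
  have hrb : r ≤ 3/4 := by
    have h := Real.add_one_le_exp (1/2 : ℝ)
    have : Real.exp (-(1/2:ℝ)) * Real.exp (1/2:ℝ) = 1 := by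
      rw [← Real.exp_add]; norm_num
    nlinarith [Real.exp_pos (1/2:ℝ)]
  have hb : ∀ k : ℕ, ((k:ℝ)+1) * Real.exp (-(k:ℝ)) ≤ 2 * r ^ k := by
    intro k
    have e1 : r ^ k = Real.exp ((k:ℝ) * (-(1/2))) := (Real.exp_nat_mul _ k).symm
    have e2 : Real.exp ((k:ℝ)/2) * Real.exp (-(k:ℝ)) = Real.exp ((k:ℝ) * (-(1/2))) := by
      rw [← Real.exp_add]; ring_nf
    have e3 : (k:ℝ) + 1 ≤ 2 * Real.exp ((k:ℝ)/2) := by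
      have := Real.add_one_le_exp ((k:ℝ)/2)
      linarith
    rw [e1, ← e2]
    nlinarith [Real.exp_pos (-(k:ℝ)), Real.exp_pos ((k:ℝ)/2)]
  have hgs : Summable (fun k : ℕ => 2 * r ^ k) :=
    (summable_geometric_of_lt_one hr0 hr1).mul_left 2
  have hs : Summable (fun k : ℕ => ((k:ℝ)+1) * Real.exp (-(k:ℝ))) :=
    Summable.of_nonneg_of_le (fun k => by positivity) hb hgs
  calc ∑' k : ℕ, ((k:ℝ)+1) * Real.exp (-(k:ℝ)) ≤ ∑' k : ℕ, 2 * r ^ k :=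
        Summable.tsum_le_tsum hb hs hgs
    _ = 2 * (1 - r)⁻¹ := by rw [tsum_mul_left, tsum_geometric_of_lt_one hr0 hr1]
    _ ≤ 8 := by
        rw [← le_div_iff₀' (by norm_num : (0:ℝ) < 2)]
        rw [inv_le_comm₀ (by linarith) (by norm_num)]
        linarith

lemma near_bound (ξ : ℝ → ℝ) (L : ℝ) (hmeas : Measurable ξ)
    (hint : IntegrableOn (fun s : ℝ => |ξ s| / (s + 1)) (Ioi 0))
    {ε δ x : ℝ} (hδ : 0 < δ) (hx : 0 < x) (hε : 0 ≤ ε)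
    (hF : ∀ h : ℝ, 0 < h → h ≤ δ → (∫ s in Ioc (0:ℝ) h, |ξ s - L|) ≤ ε * h) :
    x * ∫ s in Ioc (0:ℝ) δ, |ξ s - L| * Real.exp (-(x * s)) ≤ 8 * ε := by
  set g : ℝ → ℝ := fun s => |ξ s - L| with hg
  have hgmeas : Measurable g := (hmeas.sub measurable_const).abs
  have hgint : IntegrableOn g (Ioc 0 δ) := integrableOn_g_Ioc ξ L hmeas hint hδ
  set T : ℕ → ℝ → ℝ≥0∞ := fun k s =>
    (Ioc (0:ℝ) (((k:ℝ)+1)/x)).indicator (fun s => ENNReal.ofReal (g s)) s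
      * ENNReal.ofReal (Real.exp (-(k:ℝ))) with hT
  -- pointwise bound
  have hpt : ∀ s ∈ Ioc (0:ℝ) δ,
      ENNReal.ofReal (g s * Real.exp (-(x*s))) ≤ ∑' k, T k s := by
    intro s hs
    set k := ⌊x*s⌋₊ with hk
    have hxs : 0 ≤ x * s := mul_nonneg hx.le hs.1.le
    have hk1 : (k:ℝ) ≤ x*s := Nat.floor_le hxs
    have hk2 : x*s < (k:ℝ)+1 := Nat.lt_floor_add_one _
    have hsmem : s ∈ Ioc (0:ℝ) (((k:ℝ)+1)/x) := ⟨hs.1, by rw [le_div_iff₀ hx]; linarith⟩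
    have step1 : ENNReal.ofReal (g s * Real.exp (-(x*s)))
        ≤ ENNReal.ofReal (g s * Real.exp (-(k:ℝ))) := by
      apply ENNReal.ofReal_le_ofReal
      exact mul_le_mul_of_nonneg_left (Real.exp_le_exp.mpr (by linarith)) (abs_nonneg _)
    have step2 : ENNReal.ofReal (g s * Real.exp (-(k:ℝ))) = T k s := by
      rw [hT]; simp only
      rw [indicator_of_mem hsmem, ← ENNReal.ofReal_mul (abs_nonneg _)]
    exact step1.trans (step2.le.trans (ENNReal.le_tsum k))
  -- lintegral chain
  have hTmeas : ∀ k : ℕ, Measurable (T k) := fun k =>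
    ((hgmeas.ennreal_ofReal).indicator measurableSet_Ioc).mul_const _
  have h2 : (∫⁻ s in Ioc (0:ℝ) δ, ENNReal.ofReal (g s * Real.exp (-(x*s))))
      ≤ ∑' k, ∫⁻ s in Ioc (0:ℝ) δ, T k s := by
    refine le_trans (lintegral_mono_ae ?_) (lintegral_tsum fun k => (hTmeas k).aemeasurable).le
    filter_upwards [ae_restrict_mem measurableSet_Ioc] with s hs using hpt s hs
  have h3 : ∀ k : ℕ, (∫⁻ s in Ioc (0:ℝ) δ, T k s)
      ≤ ENNReal.ofReal ((ε/x) * (((k:ℝ)+1) * Real.exp (-(k:ℝ)))) := by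
    intro k
    set m : ℝ := min (((k:ℝ)+1)/x) δ with hm
    have hm0 : 0 < m := lt_min (by positivity) hδ
    have hmδ : m ≤ δ := min_le_right _ _
    have e1 : (∫⁻ s in Ioc (0:ℝ) δ, T k s)
        = (∫⁻ s in Ioc (0:ℝ) m, ENNReal.ofReal (g s)) * ENNReal.ofReal (Real.exp (-(k:ℝ))) := by
      rw [hT]; simp only
      rw [lintegral_mul_const _ ((hgmeas.ennreal_ofReal).indicator measurableSet_Ioc),
        setLIntegral_indicator measurableSet_Ioc, Ioc_inter_Ioc]
      norm_num
      rfl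
    have e2 : (∫⁻ s in Ioc (0:ℝ) m, ENNReal.ofReal (g s)) ≤ ENNReal.ofReal (ε * m) := by
      rw [← ofReal_integral_eq_lintegral_ofReal
        (hgint.mono_set (Ioc_subset_Ioc_right hmδ))
        (Eventually.of_forall fun s => abs_nonneg _)]
      exact ENNReal.ofReal_le_ofReal (hF m hm0 hmδ)
    calc (∫⁻ s in Ioc (0:ℝ) δ, T k s)
        ≤ ENNReal.ofReal (ε * m) * ENNReal.ofReal (Real.exp (-(k:ℝ))) := by
          rw [e1]; exact mul_le_mul_left e2 _
      _ = ENNReal.ofReal (ε * m * Real.exp (-(k:ℝ))) :=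
          (ENNReal.ofReal_mul (by positivity)).symm
      _ ≤ ENNReal.ofReal ((ε/x) * (((k:ℝ)+1) * Real.exp (-(k:ℝ)))) := by
          apply ENNReal.ofReal_le_ofReal
          have hmk : m ≤ ((k:ℝ)+1)/x := min_le_left _ _
          have h4 : ε * m ≤ ε * (((k:ℝ)+1)/x) := mul_le_mul_of_nonneg_left hmk hε
          have h5 : ε * (((k:ℝ)+1)/x) * Real.exp (-(k:ℝ))
              = (ε/x) * (((k:ℝ)+1) * Real.exp (-(k:ℝ))) := by ring
          nlinarith [Real.exp_pos (-(k:ℝ))]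
  have h4 : (∑' k, ∫⁻ s in Ioc (0:ℝ) δ, T k s) ≤ ENNReal.ofReal ((ε/x) * 8) := by
    refine le_trans (ENNReal.tsum_le_tsum h3) ?_
    rw [← ENNReal.ofReal_tsum_of_nonneg (fun k => by positivity)
      ((Summable.of_nonneg_of_le (fun k => by positivity)
        (fun k => le_refl _) ?_).mul_left (ε/x))]
    · apply ENNReal.ofReal_le_ofReal
      rw [tsum_mul_left]
      apply mul_le_mul_of_nonneg_left aux_sum_bound (by positivity)
    · -- summability of (k+1)exp(-k)
      have hr0 : (0:ℝ) ≤ Real.exp (-(1/2:ℝ)) := (Real.exp_pos _).le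
      have hr1 : Real.exp (-(1/2:ℝ)) < 1 := Real.exp_lt_one_iff.mpr (by norm_num)
      apply Summable.of_nonneg_of_le (fun k => by positivity)
        (fun k => ?_) ((summable_geometric_of_lt_one hr0 hr1).mul_left 2)
      have e1 : Real.exp (-(1/2:ℝ)) ^ k = Real.exp ((k:ℝ) * (-(1/2))) :=
        (Real.exp_nat_mul _ k).symm
      have e2 : Real.exp ((k:ℝ)/2) * Real.exp (-(k:ℝ)) = Real.exp ((k:ℝ) * (-(1/2))) := by
        rw [← Real.exp_add]; ring_nf
      have e3 : (k:ℝ) + 1 ≤ 2 * Real.exp ((k:ℝ)/2) := by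
        have := Real.add_one_le_exp ((k:ℝ)/2); linarith
      rw [e1, ← e2]
      nlinarith [Real.exp_pos (-(k:ℝ)), Real.exp_pos ((k:ℝ)/2)]
  -- back to real integral
  have hir : (∫ s in Ioc (0:ℝ) δ, g s * Real.exp (-(x*s)))
      = (∫⁻ s in Ioc (0:ℝ) δ, ENNReal.ofReal (g s * Real.exp (-(x*s)))).toReal := by
    apply integral_eq_lintegral_of_nonneg_ae (Eventually.of_forall fun s => by positivity)
    exact (hgmeas.mul (Real.measurable_exp.comp
      ((measurable_const.mul measurable_id).neg))).aestronglyMeasurable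
  have hfin : (∫ s in Ioc (0:ℝ) δ, g s * Real.exp (-(x*s))) ≤ (ε/x) * 8 := by
    rw [hir]
    exact ENNReal.toReal_le_of_le_ofReal (by positivity) (h2.trans h4)
  calc x * ∫ s in Ioc (0:ℝ) δ, g s * Real.exp (-(x*s)) ≤ x * ((ε/x) * 8) :=
        mul_le_mul_of_nonneg_left hfin hx.le
    _ = 8 * ε := by field_simp

lemma I_tendsto (ξ : ℝ → ℝ) (L : ℝ) (hmeas : Measurable ξ)
    (hint : IntegrableOn (fun s : ℝ => |ξ s| / (s + 1)) (Ioi 0))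
    (hlp : Tendsto (fun h : ℝ => (1 / h) * ∫ s in Ioc (0 : ℝ) h, |ξ s - L|)
      (nhdsWithin 0 (Ioi 0)) (nhds 0)) :
    Tendsto (fun x : ℝ => x * ∫ s in Ioi (0:ℝ), |ξ s - L| * Real.exp (-(x * s)))
      atTop (𝓝 0) := by
  -- the integrable majorant on the tail
  have hKint : IntegrableOn (fun s : ℝ => |ξ s| / (s + 1) + |L| * Real.exp (-s)) (Ioi 0) := by
    refine hint.add (Integrable.const_mul ?_ _)
    exact (by simpa using exp_neg_integrableOn_Ioi 0 one_pos : IntegrableOn (fun s : ℝ => Real.exp (-s)) (Ioi 0))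
  set K : ℝ := ∫ s in Ioi (0:ℝ), (|ξ s| / (s + 1) + |L| * Real.exp (-s)) with hKdef
  have hK0 : 0 ≤ K := setIntegral_nonneg measurableSet_Ioi fun s hs => by
    have h0 : (0:ℝ) < s := hs; positivity
  rw [Metric.tendsto_atTop]
  intro ε hε
  -- choose δ from the Lebesgue point hypothesis
  obtain ⟨δ₀, hδ₀, hδprop⟩ := Metric.tendsto_nhdsWithin_nhds.mp hlp (ε/16) (by linarith)
  set δ : ℝ := δ₀ / 2 with hδdef
  have hδ : 0 < δ := by positivity
  have hF : ∀ h : ℝ, 0 < h → h ≤ δ → (∫ s in Ioc (0:ℝ) h, |ξ s - L|) ≤ (ε/16) * h := by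
    intro h h0 hhδ
    have hd : dist h 0 < δ₀ := by
      rw [Real.dist_0_eq_abs, abs_of_pos h0]; simp only [hδdef] at hhδ; linarith
    have := hδprop (mem_Ioi.mpr h0) hd
    rw [Real.dist_0_eq_abs] at this
    have h1 : (1/h) * ∫ s in Ioc (0:ℝ) h, |ξ s - L| < ε/16 := (le_abs_self _).trans_lt this
    have h2 : (∫ s in Ioc (0:ℝ) h, |ξ s - L|)
        = h * ((1/h) * ∫ s in Ioc (0:ℝ) h, |ξ s - L|) := by field_simp
    rw [h2]
    nlinarith
  -- tail tendsto
  have htail : Tendsto (fun x : ℝ => x * Real.exp (-(x * (δ/2))) * K) atTop (𝓝 0) := by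
    have h1 : Tendsto (fun t : ℝ => t * Real.exp (-t)) atTop (𝓝 0) := by
      simpa using tendsto_pow_mul_exp_neg_atTop_nhds_zero 1
    have h2 := h1.comp (tendsto_id.const_mul_atTop (half_pos hδ))
    have h3 := h2.const_mul ((2/δ) * K)
    rw [mul_zero] at h3
    apply h3.congr
    intro x
    simp only [Function.comp_apply, id_eq]
    field_simp
  obtain ⟨N₁, hN₁⟩ := Metric.tendsto_atTop.mp htail (ε/2) (by linarith)
  refine ⟨max N₁ 2, fun x hx => ?_⟩
  have hx2 : (2:ℝ) ≤ x := le_trans (le_max_right _ _) hx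
  have hxN : N₁ ≤ x := le_trans (le_max_left _ _) hx
  have hx0 : (0:ℝ) < x := by linarith
  have hgev : IntegrableOn (fun s : ℝ => |ξ s - L| * Real.exp (-(x * s))) (Ioi 0) :=
    integrableOn_g_exp ξ L hmeas hint hx0
  -- split the integral
  have hsplit : (∫ s in Ioi (0:ℝ), |ξ s - L| * Real.exp (-(x * s)))
      = (∫ s in Ioc (0:ℝ) δ, |ξ s - L| * Real.exp (-(x * s)))
        + ∫ s in Ioi δ, |ξ s - L| * Real.exp (-(x * s)) := by
    rw [← Ioc_union_Ioi_eq_Ioi hδ.le, setIntegral_union (Ioc_disjoint_Ioi le_rfl)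
      measurableSet_Ioi (hgev.mono_set (by rw [← Ioc_union_Ioi_eq_Ioi hδ.le]; exact subset_union_left))
      (hgev.mono_set (by rw [← Ioc_union_Ioi_eq_Ioi hδ.le]; exact subset_union_right))]
  -- tail pointwise bound
  have htailb : (∫ s in Ioi δ, |ξ s - L| * Real.exp (-(x * s)))
      ≤ Real.exp (-(x * (δ/2))) * K := by
    have hpt : ∀ s ∈ Ioi δ, |ξ s - L| * Real.exp (-(x * s))
        ≤ Real.exp (-(x * (δ/2))) * (|ξ s| / (s + 1) + |L| * Real.exp (-s)) := by
      intro s hs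
      have hsδ : δ < s := hs
      have hs0 : 0 < s := lt_trans hδ hsδ
      have hsplit2 : Real.exp (-(x * s)) = Real.exp (-(x*s/2)) * Real.exp (-(x*s/2)) := by
        rw [← Real.exp_add]; ring_nf
      have hb1 : Real.exp (-(x*s/2)) ≤ Real.exp (-(x * (δ/2))) :=
        Real.exp_le_exp.mpr (by nlinarith)
      have hb2 : Real.exp (-(x*s/2)) ≤ Real.exp (-s) :=
        Real.exp_le_exp.mpr (by nlinarith)
      have hb3 : Real.exp (-s) ≤ 1 / (s + 1) := by
        rw [Real.exp_neg, inv_eq_one_div, div_le_div_iff₀ (Real.exp_pos s) (by linarith)]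
        nlinarith [Real.add_one_le_exp s]
      have hgb : |ξ s - L| ≤ |ξ s| + |L| := abs_sub (ξ s) L
      have hb4 : |ξ s - L| * Real.exp (-(x*s/2)) ≤ |ξ s| / (s + 1) + |L| * Real.exp (-s) := by
        have c1 : |ξ s| * Real.exp (-(x*s/2)) ≤ |ξ s| / (s + 1) := by
          calc |ξ s| * Real.exp (-(x*s/2)) ≤ |ξ s| * (1/(s+1)) :=
                mul_le_mul_of_nonneg_left (hb2.trans hb3) (abs_nonneg _)
            _ = |ξ s| / (s + 1) := by ring
        have c2 : |L| * Real.exp (-(x*s/2)) ≤ |L| * Real.exp (-s) :=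
          mul_le_mul_of_nonneg_left hb2 (abs_nonneg _)
        nlinarith [Real.exp_pos (-(x*s/2)), abs_nonneg (ξ s), abs_nonneg L,
          mul_le_mul_of_nonneg_right hgb (Real.exp_pos (-(x*s/2))).le]
      calc |ξ s - L| * Real.exp (-(x * s))
          = (|ξ s - L| * Real.exp (-(x*s/2))) * Real.exp (-(x*s/2)) := by
            rw [hsplit2]; ring
        _ ≤ (|ξ s| / (s + 1) + |L| * Real.exp (-s)) * Real.exp (-(x * (δ/2))) := by
            apply mul_le_mul hb4 hb1 (Real.exp_pos _).le
            positivity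
        _ = Real.exp (-(x * (δ/2))) * (|ξ s| / (s + 1) + |L| * Real.exp (-s)) := by ring
    calc (∫ s in Ioi δ, |ξ s - L| * Real.exp (-(x * s)))
        ≤ ∫ s in Ioi δ, Real.exp (-(x * (δ/2))) * (|ξ s| / (s + 1) + |L| * Real.exp (-s)) := by
          apply setIntegral_mono_on (hgev.mono_set (Ioi_subset_Ioi hδ.le))
            (((hKint.mono_set (Ioi_subset_Ioi hδ.le))).const_mul _) measurableSet_Ioi hpt
      _ = Real.exp (-(x * (δ/2))) * ∫ s in Ioi δ, (|ξ s| / (s + 1) + |L| * Real.exp (-s)) := by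
          rw [integral_const_mul]
      _ ≤ Real.exp (-(x * (δ/2))) * K := by
          apply mul_le_mul_of_nonneg_left _ (Real.exp_pos _).le
          apply setIntegral_mono_set hKint
          · filter_upwards [ae_restrict_mem measurableSet_Ioi] with s hs
            have h0 : (0:ℝ) < s := hs; positivity
          · exact HasSubset.Subset.eventuallyLE (Ioi_subset_Ioi hδ.le)
  -- near bound
  have hnear : x * (∫ s in Ioc (0:ℝ) δ, |ξ s - L| * Real.exp (-(x * s))) ≤ 8 * (ε/16) :=
    near_bound ξ L hmeas hint hδ hx0 (by linarith) hF
  -- tail numeric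
  have htn : x * Real.exp (-(x * (δ/2))) * K < ε/2 := by
    have := hN₁ x hxN
    rw [Real.dist_0_eq_abs] at this
    exact (le_abs_self _).trans_lt this
  have hInonneg : 0 ≤ x * ∫ s in Ioi (0:ℝ), |ξ s - L| * Real.exp (-(x * s)) := by
    apply mul_nonneg hx0.le
    apply setIntegral_nonneg measurableSet_Ioi
    intro s hs; positivity
  rw [Real.dist_0_eq_abs, abs_of_nonneg hInonneg]
  have htail2 : x * (∫ s in Ioi δ, |ξ s - L| * Real.exp (-(x * s)))
      ≤ x * Real.exp (-(x * (δ/2))) * K := by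
    rw [mul_assoc]
    exact mul_le_mul_of_nonneg_left htailb hx0.le
  rw [hsplit, mul_add]
  linarith

end Aux

open Real Topology in
/-- If `ξ : (0,∞) → ℝ` is measurable with `∫₀^∞ |ξ(s)|/(s+1) ds < ∞` and `0` is
a right Lebesgue point of `ξ` with value `L`, then for every `φ ∈ (0, π/2)`,
`z ∫₀^∞ ξ(s) e^{-zs} ds → L` as `|z| → ∞` with `z` in the sector `S_φ`
(i.e. `z ≠ 0` and `|z| cos φ < Re z`). -/
theorem stmt_5 (ξ : ℝ → ℝ) (L : ℝ) (φ : ℝ) (hφ : φ ∈ Ioo 0 (Real.pi / 2))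
    (hmeas : Measurable ξ)
    (hint : IntegrableOn (fun s : ℝ => |ξ s| / (s + 1)) (Ioi 0))
    (hlp : Tendsto (fun h : ℝ => (1 / h) * ∫ s in Ioc (0 : ℝ) h, |ξ s - L|)
      (nhdsWithin 0 (Ioi 0)) (nhds 0)) :
    Tendsto (fun z : ℂ => z * ∫ s in Ioi (0 : ℝ), (ξ s : ℂ) * Complex.exp (-(z * (s : ℂ))))
      ((Filter.comap (fun z : ℂ => ‖z‖) Filter.atTop) ⊓
        Filter.principal {z : ℂ | z ≠ 0 ∧ ‖z‖ * Real.cos φ < z.re})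
      (nhds (L : ℂ)) := by
  set c : ℝ := Real.cos φ with hc
  have hc0 : 0 < c := Real.cos_pos_of_mem_Ioo ⟨by linarith [hφ.1, Real.pi_pos], hφ.2⟩
  set F := (Filter.comap (fun z : ℂ => ‖z‖) Filter.atTop) ⊓
      Filter.principal {z : ℂ | z ≠ 0 ∧ ‖z‖ * Real.cos φ < z.re} with hF
  set G : ℂ → ℂ := fun z => z * ∫ s in Ioi (0 : ℝ), (ξ s : ℂ) * Complex.exp (-(z * (s : ℂ)))
    with hG
  have hS : ∀ᶠ z in F, z ≠ 0 ∧ ‖z‖ * c < z.re := by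
    rw [hF]
    exact eventually_inf_principal.mpr (Eventually.of_forall fun z h => h)
  have habs : Tendsto (fun z : ℂ => ‖z‖) F atTop :=
    tendsto_comap.mono_left inf_le_left
  have hre : Tendsto (fun z : ℂ => z.re) F atTop := by
    apply tendsto_atTop_mono' F _ (habs.atTop_mul_const hc0)
    filter_upwards [hS] with z hz using hz.2.le
  -- key estimate
  have hkey : ∀ᶠ z in F, ‖G z - L‖
      ≤ c⁻¹ * (z.re * ∫ s in Ioi (0:ℝ), |ξ s - L| * Real.exp (-(z.re * s))) := by
    filter_upwards [hS] with z hz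
    obtain ⟨hz0, hzc⟩ := hz
    have habs0 : 0 < ‖z‖ := norm_pos_iff.mpr hz0
    have hx0 : 0 < z.re := lt_of_le_of_lt (by positivity) hzc
    have hi1 : IntegrableOn (fun s : ℝ => (ξ s : ℂ) * Complex.exp (-(z * s))) (Ioi 0) :=
      integrableOn_xi_cexp ξ hmeas hint hx0
    have hi2 : IntegrableOn (fun s : ℝ => (L : ℂ) * Complex.exp (-(z * s))) (Ioi 0) :=
      (integrableOn_cexp hx0).const_mul _
    have hrw : G z - L = z * ∫ s in Ioi (0:ℝ),
        ((ξ s : ℂ) - L) * Complex.exp (-(z * s)) := by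
      have e1 : ∫ s in Ioi (0:ℝ), ((ξ s : ℂ) - L) * Complex.exp (-(z * s))
          = (∫ s in Ioi (0:ℝ), (ξ s : ℂ) * Complex.exp (-(z * s)))
            - ∫ s in Ioi (0:ℝ), (L : ℂ) * Complex.exp (-(z * s)) := by
        rw [← integral_sub hi1 hi2]
        congr 1; funext s; ring
      have e2 : ∫ s in Ioi (0:ℝ), (L : ℂ) * Complex.exp (-(z * s)) = L * z⁻¹ := by
        rw [integral_const_mul, integral_cexp hx0]
      rw [e1, e2, hG]
      simp only [mul_sub]
      congr 1
      field_simp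
    rw [hrw]
    calc ‖z * ∫ s in Ioi (0:ℝ), ((ξ s : ℂ) - L) * Complex.exp (-(z * s))‖
        = ‖z‖ * ‖∫ s in Ioi (0:ℝ), ((ξ s : ℂ) - L) * Complex.exp (-(z * s))‖ := by
          rw [norm_mul]
      _ ≤ ‖z‖ * ∫ s in Ioi (0:ℝ), |ξ s - L| * Real.exp (-(z.re * s)) := by
          apply mul_le_mul_of_nonneg_left _ (norm_nonneg z)
          refine le_trans (norm_integral_le_integral_norm _) (le_of_eq ?_)
          congr 1; funext s
          rw [norm_mul, aux_norm_cexp]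
          congr 1
          rw [← Complex.ofReal_sub, Complex.norm_real, Real.norm_eq_abs]
      _ ≤ (c⁻¹ * z.re) * ∫ s in Ioi (0:ℝ), |ξ s - L| * Real.exp (-(z.re * s)) := by
          apply mul_le_mul_of_nonneg_right _ (setIntegral_nonneg measurableSet_Ioi
            fun s hs => by positivity)
          rw [← div_eq_inv_mul, le_div_iff₀ hc0]
          linarith
      _ = c⁻¹ * (z.re * ∫ s in Ioi (0:ℝ), |ξ s - L| * Real.exp (-(z.re * s))) := by ring
  have hb : Tendsto (fun z : ℂ =>
      c⁻¹ * (z.re * ∫ s in Ioi (0:ℝ), |ξ s - L| * Real.exp (-(z.re * s)))) F (𝓝 0) := by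
    have := (I_tendsto ξ L hmeas hint hlp).comp hre
    simpa using this.const_mul c⁻¹
  have hnorm : Tendsto (fun z : ℂ => ‖G z - (L:ℂ)‖) F (𝓝 0) :=
    squeeze_zero' (Eventually.of_forall fun z => norm_nonneg _) hkey hb
  rw [tendsto_iff_norm_sub_tendsto_zero]
  exact hnorm
end

section
/- Fix φ ∈ (0, π/2). Let ξ : [0,∞) → ℝ be continuous on (0,∞), with ∫₀^∞ |ξ(λ)| (1+λ)^{−1} dλ < ∞, and suppose the right limit L = lim_{λ↓0} ξ(λ) exists finitely. Then lim_{z→0, z∈ℂ\(S_φ∪{0})} (−z) ∫₀^∞ ξ(λ) (λ − z)^{−2} dλ = L. -/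
open MeasureTheory Filter Set

lemma sector_sq {c : ℝ} (hc0 : 0 < c) (hc1 : c < 1) {z : ℂ} (hz : z.re ≤ ‖z‖ * c)
    {lam : ℝ} (hlam : 0 ≤ lam) :
    (1 - c) / 2 * (lam + ‖z‖) ^ 2 ≤ ‖((lam : ℂ) - z)‖ ^ 2 := by
  have h1 : ‖((lam:ℂ) - z)‖ ^ 2 = (lam - z.re)^2 + z.im^2 := by
    rw [Complex.sq_norm, Complex.normSq_apply]
    simp [Complex.sub_re, Complex.sub_im]
    ring
  have h2 : ‖z‖ ^ 2 = z.re^2 + z.im^2 := by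
    rw [Complex.sq_norm, Complex.normSq_apply]; ring
  have ha : 0 ≤ ‖z‖ := norm_nonneg z
  nlinarith [sq_nonneg (lam - ‖z‖), mul_nonneg hlam (sub_nonneg.2 hz),
    mul_nonneg hc0.le (sq_nonneg (lam - ‖z‖))]

set_option maxHeartbeats 2000000 in
/-- Fix `φ ∈ (0, π/2)`. If `ξ : [0,∞) → ℝ` is continuous on `(0,∞)`, with
`∫₀^∞ |ξ(λ)|/(1+λ) dλ < ∞`, and the right limit `L = lim_{λ↓0} ξ(λ)` exists, then
`(-z) ∫₀^∞ ξ(λ)(λ - z)^{-2} dλ → L` as `z → 0` with `z ∈ ℂ \ (S_φ ∪ {0})`. -/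
theorem stmt_10 (φ : ℝ) (hφ : φ ∈ Ioo 0 (Real.pi / 2)) (ξ : ℝ → ℝ) (L : ℝ)
    (hcont : ContinuousOn ξ (Ioi 0))
    (hint : IntegrableOn (fun lam : ℝ => |ξ lam| / (1 + lam)) (Ioi 0))
    (hlim : Tendsto ξ (nhdsWithin 0 (Ioi 0)) (nhds L)) :
    Tendsto (fun z : ℂ =>
        -z * ∫ lam in Ioi (0 : ℝ), (ξ lam : ℂ) * (((lam : ℂ) - z) ^ 2)⁻¹)
      (nhdsWithin 0 {z : ℂ | z ≠ 0 ∧ z.re ≤ ‖z‖ * Real.cos φ})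
      (nhds (L : ℂ)) := by
  obtain ⟨hφ0, hφ2⟩ := hφ
  set c := Real.cos φ with hcdef
  have hπ := Real.pi_pos
  have hc0 : 0 < c := Real.cos_pos_of_mem_Ioo ⟨by linarith, hφ2⟩
  have hc1 : c < 1 := by
    have : Real.cos φ < Real.cos 0 := by
      apply Real.cos_lt_cos_of_nonneg_of_le_pi le_rfl (by linarith) hφ0
    simpa using this
  set k : ℝ := (1 - c) / 2 with hkdef
  have hk0 : 0 < k := by rw [hkdef]; linarith
  set κ : ℝ := Real.sqrt k with hκdef
  have hκ0 : 0 < κ := Real.sqrt_pos.2 hk0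
  have hκ2 : κ ^ 2 = k := Real.sq_sqrt hk0.le
  rw [Metric.tendsto_nhdsWithin_nhds]
  intro ε hε
  -- choose δ₀ from the limit
  obtain ⟨δ₁, hδ₁0, hδ₁⟩ := Metric.tendsto_nhdsWithin_nhds.mp hlim (ε * k / 4) (by positivity)
  set δ₀ : ℝ := δ₁ / 2 with hδ₀def
  have hδ₀0 : 0 < δ₀ := by positivity
  set I : ℝ := ∫ lam in Ioi (0:ℝ), |ξ lam| / (1 + lam) with hIdef
  have hI0 : 0 ≤ I := by
    apply setIntegral_nonneg measurableSet_Ioi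
    intro lam hlam
    have : (0:ℝ) < lam := hlam
    positivity
  set C₀ : ℝ := (1 + δ₀) / δ₀ ^ 2 with hC₀def
  have hC₀0 : 0 < C₀ := by positivity
  refine ⟨min δ₀ (min (ε * κ * δ₀ / (4 * (|L| + 1))) (ε * k / (4 * (C₀ + 1) * (I + 1)))), lt_min (by positivity) (lt_min (by positivity) (by positivity)), ?_⟩
  intro z hzS hzd
  obtain ⟨hz0, hzsec⟩ := hzS
  set r : ℝ := ‖z‖ with hrdef
  have hr0 : 0 < r := norm_pos_iff.mpr hz0
  have hzd' : r < min δ₀ (min (ε * κ * δ₀ / (4 * (|L| + 1))) (ε * k / (4 * (C₀ + 1) * (I + 1)))) := by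
    simpa [hrdef, Complex.dist_eq] using hzd
  have hrδ₀ : r < δ₀ := lt_of_lt_of_le hzd' (min_le_left _ _)
  have hr2 : r < ε * κ * δ₀ / (4 * (|L| + 1)) :=
    lt_of_lt_of_le hzd' (le_trans (min_le_right _ _) (min_le_left _ _))
  have hr3 : r < ε * k / (4 * (C₀ + 1) * (I + 1)) :=
    lt_of_lt_of_le hzd' (le_trans (min_le_right _ _) (min_le_right _ _))
  -- basic sector consequences
  have hsec : ∀ lam : ℝ, 0 ≤ lam → k * (lam + r) ^ 2 ≤ ‖((lam:ℂ) - z)‖ ^ 2 :=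
    fun lam hlam => sector_sq hc0 hc1 hzsec hlam
  have hne : ∀ lam : ℝ, 0 ≤ lam → (lam:ℂ) - z ≠ 0 := by
    intro lam hlam h
    have h1 := hsec lam hlam
    rw [h, norm_zero] at h1
    have hlr : 0 < lam + r := by linarith
    nlinarith [mul_pos hk0 (pow_pos hlr 2)]
  have hablow : ∀ lam : ℝ, 0 ≤ lam → κ * (lam + r) ≤ ‖((lam:ℂ) - z)‖ := by
    intro lam hlam
    have h1 := hsec lam hlam
    have h2 : (κ * (lam + r)) ^ 2 ≤ ‖((lam:ℂ) - z)‖ ^ 2 := by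
      rw [mul_pow, hκ2]; exact h1
    have hlr : 0 ≤ κ * (lam + r) := by positivity
    exact le_of_pow_le_pow_left₀ two_ne_zero (norm_nonneg _) h2
  
  -- norm bound on the inverse square
  have hbinv : ∀ lam : ℝ, 0 ≤ lam → ‖(((lam:ℂ) - z) ^ 2)⁻¹‖ ≤ (k * (lam + r) ^ 2)⁻¹ := by
    intro lam hlam
    have hlr : 0 < lam + r := by linarith
    rw [norm_inv, norm_pow]
    exact inv_anti₀ (mul_pos hk0 (pow_pos hlr 2)) (hsec lam hlam)
  set f : ℝ → ℂ := fun lam => (ξ lam : ℂ) * (((lam:ℂ) - z) ^ 2)⁻¹ with hfdef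
  have hcont2 : ContinuousOn f (Ioi 0) := by
    apply (Complex.continuous_ofReal.comp_continuousOn hcont).mul
    apply ContinuousOn.inv₀
      ((Complex.continuous_ofReal.sub continuous_const).pow 2).continuousOn
    intro lam hlam
    exact pow_ne_zero 2 (hne lam (le_of_lt hlam))
  set M : ℝ := (2 * r ^ 2 + 2) / r ^ 2 with hMdef
  have hM0 : 0 < M := by positivity
  have hfbound : ∀ lam : ℝ, 0 < lam → ‖f lam‖ ≤ (k⁻¹ * M) * (|ξ lam| / (1 + lam)) := by
    intro lam hlam
    have hlr : 0 < lam + r := by linarith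
    have h1lam : (0:ℝ) < 1 + lam := by linarith
    rw [hfdef, norm_mul, Complex.norm_real, Real.norm_eq_abs]
    have hkey : (k * (lam + r) ^ 2)⁻¹ ≤ k⁻¹ * M / (1 + lam) := by
      rw [mul_inv, mul_div_assoc]
      apply mul_le_mul_of_nonneg_left _ (by positivity)
      rw [inv_eq_one_div, div_le_div_iff₀ (pow_pos hlr 2) h1lam, hMdef,
        div_mul_eq_mul_div, le_div_iff₀ (by positivity : (0:ℝ) < r ^ 2)]
      nlinarith [mul_nonneg (mul_nonneg hlam.le hr0.le) (sq_nonneg (2 * r - 1/4)),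
        sq_nonneg lam, sq_nonneg r, mul_nonneg hlam.le hr0.le]
    calc |ξ lam| * ‖(((lam:ℂ) - z) ^ 2)⁻¹‖ ≤ |ξ lam| * (k⁻¹ * M / (1 + lam)) :=
          mul_le_mul_of_nonneg_left ((hbinv lam hlam.le).trans hkey) (abs_nonneg _)
      _ = (k⁻¹ * M) * (|ξ lam| / (1 + lam)) := by ring
  have hfint : IntegrableOn f (Ioi 0) := by
    apply Integrable.mono' (hint.const_mul (k⁻¹ * M))
      (hcont2.aestronglyMeasurable measurableSet_Ioi)
    filter_upwards [ae_restrict_mem measurableSet_Ioi] with lam hlam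
    exact hfbound lam hlam
  -- splitting the integral
  have hsplit : ∫ lam in Ioi (0:ℝ), f lam
      = (∫ lam in Ioc (0:ℝ) δ₀, f lam) + ∫ lam in Ioi δ₀, f lam := by
    rw [← Ioc_union_Ioi_eq_Ioi hδ₀0.le]
    exact setIntegral_union (Ioc_disjoint_Ioi le_rfl) measurableSet_Ioi
      (hfint.mono_set (by rw [← Ioc_union_Ioi_eq_Ioi hδ₀0.le]; exact subset_union_left))
      (hfint.mono_set (by rw [← Ioc_union_Ioi_eq_Ioi hδ₀0.le]; exact subset_union_right))
  -- FTC for the complex kernel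
  have hci : ContinuousOn (fun lam : ℝ => (((lam:ℂ) - z) ^ 2)⁻¹) (Icc 0 δ₀) := by
    apply ContinuousOn.inv₀
      ((Complex.continuous_ofReal.sub continuous_const).pow 2).continuousOn
    intro lam hlam
    exact pow_ne_zero 2 (hne lam hlam.1)
  have hFTC : ∫ lam in Ioc (0:ℝ) δ₀, (((lam:ℂ) - z) ^ 2)⁻¹ = (-z)⁻¹ - ((δ₀:ℂ) - z)⁻¹ := by
    have hderiv : ∀ x ∈ uIcc (0:ℝ) δ₀,
        HasDerivAt (fun lam : ℝ => -(((lam:ℂ) - z)⁻¹)) ((((x:ℂ) - z) ^ 2)⁻¹) x := by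
      intro x hx
      rw [uIcc_of_le hδ₀0.le] at hx
      have h1 : HasDerivAt (fun w : ℂ => w - z) 1 (x:ℂ) := (hasDerivAt_id _).sub_const z
      have h2 := ((h1.inv (hne x hx.1)).neg).comp_ofReal
      have e : (((x:ℂ) - z) ^ 2)⁻¹ = -(-1 / ((x:ℂ) - z) ^ 2) := by rw [neg_div, neg_neg, one_div]
      rw [e]; exact h2
    rw [← intervalIntegral.integral_of_le hδ₀0.le,
      intervalIntegral.integral_eq_sub_of_hasDerivAt hderiv
        ((hci.mono (by rw [uIcc_of_le hδ₀0.le])).intervalIntegrable)]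
    simp only [Complex.ofReal_zero, zero_sub]
    ring
  -- FTC for the real kernel
  have hFTCr : ∫ lam in Ioc (0:ℝ) δ₀, ((lam + r) ^ 2)⁻¹ ≤ r⁻¹ := by
    have hderiv : ∀ x ∈ uIcc (0:ℝ) δ₀,
        HasDerivAt (fun lam : ℝ => -(lam + r)⁻¹) (((x + r) ^ 2)⁻¹) x := by
      intro x hx
      rw [uIcc_of_le hδ₀0.le] at hx
      have hxr : x + r ≠ 0 := ne_of_gt (by linarith [hx.1] : (0:ℝ) < x + r)
      have h1 : HasDerivAt (fun y : ℝ => y + r) 1 x := (hasDerivAt_id _).add_const r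
      have h2 := (h1.inv hxr).neg
      have e : ((x + r) ^ 2)⁻¹ = -(-1 / (x + r) ^ 2) := by rw [neg_div, neg_neg, one_div]
      rw [e]; exact h2
    have hcr : ContinuousOn (fun lam : ℝ => ((lam + r) ^ 2)⁻¹) (Icc 0 δ₀) := by
      apply ContinuousOn.inv₀ ((continuous_id.add continuous_const).pow 2).continuousOn
      intro lam hlam
      have : 0 < lam + r := by linarith [hlam.1]
      exact pow_ne_zero 2 this.ne'
    rw [← intervalIntegral.integral_of_le hδ₀0.le,
      intervalIntegral.integral_eq_sub_of_hasDerivAt hderiv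
        ((hcr.mono (by rw [uIcc_of_le hδ₀0.le])).intervalIntegrable)]
    have h1 : 0 < δ₀ + r := by linarith
    have h2 : (0:ℝ) ≤ (δ₀ + r)⁻¹ := by positivity
    simp only [zero_add]
    linarith
  -- integrabilities on Ioc
  have hIoc_int : IntegrableOn (fun lam : ℝ => (((lam:ℂ) - z) ^ 2)⁻¹) (Ioc 0 δ₀) :=
    (hci.integrableOn_compact isCompact_Icc).mono_set Ioc_subset_Icc_self
  have hg1int : IntegrableOn
      (fun lam : ℝ => ((ξ lam - L : ℝ) : ℂ) * (((lam:ℂ) - z) ^ 2)⁻¹) (Ioc 0 δ₀) := by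
    have h1 : IntegrableOn f (Ioc 0 δ₀) := hfint.mono_set Ioc_subset_Ioi_self
    have h2 := hIoc_int.const_mul (L:ℂ)
    have h3 := h1.sub h2
    apply IntegrableOn.congr_fun h3 _ measurableSet_Ioc
    intro lam _
    simp only [Pi.sub_apply, hfdef]
    push_cast
    ring
  have hIocsplit : ∫ lam in Ioc (0:ℝ) δ₀, f lam
      = (∫ lam in Ioc (0:ℝ) δ₀, ((ξ lam - L : ℝ):ℂ) * (((lam:ℂ) - z) ^ 2)⁻¹)
        + (L:ℂ) * ((-z)⁻¹ - ((δ₀:ℂ) - z)⁻¹) := by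
    rw [← hFTC, ← integral_const_mul, ← integral_add hg1int (hIoc_int.const_mul _)]
    apply setIntegral_congr_fun measurableSet_Ioc
    intro lam _
    rw [hfdef]
    push_cast
    ring
  -- the decomposition
  have hδz : ((δ₀:ℂ) - z) ≠ 0 := hne δ₀ hδ₀0.le
  have hexp : -z * (∫ lam in Ioi (0:ℝ), f lam) - (L:ℂ)
      = -z * (∫ lam in Ioc (0:ℝ) δ₀, ((ξ lam - L : ℝ):ℂ) * (((lam:ℂ) - z) ^ 2)⁻¹)
        + (L:ℂ) * z * ((δ₀:ℂ) - z)⁻¹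
        + -z * ∫ lam in Ioi δ₀, f lam := by
    rw [hsplit, hIocsplit]
    have e1 : -z * (-z)⁻¹ = 1 := mul_inv_cancel₀ (neg_ne_zero.2 hz0)
    linear_combination (L:ℂ) * e1
  -- bound A
  have hA : ‖-z * ∫ lam in Ioc (0:ℝ) δ₀, ((ξ lam - L : ℝ):ℂ) * (((lam:ℂ) - z) ^ 2)⁻¹‖
      ≤ ε / 4 := by
    rw [norm_mul, norm_neg, ← hrdef]
    have hbd : IntegrableOn (fun lam : ℝ => (ε * k / 4) * (k * (lam + r) ^ 2)⁻¹) (Ioc 0 δ₀) := by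
      apply Integrable.const_mul
      apply IntegrableOn.mono_set _ Ioc_subset_Icc_self
      apply ContinuousOn.integrableOn_compact isCompact_Icc
      apply ContinuousOn.inv₀
        (continuous_const.mul ((continuous_id.add continuous_const).pow 2)).continuousOn
      intro lam hlam
      have : 0 < lam + r := by linarith [hlam.1]
      exact mul_ne_zero hk0.ne' (pow_ne_zero 2 this.ne')
    have h1 : ‖∫ lam in Ioc (0:ℝ) δ₀, ((ξ lam - L : ℝ):ℂ) * (((lam:ℂ) - z) ^ 2)⁻¹‖
        ≤ ∫ lam in Ioc (0:ℝ) δ₀, (ε * k / 4) * (k * (lam + r) ^ 2)⁻¹ := by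
      apply norm_integral_le_of_norm_le hbd
      filter_upwards [ae_restrict_mem measurableSet_Ioc] with lam hlam
      rw [norm_mul, Complex.norm_real, Real.norm_eq_abs]
      have hξ : |ξ lam - L| ≤ ε * k / 4 := by
        have hd := hδ₁ (mem_Ioi.2 hlam.1)
          (by rw [Real.dist_eq, sub_zero, abs_of_pos hlam.1]
              have := hlam.2
              rw [hδ₀def] at this
              linarith)
        rw [Real.dist_eq] at hd
        exact hd.le
      exact mul_le_mul hξ (hbinv lam hlam.1.le) (norm_nonneg _) (by positivity)
    have h2 : ∫ lam in Ioc (0:ℝ) δ₀, (ε * k / 4) * (k * (lam + r) ^ 2)⁻¹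
        ≤ (ε * k / 4) * (k⁻¹ * r⁻¹) := by
      have : ∀ lam : ℝ, (ε * k / 4) * (k * (lam + r) ^ 2)⁻¹
          = (ε * k / 4 * k⁻¹) * ((lam + r) ^ 2)⁻¹ := by
        intro lam
        rw [mul_inv]
        ring
      simp_rw [this]
      rw [integral_const_mul, mul_assoc]
      apply mul_le_mul_of_nonneg_left _ (by positivity)
      exact mul_le_mul_of_nonneg_left hFTCr (by positivity)
    calc r * ‖∫ lam in Ioc (0:ℝ) δ₀, ((ξ lam - L : ℝ):ℂ) * (((lam:ℂ) - z) ^ 2)⁻¹‖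
        ≤ r * ((ε * k / 4) * (k⁻¹ * r⁻¹)) :=
          mul_le_mul_of_nonneg_left (h1.trans h2) hr0.le
      _ = ε / 4 := by field_simp
  -- bound B
  have hB : ‖(L:ℂ) * z * ((δ₀:ℂ) - z)⁻¹‖ ≤ ε / 4 := by
    rw [norm_mul, norm_mul, Complex.norm_real, Real.norm_eq_abs, norm_inv,
      ← hrdef]
    have h2 : κ * δ₀ ≤ ‖((δ₀:ℂ) - z)‖ := by
      refine le_trans ?_ (hablow δ₀ hδ₀0.le)
      nlinarith [mul_pos hκ0 hr0]
    have h3 : (‖((δ₀:ℂ) - z)‖)⁻¹ ≤ (κ * δ₀)⁻¹ :=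
      inv_anti₀ (by positivity) h2
    calc |L| * r * (‖((δ₀:ℂ) - z)‖)⁻¹ ≤ |L| * r * (κ * δ₀)⁻¹ :=
          mul_le_mul_of_nonneg_left h3 (by positivity)
      _ ≤ ε / 4 := by
          rw [mul_inv_le_iff₀ (by positivity)]
          have h4 : r * (4 * (|L| + 1)) < ε * κ * δ₀ := by
            rw [← lt_div_iff₀ (by positivity)]
            exact hr2
          nlinarith [abs_nonneg L, hr0.le]
  -- bound C
  have hC : ‖-z * ∫ lam in Ioi δ₀, f lam‖ ≤ ε / 4 := by
    rw [norm_mul, norm_neg, ← hrdef]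
    have hbd : IntegrableOn (fun lam : ℝ => (k⁻¹ * C₀) * (|ξ lam| / (1 + lam))) (Ioi δ₀) :=
      (hint.mono_set (Ioi_subset_Ioi hδ₀0.le)).const_mul _
    have h1 : ‖∫ lam in Ioi δ₀, f lam‖
        ≤ ∫ lam in Ioi δ₀, (k⁻¹ * C₀) * (|ξ lam| / (1 + lam)) := by
      apply norm_integral_le_of_norm_le hbd
      filter_upwards [ae_restrict_mem measurableSet_Ioi] with lam hlam
      have hlam0 : 0 < lam := lt_trans hδ₀0 hlam
      have h1lam : (0:ℝ) < 1 + lam := by linarith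
      have hlr : 0 < lam + r := by linarith
      rw [hfdef, norm_mul, Complex.norm_real, Real.norm_eq_abs]
      have hkey : (k * (lam + r) ^ 2)⁻¹ ≤ k⁻¹ * C₀ / (1 + lam) := by
        rw [mul_inv, mul_div_assoc]
        apply mul_le_mul_of_nonneg_left _ (by positivity)
        rw [inv_eq_one_div, div_le_div_iff₀ (pow_pos hlr 2) h1lam, hC₀def,
          div_mul_eq_mul_div, le_div_iff₀ (by positivity : (0:ℝ) < δ₀ ^ 2)]
        have hdl : δ₀ < lam := mem_Ioi.1 hlam
        nlinarith [mul_pos hr0 hlam0, sq_nonneg r,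
          mul_nonneg (sub_nonneg.2 hdl.le) (mul_nonneg hδ₀0.le hlam0.le),
          mul_nonneg (sub_nonneg.2 hdl.le) (by linarith : (0:ℝ) ≤ lam + δ₀),
          mul_nonneg hδ₀0.le hlam0.le]
      calc |ξ lam| * ‖(((lam:ℂ) - z) ^ 2)⁻¹‖ ≤ |ξ lam| * (k⁻¹ * C₀ / (1 + lam)) :=
            mul_le_mul_of_nonneg_left ((hbinv lam hlam0.le).trans hkey) (abs_nonneg _)
        _ = (k⁻¹ * C₀) * (|ξ lam| / (1 + lam)) := by ring
    have h2 : ∫ lam in Ioi δ₀, (k⁻¹ * C₀) * (|ξ lam| / (1 + lam)) ≤ (k⁻¹ * C₀) * I := by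
      rw [integral_const_mul]
      apply mul_le_mul_of_nonneg_left _ (by positivity)
      apply setIntegral_mono_set hint
      · filter_upwards [ae_restrict_mem measurableSet_Ioi] with lam hlam
        have : (0:ℝ) < lam := hlam
        positivity
      · exact HasSubset.Subset.eventuallyLE (Ioi_subset_Ioi hδ₀0.le)
    calc r * ‖∫ lam in Ioi δ₀, f lam‖ ≤ r * ((k⁻¹ * C₀) * I) :=
          mul_le_mul_of_nonneg_left (h1.trans h2) hr0.le
      _ = (r * C₀ * I) * k⁻¹ := by ring
      _ ≤ (ε * k / 4) * k⁻¹ := by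
          apply mul_le_mul_of_nonneg_right _ (by positivity)
          have h4 : r * (4 * (C₀ + 1) * (I + 1)) < ε * k := by
            rw [← lt_div_iff₀ (by positivity)]
            exact hr3
          nlinarith [mul_nonneg hr0.le (by positivity : (0:ℝ) ≤ C₀ + I + 1)]
      _ = ε / 4 := by field_simp
  -- conclusion
  show dist (-z * ∫ lam in Ioi (0:ℝ), f lam) ((L:ℝ):ℂ) < ε
  rw [dist_eq_norm, hexp]
  refine lt_of_le_of_lt (norm_add₃_le) ?_
  linarith [hA, hB, hC]
end

section
/- Let f : [0,∞) → ℂ be continuously differentiable and bounded, and suppose there is C > 0 with |f'(λ)| ≤ C (λ + 1)^{−1} for all λ ≥ 0. Define F(ν) = (ν/(2π)) ∫_{ν²}^∞ (f(λ) − f(0)) λ^{−1} (λ − ν²)^{−1/2} dλ for ν ∈ ℝ (with F(0) = 0). Then both integrals below converge absolutely, F is differentiable on ℝ, and for every ν ∈ ℝ, F'(ν) = (1/π) ∫_{ν²}^∞ f'(λ) (λ − ν²)^{−1/2} dλ. Moreover F is odd and F' is even. -/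
open MeasureTheory Set

/- Auxiliary lemmas for STATEMENT 15. -/

lemma stmt15_cov_image (c : ℝ) : (fun u : ℝ => c + u ^ 2) '' Ioi 0 = Ioi c := by
  ext x
  constructor
  · rintro ⟨u, hu, rfl⟩
    have : 0 < u ^ 2 := pow_pos hu 2
    simpa using this
  · intro hx
    have hx' : 0 < x - c := by simpa [sub_pos] using hx
    refine ⟨Real.sqrt (x - c), Real.sqrt_pos.2 hx', ?_⟩
    have : Real.sqrt (x - c) ^ 2 = x - c := Real.sq_sqrt hx'.le
    simp [this]

lemma stmt15_cov_hderiv (c : ℝ) :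
    ∀ u ∈ Ioi (0:ℝ), HasDerivWithinAt (fun u : ℝ => c + u ^ 2) (2 * u) (Ioi 0) u := by
  intro u _
  simpa using ((hasDerivAt_pow 2 u).const_add c).hasDerivWithinAt

lemma stmt15_cov_inj (c : ℝ) : InjOn (fun u : ℝ => c + u ^ 2) (Ioi 0) := by
  intro a ha b hb h
  simp only [add_right_inj] at h
  nlinarith [mem_Ioi.1 ha, mem_Ioi.1 hb]

lemma stmt15_cov_integral (c : ℝ) (h : ℝ → ℂ) :
    ∫ x in Ioi c, h x = ∫ u in Ioi 0, |2 * u| • h (c + u ^ 2) := by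
  rw [← stmt15_cov_image c]
  exact integral_image_eq_integral_abs_deriv_smul measurableSet_Ioi (stmt15_cov_hderiv c)
    (stmt15_cov_inj c) h

lemma stmt15_cov_integrableOn (c : ℝ) (h : ℝ → ℂ) :
    IntegrableOn h (Ioi c) ↔ IntegrableOn (fun u => |2 * u| • h (c + u ^ 2)) (Ioi 0) := by
  rw [← stmt15_cov_image c]
  exact integrableOn_image_iff_integrableOn_abs_deriv_smul measurableSet_Ioi
    (stmt15_cov_hderiv c) (stmt15_cov_inj c) h

noncomputable def stmt15_P (f : ℝ → ℂ) (ν u : ℝ) : ℂ :=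
  (ν : ℂ) * ((((ν ^ 2 + u ^ 2)⁻¹ : ℝ) : ℂ) * (f (ν ^ 2 + u ^ 2) - f 0))

noncomputable def stmt15_P' (f f' : ℝ → ℂ) (ν u : ℝ) : ℂ :=
  ((1 : ℝ) : ℂ) * ((((ν ^ 2 + u ^ 2)⁻¹ : ℝ) : ℂ) * (f (ν ^ 2 + u ^ 2) - f 0)) +
  (ν : ℂ) * ((((-(2 * ν) / ((ν ^ 2 + u ^ 2) ^ 2) : ℝ)) : ℂ) * (f (ν ^ 2 + u ^ 2) - f 0) +
    (((ν ^ 2 + u ^ 2)⁻¹ : ℝ) : ℂ) * ((2 * ν : ℝ) • f' (ν ^ 2 + u ^ 2)))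

noncomputable def stmt15_H (f : ℝ → ℂ) (ν u : ℝ) : ℂ :=
  (u : ℂ) * ((((ν ^ 2 + u ^ 2)⁻¹ : ℝ) : ℂ) * (f (ν ^ 2 + u ^ 2) - f 0))

noncomputable def stmt15_H' (f f' : ℝ → ℂ) (ν u : ℝ) : ℂ :=
  ((1 : ℝ) : ℂ) * ((((ν ^ 2 + u ^ 2)⁻¹ : ℝ) : ℂ) * (f (ν ^ 2 + u ^ 2) - f 0)) +
  (u : ℂ) * ((((-(2 * u) / ((ν ^ 2 + u ^ 2) ^ 2) : ℝ)) : ℂ) * (f (ν ^ 2 + u ^ 2) - f 0) +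
    (((ν ^ 2 + u ^ 2)⁻¹ : ℝ) : ℂ) * ((2 * u : ℝ) • f' (ν ^ 2 + u ^ 2)))

lemma stmt15_identity (f f' : ℝ → ℂ) (ν u : ℝ) (hu : 0 < u) :
    stmt15_P' f f' ν u + stmt15_H' f f' ν u = ((2 : ℝ) : ℂ) * f' (ν ^ 2 + u ^ 2) := by
  have hl : (ν ^ 2 + u ^ 2 : ℝ) ≠ 0 := by positivity
  have hl' : ((ν : ℂ) ^ 2 + (u : ℂ) ^ 2) ≠ 0 := by
    have := Complex.ofReal_ne_zero.2 hl
    push_cast at this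
    exact this
  simp only [stmt15_P', stmt15_H', Complex.real_smul]
  push_cast
  field_simp
  ring

lemma stmt15_hasDerivAt_P (f f' : ℝ → ℂ)
    (hf : ∀ l : ℝ, 0 < l → HasDerivAt f (f' l) l) (u : ℝ) (hu : 0 < u) (ν : ℝ) :
    HasDerivAt (fun ν => stmt15_P f ν u) (stmt15_P' f f' ν u) ν := by
  have hl0 : (0:ℝ) < ν ^ 2 + u ^ 2 := by positivity
  have hlam : HasDerivAt (fun ν : ℝ => ν ^ 2 + u ^ 2) (2 * ν) ν := by
    simpa using (hasDerivAt_pow 2 ν).add_const (u ^ 2)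
  have hA : HasDerivAt (fun ν : ℝ => ((ν : ℝ) : ℂ)) ((1 : ℝ) : ℂ) ν := by
    simpa using (hasDerivAt_id ν).ofReal_comp
  have hB : HasDerivAt (fun ν : ℝ => (((ν ^ 2 + u ^ 2)⁻¹ : ℝ) : ℂ))
      (((-(2 * ν) / ((ν ^ 2 + u ^ 2) ^ 2) : ℝ)) : ℂ) ν := (hlam.inv hl0.ne').ofReal_comp
  have hCf : HasDerivAt (fun ν : ℝ => f (ν ^ 2 + u ^ 2) - f 0)
      ((2 * ν : ℝ) • f' (ν ^ 2 + u ^ 2)) ν := by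
    simpa using ((hf _ hl0).scomp ν hlam).sub_const (f 0)
  exact hA.mul (hB.mul hCf)

lemma stmt15_hasDerivAt_H (f f' : ℝ → ℂ)
    (hf : ∀ l : ℝ, 0 < l → HasDerivAt f (f' l) l) (ν : ℝ) (u : ℝ) (hu : 0 < u) :
    HasDerivAt (fun u => stmt15_H f ν u) (stmt15_H' f f' ν u) u := by
  have hl0 : (0:ℝ) < ν ^ 2 + u ^ 2 := by positivity
  have hlam : HasDerivAt (fun u : ℝ => ν ^ 2 + u ^ 2) (2 * u) u := by
    simpa using (hasDerivAt_pow 2 u).const_add (ν ^ 2)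
  have hA : HasDerivAt (fun u : ℝ => ((u : ℝ) : ℂ)) ((1 : ℝ) : ℂ) u := by
    simpa using (hasDerivAt_id u).ofReal_comp
  have hB : HasDerivAt (fun u : ℝ => (((ν ^ 2 + u ^ 2)⁻¹ : ℝ) : ℂ))
      (((-(2 * u) / ((ν ^ 2 + u ^ 2) ^ 2) : ℝ)) : ℂ) u := (hlam.inv hl0.ne').ofReal_comp
  have hCf : HasDerivAt (fun u : ℝ => f (ν ^ 2 + u ^ 2) - f 0)
      ((2 * u : ℝ) • f' (ν ^ 2 + u ^ 2)) u := by
    simpa using ((hf _ hl0).scomp u hlam).sub_const (f 0)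
  exact hA.mul (hB.mul hCf)

lemma stmt15_key (M C l u : ℝ) (hM : 0 ≤ M) (hC : 0 ≤ C) (hl0 : 0 < l) (hlu : u ^ 2 ≤ l)
    (a : ℝ) (ha0 : 0 ≤ a) (ha2M : a ≤ 2 * M) (haCl : a ≤ C * l) :
    l⁻¹ * a ≤ (4 * M + 2 * C) * (1 + u ^ 2)⁻¹ := by
  have hu1 : (0:ℝ) < 1 + u ^ 2 := by positivity
  rcases le_total l 1 with hl1 | hl1
  · have h1 : l⁻¹ * a ≤ C := by
      have := mul_le_mul_of_nonneg_left haCl (inv_nonneg.2 hl0.le)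
      calc l⁻¹ * a ≤ l⁻¹ * (C * l) := this
        _ = C := by field_simp
    have h2 : 1 + u ^ 2 ≤ 2 := by nlinarith
    have h3 : (2:ℝ)⁻¹ ≤ (1 + u ^ 2)⁻¹ := inv_anti₀ hu1 h2
    calc l⁻¹ * a ≤ C := h1
      _ ≤ (4 * M + 2 * C) * 2⁻¹ := by nlinarith
      _ ≤ (4 * M + 2 * C) * (1 + u ^ 2)⁻¹ := by nlinarith
  · have h2 : l⁻¹ ≤ 2 * (1 + u ^ 2)⁻¹ := by
      rw [← one_div, ← div_eq_mul_inv, div_le_div_iff₀ hl0 hu1]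
      nlinarith
    calc l⁻¹ * a ≤ (2 * (1 + u ^ 2)⁻¹) * (2 * M) :=
          mul_le_mul h2 ha2M ha0 (by positivity)
      _ ≤ (4 * M + 2 * C) * (1 + u ^ 2)⁻¹ := by nlinarith [inv_nonneg.2 hu1.le]

lemma stmt15_P'_bound (f f' : ℝ → ℂ) (M C : ℝ) (hM : 0 ≤ M) (hC : 0 ≤ C)
    (hp2M : ∀ l : ℝ, 0 ≤ l → ‖f l - f 0‖ ≤ 2 * M)
    (hpC : ∀ l : ℝ, 0 ≤ l → ‖f l - f 0‖ ≤ C * l)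
    (hf'b : ∀ l : ℝ, 0 ≤ l → ‖f' l‖ ≤ C * (l + 1)⁻¹)
    (ν u : ℝ) (hu : 0 < u) :
    ‖stmt15_P' f f' ν u‖ ≤ (12 * M + 8 * C) * (1 + u ^ 2)⁻¹ := by
  set l : ℝ := ν ^ 2 + u ^ 2 with hldef
  have hl0 : (0:ℝ) < l := by positivity
  have hu2 : u ^ 2 ≤ l := by nlinarith [sq_nonneg ν]
  have hν2 : ν ^ 2 ≤ l := by nlinarith [sq_nonneg u]
  have hu1 : (0:ℝ) < 1 + u ^ 2 := by positivity
  set a : ℝ := ‖f l - f 0‖ with hadef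
  set b : ℝ := ‖f' l‖ with hbdef
  have ha0 : 0 ≤ a := norm_nonneg _
  have hb0 : 0 ≤ b := norm_nonneg _
  have hk : l⁻¹ * a ≤ (4 * M + 2 * C) * (1 + u ^ 2)⁻¹ :=
    stmt15_key M C l u hM hC hl0 hu2 a ha0 (hp2M l hl0.le) (hpC l hl0.le)
  have hbb : b ≤ C * (1 + u ^ 2)⁻¹ := by
    refine (hf'b l hl0.le).trans ?_
    exact mul_le_mul_of_nonneg_left (inv_anti₀ hu1 (by nlinarith)) hC
  have hνl : ν ^ 2 * l⁻¹ ≤ 1 := by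
    rw [← div_eq_mul_inv, div_le_one hl0]; exact hν2
  have e1 : ‖((1 : ℝ) : ℂ) * ((((l)⁻¹ : ℝ) : ℂ) * (f l - f 0))‖ = l⁻¹ * a := by
    rw [norm_mul, norm_mul, Complex.norm_real, Complex.norm_real, Real.norm_eq_abs,
      Real.norm_eq_abs, abs_one, one_mul, abs_inv, abs_of_pos hl0]
  have e2 : ‖(((-(2 * ν) / (l ^ 2) : ℝ)) : ℂ) * (f l - f 0)‖ = 2 * |ν| * (l ^ 2)⁻¹ * a := by
    rw [norm_mul, Complex.norm_real, Real.norm_eq_abs, abs_div, abs_neg, abs_mul, abs_two,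
      abs_of_nonneg (sq_nonneg l), div_eq_mul_inv]
  have e3 : ‖(((l)⁻¹ : ℝ) : ℂ) * ((2 * ν : ℝ) • f' l)‖ = l⁻¹ * (2 * |ν| * b) := by
    rw [norm_mul, norm_smul, Complex.norm_real, Real.norm_eq_abs, Real.norm_eq_abs, abs_inv,
      abs_of_pos hl0, abs_mul, abs_two]
  have hsplit : ‖stmt15_P' f f' ν u‖ ≤
      l⁻¹ * a + |ν| * (2 * |ν| * (l ^ 2)⁻¹ * a + l⁻¹ * (2 * |ν| * b)) := by
    simp only [stmt15_P', ← hldef]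
    refine (norm_add_le _ _).trans ?_
    rw [e1]
    refine add_le_add le_rfl ?_
    rw [norm_mul, Complex.norm_real, Real.norm_eq_abs]
    refine mul_le_mul_of_nonneg_left ((norm_add_le _ _).trans ?_) (abs_nonneg ν)
    rw [e2, e3]
  refine hsplit.trans ?_
  have t2 : |ν| * (2 * |ν| * (l ^ 2)⁻¹ * a) ≤ 2 * ((4 * M + 2 * C) * (1 + u ^ 2)⁻¹) := by
    have heq : |ν| * (2 * |ν| * (l ^ 2)⁻¹ * a) = (ν ^ 2 * l⁻¹) * (2 * (l⁻¹ * a)) := by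
      rw [sq l, mul_inv, ← sq_abs ν]; ring
    rw [heq]
    refine (mul_le_of_le_one_left (by positivity) hνl).trans ?_
    linarith
  have t3 : |ν| * (l⁻¹ * (2 * |ν| * b)) ≤ 2 * (C * (1 + u ^ 2)⁻¹) := by
    have heq : |ν| * (l⁻¹ * (2 * |ν| * b)) = (ν ^ 2 * l⁻¹) * (2 * b) := by
      rw [← sq_abs ν]; ring
    rw [heq]
    refine (mul_le_of_le_one_left (by positivity) hνl).trans ?_
    linarith
  calc l⁻¹ * a + |ν| * (2 * |ν| * (l ^ 2)⁻¹ * a + l⁻¹ * (2 * |ν| * b))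
      = l⁻¹ * a + (|ν| * (2 * |ν| * (l ^ 2)⁻¹ * a) + |ν| * (l⁻¹ * (2 * |ν| * b))) := by ring
    _ ≤ (4 * M + 2 * C) * (1 + u ^ 2)⁻¹ + (2 * ((4 * M + 2 * C) * (1 + u ^ 2)⁻¹)
        + 2 * (C * (1 + u ^ 2)⁻¹)) := by linarith
    _ = (12 * M + 8 * C) * (1 + u ^ 2)⁻¹ := by ring

set_option maxHeartbeats 2000000 in
/-- Let `f : [0,∞) → ℂ` be `C¹` and bounded with
`|f'(λ)| ≤ C (λ+1)^{-1}`. Define `F(ν) = (ν/(2π)) ∫_{ν²}^∞ (f(λ) - f(0)) λ^{-1}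
(λ - ν²)^{-1/2} dλ`. Then both integrals converge absolutely, `F` is differentiable on `ℝ`
with `F'(ν) = (1/π) ∫_{ν²}^∞ f'(λ)(λ - ν²)^{-1/2} dλ`, `F` is odd and `F'` is even. -/
theorem stmt_15 (f f' : ℝ → ℂ) (C M : ℝ) (hC : 0 < C)
    (hderiv : ∀ lam ∈ Ici (0 : ℝ), HasDerivWithinAt f (f' lam) (Ici 0) lam)
    (hcont : ContinuousOn f' (Ici 0))
    (hbd : ∀ lam ∈ Ici (0 : ℝ), ‖f lam‖ ≤ M)
    (hf' : ∀ lam ∈ Ici (0 : ℝ), ‖f' lam‖ ≤ C * (lam + 1)⁻¹)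
    (F G : ℝ → ℂ)
    (hF : ∀ ν : ℝ, F ν = ((ν / (2 * Real.pi) : ℝ) : ℂ) *
      ∫ lam in Ioi (ν ^ 2), (((lam * Real.sqrt (lam - ν ^ 2))⁻¹ : ℝ) : ℂ) * (f lam - f 0))
    (hG : ∀ ν : ℝ, G ν = ((Real.pi⁻¹ : ℝ) : ℂ) *
      ∫ lam in Ioi (ν ^ 2), (((Real.sqrt (lam - ν ^ 2))⁻¹ : ℝ) : ℂ) * f' lam) :
    (∀ ν : ℝ, IntegrableOn
        (fun lam : ℝ => (((lam * Real.sqrt (lam - ν ^ 2))⁻¹ : ℝ) : ℂ) * (f lam - f 0))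
        (Ioi (ν ^ 2))) ∧
    (∀ ν : ℝ, IntegrableOn
        (fun lam : ℝ => (((Real.sqrt (lam - ν ^ 2))⁻¹ : ℝ) : ℂ) * f' lam)
        (Ioi (ν ^ 2))) ∧
    (∀ ν : ℝ, HasDerivAt F (G ν) ν) ∧
    (∀ ν : ℝ, F (-ν) = -F ν) ∧
    (∀ ν : ℝ, G (-ν) = G ν) := by
  have hπ : (Real.pi : ℝ) ≠ 0 := Real.pi_ne_zero
  have hf0 : ‖f 0‖ ≤ M := hbd 0 self_mem_Ici
  have hM : 0 ≤ M := (norm_nonneg _).trans hf0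
  have hfat : ∀ l : ℝ, 0 < l → HasDerivAt f (f' l) l := fun l hl =>
    (hderiv l hl.le).hasDerivAt (Ici_mem_nhds hl)
  have hcf : ContinuousOn f (Ici 0) := fun x hx => (hderiv x hx).continuousWithinAt
  have hf'le : ∀ l ∈ Ici (0:ℝ), ‖f' l‖ ≤ C := by
    intro l hl
    refine (hf' l hl).trans ?_
    simp only [mem_Ici] at hl
    have h1 : (l + 1)⁻¹ ≤ 1 := by
      have := inv_anti₀ (by norm_num : (0:ℝ) < 1) (by linarith : (1:ℝ) ≤ l + 1)
      simpa using this
    nlinarith [hC.le]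
  have hp2M : ∀ l : ℝ, 0 ≤ l → ‖f l - f 0‖ ≤ 2 * M := by
    intro l hl
    have := hbd l hl
    calc ‖f l - f 0‖ ≤ ‖f l‖ + ‖f 0‖ := norm_sub_le _ _
      _ ≤ 2 * M := by linarith
  have hpC : ∀ l : ℝ, 0 ≤ l → ‖f l - f 0‖ ≤ C * l := by
    intro l hl
    have := (convex_Ici (0:ℝ)).norm_image_sub_le_of_norm_hasDerivWithin_le hderiv hf'le
      self_mem_Ici hl
    simpa [Real.norm_eq_abs, abs_of_nonneg hl] using this
  have hf'b : ∀ l : ℝ, 0 ≤ l → ‖f' l‖ ≤ C * (l + 1)⁻¹ := fun l hl => hf' l hl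
  -- integrable majorants
  have bint : ∀ K : ℝ, IntegrableOn (fun u : ℝ => K * (1 + u ^ 2)⁻¹) (Ioi 0) :=
    fun K => (integrable_inv_one_add_sq.const_mul K).integrableOn
  -- continuity facts in the u variable
  have contmap : ∀ ν : ℝ, MapsTo (fun u : ℝ => ν ^ 2 + u ^ 2) (Ioi 0) (Ici 0) := by
    intro ν u hu
    have : (0:ℝ) < u := hu
    simp only [mem_Ici]
    positivity
  have contlam : ∀ ν : ℝ, Continuous (fun u : ℝ => ν ^ 2 + u ^ 2) := by
    intro ν; continuity
  have hlne : ∀ ν : ℝ, ∀ u ∈ Ioi (0:ℝ), (ν ^ 2 + u ^ 2) ≠ 0 := by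
    intro ν u hu
    have : (0:ℝ) < u := hu
    positivity
  have continv : ∀ ν : ℝ, ContinuousOn (fun u : ℝ => (((ν ^ 2 + u ^ 2)⁻¹ : ℝ) : ℂ)) (Ioi 0) := by
    intro ν
    exact Complex.continuous_ofReal.comp_continuousOn
      (((contlam ν).continuousOn).inv₀ (hlne ν))
  have contf : ∀ ν : ℝ, ContinuousOn (fun u : ℝ => f (ν ^ 2 + u ^ 2)) (Ioi 0) :=
    fun ν => hcf.comp (contlam ν).continuousOn (contmap ν)
  have contf'c : ∀ ν : ℝ, ContinuousOn (fun u : ℝ => f' (ν ^ 2 + u ^ 2)) (Ioi 0) :=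
    fun ν => hcont.comp (contlam ν).continuousOn (contmap ν)
  have contR : ∀ ν : ℝ, ContinuousOn
      (fun u : ℝ => (((ν ^ 2 + u ^ 2)⁻¹ : ℝ) : ℂ) * (f (ν ^ 2 + u ^ 2) - f 0)) (Ioi 0) :=
    fun ν => (continv ν).mul ((contf ν).sub continuousOn_const)
  -- integrability of the basic substituted integrands
  have intR : ∀ ν : ℝ, IntegrableOn
      (fun u : ℝ => (((ν ^ 2 + u ^ 2)⁻¹ : ℝ) : ℂ) * (f (ν ^ 2 + u ^ 2) - f 0)) (Ioi 0) := by
    intro ν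
    refine Integrable.mono' (bint (4 * M + 2 * C))
      ((contR ν).aestronglyMeasurable measurableSet_Ioi) ?_
    refine (ae_restrict_iff' measurableSet_Ioi).2 (ae_of_all _ fun u hu => ?_)
    have hu0 : (0:ℝ) < u := hu
    have hl0 : (0:ℝ) < ν ^ 2 + u ^ 2 := by positivity
    have hnorm : ‖(((ν ^ 2 + u ^ 2)⁻¹ : ℝ) : ℂ) * (f (ν ^ 2 + u ^ 2) - f 0)‖
        = (ν ^ 2 + u ^ 2)⁻¹ * ‖f (ν ^ 2 + u ^ 2) - f 0‖ := by
      rw [norm_mul, Complex.norm_real, Real.norm_eq_abs, abs_inv, abs_of_pos hl0]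
    rw [hnorm]
    exact stmt15_key M C _ u hM hC.le hl0 (by nlinarith [sq_nonneg ν]) _ (norm_nonneg _)
      (hp2M _ hl0.le) (hpC _ hl0.le)
  have intf'2 : ∀ ν : ℝ, IntegrableOn
      (fun u : ℝ => ((2:ℝ):ℂ) * f' (ν ^ 2 + u ^ 2)) (Ioi 0) := by
    intro ν
    refine Integrable.mono' (bint (2 * C))
      ((continuousOn_const.mul (contf'c ν)).aestronglyMeasurable measurableSet_Ioi) ?_
    refine (ae_restrict_iff' measurableSet_Ioi).2 (ae_of_all _ fun u hu => ?_)
    have hu0 : (0:ℝ) < u := hu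
    have hl0 : (0:ℝ) < ν ^ 2 + u ^ 2 := by positivity
    have hu1 : (0:ℝ) < 1 + u ^ 2 := by positivity
    have hnorm : ‖((2:ℝ):ℂ) * f' (ν ^ 2 + u ^ 2)‖ = 2 * ‖f' (ν ^ 2 + u ^ 2)‖ := by
      rw [norm_mul, Complex.norm_real, Real.norm_eq_abs, abs_two]
    rw [hnorm]
    have h1 : ‖f' (ν ^ 2 + u ^ 2)‖ ≤ C * (1 + u ^ 2)⁻¹ := by
      refine (hf'b _ hl0.le).trans ?_
      exact mul_le_mul_of_nonneg_left (inv_anti₀ hu1 (by nlinarith [sq_nonneg ν])) hC.le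
    linarith
  -- Part 1
  have part1 : ∀ ν : ℝ, IntegrableOn
      (fun lam : ℝ => (((lam * Real.sqrt (lam - ν ^ 2))⁻¹ : ℝ) : ℂ) * (f lam - f 0))
      (Ioi (ν ^ 2)) := by
    intro ν
    rw [stmt15_cov_integrableOn]
    refine IntegrableOn.congr_fun ((intR ν).const_mul ((2:ℝ):ℂ)) ?_ measurableSet_Ioi
    intro u hu
    have hu0 : (0:ℝ) < u := hu
    have hl0 : (0:ℝ) < ν ^ 2 + u ^ 2 := by positivity
    have hsq : Real.sqrt (ν ^ 2 + u ^ 2 - ν ^ 2) = u := by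
      rw [show ν ^ 2 + u ^ 2 - ν ^ 2 = u ^ 2 by ring, Real.sqrt_sq hu0.le]
    have hcoef : (2 * u * ((ν ^ 2 + u ^ 2) * u)⁻¹ : ℝ) = 2 * (ν ^ 2 + u ^ 2)⁻¹ := by
      field_simp
    simp only [hsq, Complex.real_smul]
    rw [abs_of_pos (by positivity : (0:ℝ) < 2 * u)]
    rw [show ((2:ℝ):ℂ) * ((((ν ^ 2 + u ^ 2)⁻¹ : ℝ) : ℂ) * (f (ν ^ 2 + u ^ 2) - f 0))
        = ((2 * (ν ^ 2 + u ^ 2)⁻¹ : ℝ) : ℂ) * (f (ν ^ 2 + u ^ 2) - f 0) by push_cast; ring]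
    rw [show ((2 * u : ℝ) : ℂ) * (((((ν ^ 2 + u ^ 2) * u)⁻¹ : ℝ) : ℂ)
          * (f (ν ^ 2 + u ^ 2) - f 0))
        = ((2 * u * ((ν ^ 2 + u ^ 2) * u)⁻¹ : ℝ) : ℂ) * (f (ν ^ 2 + u ^ 2) - f 0) by
      push_cast; ring]
    rw [hcoef]
  -- Part 2
  have part2 : ∀ ν : ℝ, IntegrableOn
      (fun lam : ℝ => (((Real.sqrt (lam - ν ^ 2))⁻¹ : ℝ) : ℂ) * f' lam) (Ioi (ν ^ 2)) := by
    intro ν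
    rw [stmt15_cov_integrableOn]
    refine IntegrableOn.congr_fun (intf'2 ν) ?_ measurableSet_Ioi
    intro u hu
    have hu0 : (0:ℝ) < u := hu
    have hsq : Real.sqrt (ν ^ 2 + u ^ 2 - ν ^ 2) = u := by
      rw [show ν ^ 2 + u ^ 2 - ν ^ 2 = u ^ 2 by ring, Real.sqrt_sq hu0.le]
    have hcoef : (2 * u * u⁻¹ : ℝ) = 2 := by field_simp
    simp only [hsq, Complex.real_smul]
    rw [abs_of_pos (by positivity : (0:ℝ) < 2 * u)]
    rw [show ((2 * u : ℝ) : ℂ) * (((u⁻¹ : ℝ) : ℂ) * f' (ν ^ 2 + u ^ 2))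
        = ((2 * u * u⁻¹ : ℝ) : ℂ) * f' (ν ^ 2 + u ^ 2) by push_cast; ring]
    rw [hcoef]
  -- differentiation under the integral
  have domin : ∀ ν₀ : ℝ, IntegrableOn (stmt15_P' f f' ν₀) (Ioi 0) ∧
      HasDerivAt (fun ν => ∫ u in Ioi 0, stmt15_P f ν u)
        (∫ u in Ioi 0, stmt15_P' f f' ν₀ u) ν₀ := by
    intro ν₀
    have contP' : ContinuousOn (stmt15_P' f f' ν₀) (Ioi 0) := by
      apply ContinuousOn.add
      · exact continuousOn_const.mul (contR ν₀)
      · refine continuousOn_const.mul (ContinuousOn.add ?_ ?_)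
        · refine ContinuousOn.mul ?_ ((contf ν₀).sub continuousOn_const)
          exact Complex.continuous_ofReal.comp_continuousOn
            (continuousOn_const.div (((contlam ν₀).pow 2).continuousOn)
              (fun u hu => pow_ne_zero 2 (hlne ν₀ u hu)))
        · exact (continv ν₀).mul ((contf'c ν₀).const_smul (2 * ν₀))
    have h1 : ∀ᶠ ν in nhds ν₀, AEStronglyMeasurable (fun u => stmt15_P f ν u)
        (volume.restrict (Ioi 0)) := by
      refine Filter.Eventually.of_forall fun ν => ?_
      have : ContinuousOn (fun u => stmt15_P f ν u) (Ioi 0) := by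
        simp only [stmt15_P]
        exact continuousOn_const.mul (contR ν)
      exact this.aestronglyMeasurable measurableSet_Ioi
    have h2 : Integrable (fun u => stmt15_P f ν₀ u) (volume.restrict (Ioi 0)) := by
      have := (intR ν₀).const_mul ((ν₀ : ℝ) : ℂ)
      exact this
    have h3 : AEStronglyMeasurable (fun u => stmt15_P' f f' ν₀ u) (volume.restrict (Ioi 0)) :=
      contP'.aestronglyMeasurable measurableSet_Ioi
    have h4 : ∀ᵐ u ∂(volume.restrict (Ioi 0)), ∀ ν ∈ Metric.ball ν₀ 1,
        ‖stmt15_P' f f' ν u‖ ≤ (12 * M + 8 * C) * (1 + u ^ 2)⁻¹ := by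
      refine (ae_restrict_iff' measurableSet_Ioi).2 (ae_of_all _ fun u hu => ?_)
      intro ν _
      exact stmt15_P'_bound f f' M C hM hC.le hp2M hpC hf'b ν u hu
    have h5 : Integrable (fun u : ℝ => (12 * M + 8 * C) * (1 + u ^ 2)⁻¹)
        (volume.restrict (Ioi 0)) := bint (12 * M + 8 * C)
    have h6 : ∀ᵐ u ∂(volume.restrict (Ioi 0)), ∀ ν ∈ Metric.ball ν₀ 1,
        HasDerivAt (fun ν => stmt15_P f ν u) (stmt15_P' f f' ν u) ν := by
      refine (ae_restrict_iff' measurableSet_Ioi).2 (ae_of_all _ fun u hu => ?_)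
      intro ν _
      exact stmt15_hasDerivAt_P f f' hfat u hu ν
    exact hasDerivAt_integral_of_dominated_loc_of_deriv_le (Metric.ball_mem_nhds ν₀ one_pos) h1 h2 h3 h4 h5 h6
  -- the integral of P' equals the integral of 2 f'(ν²+u²), via FTC on H
  have Jeq : ∀ ν : ℝ, ∫ u in Ioi 0, stmt15_P' f f' ν u
      = ∫ u in Ioi 0, ((2:ℝ):ℂ) * f' (ν ^ 2 + u ^ 2) := by
    intro ν
    have hH0 : stmt15_H f ν 0 = 0 := by simp [stmt15_H]
    have hHnorm : ∀ u : ℝ, 0 < u →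
        ‖stmt15_H f ν u‖ = u * ((ν ^ 2 + u ^ 2)⁻¹ * ‖f (ν ^ 2 + u ^ 2) - f 0‖) := by
      intro u hu
      have hl0 : (0:ℝ) < ν ^ 2 + u ^ 2 := by positivity
      rw [stmt15_H, norm_mul, norm_mul, Complex.norm_real, Complex.norm_real,
        Real.norm_eq_abs, Real.norm_eq_abs, abs_of_pos hu, abs_inv, abs_of_pos hl0]
    have hHcont : ContinuousWithinAt (stmt15_H f ν) (Ici 0) 0 := by
      unfold ContinuousWithinAt
      rw [hH0]
      apply squeeze_zero_norm' (a := fun u : ℝ => C * u)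
      · filter_upwards [self_mem_nhdsWithin] with u hu
        rcases eq_or_lt_of_le (mem_Ici.1 hu) with h | h
        · rw [← h]
          simp [stmt15_H]
        · have hl0 : (0:ℝ) < ν ^ 2 + u ^ 2 := by positivity
          rw [hHnorm u h]
          have : (ν ^ 2 + u ^ 2)⁻¹ * ‖f (ν ^ 2 + u ^ 2) - f 0‖ ≤ C := by
            have := mul_le_mul_of_nonneg_left (hpC _ hl0.le) (inv_nonneg.2 hl0.le)
            calc (ν ^ 2 + u ^ 2)⁻¹ * ‖f (ν ^ 2 + u ^ 2) - f 0‖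
                ≤ (ν ^ 2 + u ^ 2)⁻¹ * (C * (ν ^ 2 + u ^ 2)) := this
              _ = C := by field_simp
          calc u * ((ν ^ 2 + u ^ 2)⁻¹ * ‖f (ν ^ 2 + u ^ 2) - f 0‖) ≤ u * C :=
                mul_le_mul_of_nonneg_left this h.le
            _ = C * u := by ring
      · have : Filter.Tendsto (fun u : ℝ => C * u) (nhds 0) (nhds (C * 0)) :=
          (continuous_const.mul continuous_id).tendsto 0
        simpa using this.mono_left nhdsWithin_le_nhds
    have hHtend : Filter.Tendsto (stmt15_H f ν) Filter.atTop (nhds 0) := by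
      apply squeeze_zero_norm' (a := fun u : ℝ => 2 * M * u⁻¹)
      · filter_upwards [Filter.eventually_gt_atTop 0] with u hu
        have hl0 : (0:ℝ) < ν ^ 2 + u ^ 2 := by positivity
        have hu2 : u ^ 2 ≤ ν ^ 2 + u ^ 2 := by nlinarith [sq_nonneg ν]
        rw [hHnorm u hu]
        have h1 : (ν ^ 2 + u ^ 2)⁻¹ ≤ (u ^ 2)⁻¹ := inv_anti₀ (by positivity) hu2
        calc u * ((ν ^ 2 + u ^ 2)⁻¹ * ‖f (ν ^ 2 + u ^ 2) - f 0‖)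
            ≤ u * ((u ^ 2)⁻¹ * (2 * M)) := by
              refine mul_le_mul_of_nonneg_left ?_ hu.le
              exact mul_le_mul h1 (hp2M _ hl0.le) (norm_nonneg _) (by positivity)
          _ = 2 * M * u⁻¹ := by field_simp
      · have : Filter.Tendsto (fun u : ℝ => 2 * M * u⁻¹) Filter.atTop (nhds (2 * M * 0)) :=
          tendsto_inv_atTop_zero.const_mul (2 * M)
        simpa using this
    have intH' : IntegrableOn (stmt15_H' f f' ν) (Ioi 0) := by
      refine IntegrableOn.congr_fun ((intf'2 ν).sub (domin ν).1) (fun u hu => ?_)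
        measurableSet_Ioi
      simp only [Pi.sub_apply]
      exact (eq_sub_of_add_eq' (stmt15_identity f f' ν u hu)).symm
    have hivd : ∫ u in Ioi 0, stmt15_H' f f' ν u = 0 - stmt15_H f ν 0 :=
      integral_Ioi_of_hasDerivAt_of_tendsto hHcont
        (fun u hu => stmt15_hasDerivAt_H f f' hfat ν u hu) intH' hHtend
    have hInt0 : ∫ u in Ioi 0, stmt15_H' f f' ν u = 0 := by rw [hivd, hH0, sub_zero]
    have step : ∫ u in Ioi 0, stmt15_P' f f' ν u
        = ∫ u in Ioi 0, (((2:ℝ):ℂ) * f' (ν ^ 2 + u ^ 2) - stmt15_H' f f' ν u) := by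
      refine setIntegral_congr_fun measurableSet_Ioi ?_
      intro u hu
      exact eq_sub_of_add_eq (stmt15_identity f f' ν u hu)
    rw [step, integral_sub (intf'2 ν) intH', hInt0, sub_zero]
  -- F in terms of the substituted integral
  have Feq : ∀ ν : ℝ, F ν = ((Real.pi⁻¹ : ℝ) : ℂ) * ∫ u in Ioi 0, stmt15_P f ν u := by
    intro ν
    rw [hF ν, stmt15_cov_integral]
    have e : ∀ u ∈ Ioi (0:ℝ),
        |2 * u| • ((fun lam : ℝ => (((lam * Real.sqrt (lam - ν ^ 2))⁻¹ : ℝ) : ℂ)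
          * (f lam - f 0)) (ν ^ 2 + u ^ 2))
        = ((2:ℝ):ℂ) * ((((ν ^ 2 + u ^ 2)⁻¹ : ℝ) : ℂ) * (f (ν ^ 2 + u ^ 2) - f 0)) := by
      intro u hu
      have hu0 : (0:ℝ) < u := hu
      have hl0 : (0:ℝ) < ν ^ 2 + u ^ 2 := by positivity
      have hsq : Real.sqrt (ν ^ 2 + u ^ 2 - ν ^ 2) = u := by
        rw [show ν ^ 2 + u ^ 2 - ν ^ 2 = u ^ 2 by ring, Real.sqrt_sq hu0.le]
      have hcoef : (2 * u * ((ν ^ 2 + u ^ 2) * u)⁻¹ : ℝ) = 2 * (ν ^ 2 + u ^ 2)⁻¹ := by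
        field_simp
      simp only [hsq, Complex.real_smul]
      rw [abs_of_pos (by positivity : (0:ℝ) < 2 * u)]
      rw [show ((2 * u : ℝ) : ℂ) * (((((ν ^ 2 + u ^ 2) * u)⁻¹ : ℝ) : ℂ)
            * (f (ν ^ 2 + u ^ 2) - f 0))
          = ((2 * u * ((ν ^ 2 + u ^ 2) * u)⁻¹ : ℝ) : ℂ) * (f (ν ^ 2 + u ^ 2) - f 0) by
        push_cast; ring]
      rw [show ((2:ℝ):ℂ) * ((((ν ^ 2 + u ^ 2)⁻¹ : ℝ) : ℂ) * (f (ν ^ 2 + u ^ 2) - f 0))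
          = ((2 * (ν ^ 2 + u ^ 2)⁻¹ : ℝ) : ℂ) * (f (ν ^ 2 + u ^ 2) - f 0) by push_cast; ring]
      rw [hcoef]
    rw [setIntegral_congr_fun measurableSet_Ioi e, MeasureTheory.integral_const_mul]
    have hP : ∫ u in Ioi 0, stmt15_P f ν u
        = (ν : ℂ) * ∫ u in Ioi 0,
            (((ν ^ 2 + u ^ 2)⁻¹ : ℝ) : ℂ) * (f (ν ^ 2 + u ^ 2) - f 0) := by
      simp only [stmt15_P]
      rw [MeasureTheory.integral_const_mul]
    rw [hP]
    push_cast
    have h2π : ((Real.pi : ℂ)) ≠ 0 := Complex.ofReal_ne_zero.2 hπ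
    field_simp
  -- G in terms of the substituted integral
  have Geq : ∀ ν : ℝ, G ν = ((Real.pi⁻¹ : ℝ) : ℂ)
      * ∫ u in Ioi 0, ((2:ℝ):ℂ) * f' (ν ^ 2 + u ^ 2) := by
    intro ν
    rw [hG ν, stmt15_cov_integral]
    have e : ∀ u ∈ Ioi (0:ℝ),
        |2 * u| • ((fun lam : ℝ => (((Real.sqrt (lam - ν ^ 2))⁻¹ : ℝ) : ℂ) * f' lam)
          (ν ^ 2 + u ^ 2))
        = ((2:ℝ):ℂ) * f' (ν ^ 2 + u ^ 2) := by
      intro u hu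
      have hu0 : (0:ℝ) < u := hu
      have hsq : Real.sqrt (ν ^ 2 + u ^ 2 - ν ^ 2) = u := by
        rw [show ν ^ 2 + u ^ 2 - ν ^ 2 = u ^ 2 by ring, Real.sqrt_sq hu0.le]
      have hcoef : (2 * u * u⁻¹ : ℝ) = 2 := by field_simp
      simp only [hsq, Complex.real_smul]
      rw [abs_of_pos (by positivity : (0:ℝ) < 2 * u)]
      rw [show ((2 * u : ℝ) : ℂ) * (((u⁻¹ : ℝ) : ℂ) * f' (ν ^ 2 + u ^ 2))
          = ((2 * u * u⁻¹ : ℝ) : ℂ) * f' (ν ^ 2 + u ^ 2) by push_cast; ring]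
      rw [hcoef]
    rw [setIntegral_congr_fun measurableSet_Ioi e]
  -- Part 3 : the derivative
  have part3 : ∀ ν : ℝ, HasDerivAt F (G ν) ν := by
    intro ν
    have hFfun : F = fun x : ℝ => ((Real.pi⁻¹ : ℝ) : ℂ) * ∫ u in Ioi 0, stmt15_P f x u :=
      funext Feq
    have h1 := ((domin ν).2).const_mul ((Real.pi⁻¹ : ℝ) : ℂ)
    rw [Jeq ν] at h1
    rw [hFfun, Geq ν]
    exact h1
  refine ⟨part1, part2, part3, ?_, ?_⟩
  · intro ν
    rw [hF (-ν), hF ν]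
    simp only [neg_sq]
    push_cast
    ring
  · intro ν
    rw [hG (-ν), hG ν]
    simp only [neg_sq]
end

section
/- Let f : [0,∞) → ℂ be continuously differentiable with lim_{λ→∞} f(λ) = 0, and suppose there are C > 0 and ε > 0 with |f'(λ)| ≤ C (λ + 1)^{−1−ε} for all λ ≥ 0. Define F(ν) = (ν/(2π)) ∫_{ν²}^∞ (f(λ) − f(0)) λ^{−1} (λ − ν²)^{−1/2} dλ for ν ∈ ℝ. Then F is continuous and bounded on ℝ, lim_{ν→+∞} F(ν) = −f(0)/2, and lim_{ν→−∞} F(ν) = f(0)/2. -/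
open MeasureTheory Filter Set

lemma aux_integrableOn_target {g : ℝ → ℂ} {M : ℝ} (hgc : ContinuousOn g (Ici 0))
    (hgb : ∀ lam ∈ Ici (0:ℝ), ‖g lam‖ ≤ M) {ν : ℝ} (hν : ν ≠ 0) :
    IntegrableOn (fun lam => (((lam * Real.sqrt (lam - ν ^ 2))⁻¹ : ℝ) : ℂ) * g lam)
      (Ici (ν ^ 2)) := by
  have hν2 : (0:ℝ) < ν ^ 2 := by positivity
  set G : ℝ → ℂ := fun lam => (((lam * Real.sqrt (lam - ν ^ 2))⁻¹ : ℝ) : ℂ) * g lam with hG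
  have hGcont : ContinuousOn G (Ioi (ν ^ 2)) := by
    apply ContinuousOn.mul
    · apply Continuous.comp_continuousOn Complex.continuous_ofReal
      apply ContinuousOn.inv₀
      · exact (continuousOn_id.mul ((continuousOn_id.sub continuousOn_const).sqrt))
      · intro lam hlam
        have h1 : (0:ℝ) < lam := lt_trans hν2 hlam
        have h2 : (0:ℝ) < Real.sqrt (lam - ν ^ 2) := Real.sqrt_pos.mpr (by simpa using hlam)
        positivity
    · exact hgc.mono (fun x hx => le_of_lt (lt_trans hν2 hx))
  rw [integrableOn_Ici_iff_integrableOn_Ioi,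
    ← Ioc_union_Ioi_eq_Ioi (by linarith : ν ^ 2 ≤ ν ^ 2 + 1)]
  apply IntegrableOn.union
  · -- near the singularity
    have hb : IntegrableOn (fun lam : ℝ => (M / ν ^ 2) * ((lam - ν ^ 2) ^ (-(1:ℝ)/2)))
        (Ioc (ν ^ 2) (ν ^ 2 + 1)) := by
      have i0 : IntervalIntegrable (fun x : ℝ => x ^ (-(1:ℝ)/2)) volume 0 1 :=
        intervalIntegral.intervalIntegrable_rpow' (by norm_num)
      have i1 := i0.comp_sub_right (ν ^ 2)
      rw [zero_add] at i1
      have i2 : IntegrableOn (fun x : ℝ => (x - ν ^ 2) ^ (-(1:ℝ)/2)) (Ioc (ν ^ 2) (ν ^ 2 + 1)) := by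
        have := (intervalIntegrable_iff_integrableOn_Ioc_of_le (by linarith : ν ^ 2 ≤ 1 + ν ^ 2)).mp i1
        simpa [add_comm] using this
      exact i2.const_mul _
    apply Integrable.mono' hb
    · exact (hGcont.mono Ioc_subset_Ioi_self).aestronglyMeasurable measurableSet_Ioc
    · rw [ae_restrict_iff' measurableSet_Ioc]
      filter_upwards with lam hlam
      obtain ⟨h1, h2⟩ := hlam
      have hl0 : (0:ℝ) < lam := lt_trans hν2 h1
      have hs : (0:ℝ) < Real.sqrt (lam - ν ^ 2) := Real.sqrt_pos.mpr (by linarith)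
      have hM : 0 ≤ M := le_trans (norm_nonneg _) (hgb 0 (by norm_num))
      calc ‖G lam‖ = (lam * Real.sqrt (lam - ν ^ 2))⁻¹ * ‖g lam‖ := by
            rw [hG, norm_mul, Complex.norm_real, Real.norm_eq_abs,
              abs_of_pos (by positivity)]
        _ ≤ (ν ^ 2 * Real.sqrt (lam - ν ^ 2))⁻¹ * M := by
            apply mul_le_mul _ (hgb lam (le_of_lt hl0)) (norm_nonneg _) (by positivity)
            exact inv_anti₀ (by positivity) (by nlinarith)
        _ = (M / ν ^ 2) * (Real.sqrt (lam - ν ^ 2))⁻¹ := by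
            rw [mul_inv]; ring
        _ = (M / ν ^ 2) * ((lam - ν ^ 2) ^ (-(1:ℝ)/2)) := by
            rw [Real.sqrt_eq_rpow, ← Real.rpow_neg (by linarith)]
            norm_num
  · -- at infinity
    have hb : IntegrableOn (fun lam : ℝ => (M * Real.sqrt (ν ^ 2 + 1)) * lam ^ (-(3:ℝ)/2))
        (Ioi (ν ^ 2 + 1)) := by
      exact (integrableOn_Ioi_rpow_of_lt (by norm_num) (by positivity)).const_mul _
    apply Integrable.mono' hb
    · exact (hGcont.mono (Ioi_subset_Ioi (by linarith))).aestronglyMeasurable measurableSet_Ioi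
    · rw [ae_restrict_iff' measurableSet_Ioi]
      filter_upwards with lam hlam
      rw [mem_Ioi] at hlam
      have hl0 : (0:ℝ) < lam := by linarith
      have hsub : (0:ℝ) < lam - ν ^ 2 := by linarith
      have hs : (0:ℝ) < Real.sqrt (lam - ν ^ 2) := Real.sqrt_pos.mpr hsub
      have hM : 0 ≤ M := le_trans (norm_nonneg _) (hgb 0 (by norm_num))
      have key : lam ≤ (ν ^ 2 + 1) * (lam - ν ^ 2) := by nlinarith [sq_nonneg ν]
      have hsq : Real.sqrt lam ≤ Real.sqrt (ν ^ 2 + 1) * Real.sqrt (lam - ν ^ 2) := by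
        rw [← Real.sqrt_mul (by positivity)]
        exact Real.sqrt_le_sqrt key
      have h32 : lam ^ ((3:ℝ)/2) = lam * Real.sqrt lam := by
        rw [Real.sqrt_eq_rpow, ← Real.rpow_one_add' (le_of_lt hl0) (by norm_num)]
        norm_num
      have hchain : lam ^ ((3:ℝ)/2) / Real.sqrt (ν ^ 2 + 1) ≤ lam * Real.sqrt (lam - ν ^ 2) := by
        rw [div_le_iff₀ (by positivity), h32]
        calc lam * Real.sqrt lam ≤ lam * (Real.sqrt (ν ^ 2 + 1) * Real.sqrt (lam - ν ^ 2)) := by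
              exact mul_le_mul_of_nonneg_left hsq (le_of_lt hl0)
          _ = lam * Real.sqrt (lam - ν ^ 2) * Real.sqrt (ν ^ 2 + 1) := by ring
      calc ‖G lam‖ = (lam * Real.sqrt (lam - ν ^ 2))⁻¹ * ‖g lam‖ := by
            rw [hG, norm_mul, Complex.norm_real, Real.norm_eq_abs,
              abs_of_pos (by positivity)]
        _ ≤ (lam * Real.sqrt (lam - ν ^ 2))⁻¹ * M := by
            exact mul_le_mul_of_nonneg_left (hgb lam (le_of_lt hl0)) (by positivity)
        _ ≤ (lam ^ ((3:ℝ)/2) / Real.sqrt (ν ^ 2 + 1))⁻¹ * M := by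
            apply mul_le_mul_of_nonneg_right _ hM
            exact inv_anti₀ (by positivity) hchain
        _ = (M * Real.sqrt (ν ^ 2 + 1)) * lam ^ (-(3:ℝ)/2) := by
            rw [neg_div, Real.rpow_neg (le_of_lt hl0)]
            have h1 : (0:ℝ) < lam ^ ((3:ℝ)/2) := by positivity
            have h2 : (0:ℝ) < Real.sqrt (ν ^ 2 + 1) := by positivity
            field_simp
lemma aux_Gcont {g : ℝ → ℂ} (hgc : ContinuousOn g (Ici 0)) {ν : ℝ} (hν : ν ≠ 0) :
    ContinuousOn (fun lam => (((lam * Real.sqrt (lam - ν ^ 2))⁻¹ : ℝ) : ℂ) * g lam)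
      (Ioi (ν ^ 2)) := by
  have hν2 : (0:ℝ) < ν ^ 2 := by positivity
  apply ContinuousOn.mul
  · apply Continuous.comp_continuousOn Complex.continuous_ofReal
    apply ContinuousOn.inv₀
    · exact (continuousOn_id.mul ((continuousOn_id.sub continuousOn_const).sqrt))
    · intro lam hlam
      have h1 : (0:ℝ) < lam := lt_trans hν2 hlam
      have h2 : (0:ℝ) < Real.sqrt (lam - ν ^ 2) := Real.sqrt_pos.mpr (by simpa using hlam)
      positivity
  · exact hgc.mono (fun x hx => le_of_lt (lt_trans hν2 hx))

lemma aux_subst {g : ℝ → ℂ} {M : ℝ} (hgc : ContinuousOn g (Ici 0))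
    (hgb : ∀ lam ∈ Ici (0:ℝ), ‖g lam‖ ≤ M) {ν : ℝ} (hν : ν ≠ 0)
    (htarget : IntegrableOn (fun lam => (((lam * Real.sqrt (lam - ν ^ 2))⁻¹ : ℝ) : ℂ) * g lam)
      (Ici (ν ^ 2))) :
    (∫ lam in Ioi (ν ^ 2), (((lam * Real.sqrt (lam - ν ^ 2))⁻¹ : ℝ) : ℂ) * g lam)
      = ((2 / |ν| : ℝ) : ℂ) * ∫ x in Ioi (0:ℝ),
          (((1 + x ^ 2)⁻¹ : ℝ) : ℂ) * g (ν ^ 2 * (1 + x ^ 2)) := by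
  have hν2 : (0:ℝ) < ν ^ 2 := by positivity
  have hνa : (0:ℝ) < |ν| := abs_pos.mpr hν
  have hM : 0 ≤ M := le_trans (norm_nonneg _) (hgb 0 (by norm_num))
  set G : ℝ → ℂ := fun lam => (((lam * Real.sqrt (lam - ν ^ 2))⁻¹ : ℝ) : ℂ) * g lam with hGdef
  set φ : ℝ → ℝ := fun x => ν ^ 2 * (1 + x ^ 2) with hφdef
  set φ' : ℝ → ℝ := fun x => ν ^ 2 * (2 * x) with hφ'def
  have hφcont : Continuous φ := by fun_prop
  have hφtop : Tendsto φ atTop atTop := by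
    apply Tendsto.const_mul_atTop hν2
    exact tendsto_atTop_add_const_left _ _ (tendsto_pow_atTop (by norm_num))
  have hφderiv : ∀ x ∈ Ioi (0:ℝ), HasDerivWithinAt φ (φ' x) (Ioi x) x := by
    intro x _
    have : HasDerivAt φ (φ' x) x := by
      have h1 : HasDerivAt (fun x : ℝ => 1 + x ^ 2) (2 * x) x := by
        simpa using (hasDerivAt_pow 2 x).const_add 1
      simpa [hφ'def] using h1.const_mul (ν ^ 2)
    exact this.hasDerivWithinAt
  have hmaps : ∀ x ∈ Ioi (0:ℝ), φ x ∈ Ioi (ν ^ 2) := by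
    intro x hx
    have hx' : (0:ℝ) < x := hx
    simp only [hφdef, mem_Ioi]
    nlinarith [mul_pos hν2 (pow_pos hx' 2)]
  have hmaps' : ∀ x ∈ Ici (0:ℝ), φ x ∈ Ici (ν ^ 2) := by
    intro x hx
    have hx' : (0:ℝ) ≤ x := hx
    simp only [hφdef, mem_Ici]
    nlinarith
  -- the substituted integrand and its nice form
  have hsqrt : ∀ x : ℝ, 0 < x → Real.sqrt (φ x - ν ^ 2) = |ν| * x := by
    intro x hx
    rw [show φ x - ν ^ 2 = (ν * x) ^ 2 by simp only [hφdef]; ring, Real.sqrt_sq_eq_abs,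
      abs_mul, abs_of_pos hx]
  have heq : EqOn (fun x => φ' x • (G ∘ φ) x)
      (fun x => ((2 / |ν| : ℝ) : ℂ) * ((((1 + x ^ 2)⁻¹ : ℝ) : ℂ) * g (ν ^ 2 * (1 + x ^ 2))))
      (Ioi (0:ℝ)) := by
    intro x hx
    have hx' : (0:ℝ) < x := hx
    simp only [Function.comp_apply, hGdef]
    have h1 : (0:ℝ) < 1 + x ^ 2 := by positivity
    have hcoef : φ' x * (φ x * (|ν| * x))⁻¹ = 2 / |ν| * (1 + x ^ 2)⁻¹ := by
      simp only [hφdef, hφ'def]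
      field_simp
    rw [hsqrt x hx', Complex.real_smul, ← mul_assoc, ← Complex.ofReal_mul, hcoef,
      Complex.ofReal_mul, mul_assoc]
  have hbound : IntegrableOn (fun x : ℝ => (2 / |ν| * M) * (1 + x ^ 2)⁻¹) (Ioi (0:ℝ)) :=
    (integrable_inv_one_add_sq.integrableOn).const_mul _
  have hψint : IntegrableOn (fun x => φ' x • (G ∘ φ) x) (Ioi (0:ℝ)) := by
    apply Integrable.mono' hbound
    · apply ContinuousOn.aestronglyMeasurable _ measurableSet_Ioi
      apply ContinuousOn.fun_smul (hφ'def ▸ Continuous.continuousOn (by fun_prop))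
      exact (aux_Gcont hgc hν).comp hφcont.continuousOn hmaps
    · rw [ae_restrict_iff' measurableSet_Ioi]
      filter_upwards with x hx
      have hx' : (0:ℝ) < x := hx
      rw [show (φ' x • (G ∘ φ) x) = ((2 / |ν| : ℝ) : ℂ) *
        ((((1 + x ^ 2)⁻¹ : ℝ) : ℂ) * g (ν ^ 2 * (1 + x ^ 2))) from heq hx]
      have h1 : (0:ℝ) < 1 + x ^ 2 := by positivity
      rw [norm_mul, norm_mul, Complex.norm_real, Complex.norm_real, Real.norm_eq_abs,
        Real.norm_eq_abs, abs_of_pos (div_pos two_pos hνa), abs_of_pos (inv_pos.mpr h1)]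
      rw [mul_assoc]
      apply mul_le_mul_of_nonneg_left _ (le_of_lt (div_pos two_pos hνa))
      calc (1 + x ^ 2)⁻¹ * ‖g (ν ^ 2 * (1 + x ^ 2))‖
          ≤ (1 + x ^ 2)⁻¹ * M := by
            apply mul_le_mul_of_nonneg_left _ (by positivity)
            exact hgb _ (by simp only [mem_Ici]; positivity)
        _ = M * (1 + x ^ 2)⁻¹ := by ring
  have hsub := integral_comp_smul_deriv_Ioi (hφcont.continuousOn) hφtop hφderiv
    ((aux_Gcont hgc hν).mono (image_subset_iff.mpr hmaps))
    (htarget.mono_set (image_subset_iff.mpr hmaps'))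
    (Iff.mpr integrableOn_Ici_iff_integrableOn_Ioi hψint)
  have hφ0 : φ 0 = ν ^ 2 := by simp [hφdef]
  rw [hφ0] at hsub
  rw [← hsub, setIntegral_congr_fun measurableSet_Ioi heq, integral_const_mul]

set_option maxHeartbeats 1000000 in
/-- Let `f : [0,∞) → ℂ` be `C¹` with `f(λ) → 0` as `λ → ∞` and
`|f'(λ)| ≤ C (λ+1)^{-1-ε}`. Define
`F(ν) = (ν/(2π)) ∫_{ν²}^∞ (f(λ) - f(0)) λ^{-1} (λ - ν²)^{-1/2} dλ`. Then `F` is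
continuous and bounded on `ℝ`, `F(ν) → -f(0)/2` as `ν → +∞`, and `F(ν) → f(0)/2`
as `ν → -∞`. -/
theorem stmt_16 (f f' : ℝ → ℂ) (C ε : ℝ) (hC : 0 < C) (hε : 0 < ε)
    (hderiv : ∀ lam ∈ Ici (0 : ℝ), HasDerivWithinAt f (f' lam) (Ici 0) lam)
    (hcont : ContinuousOn f' (Ici 0))
    (hlim : Tendsto f atTop (nhds 0))
    (hf' : ∀ lam ∈ Ici (0 : ℝ), ‖f' lam‖ ≤ C * (lam + 1) ^ (-(1 : ℝ) - ε))
    (F : ℝ → ℂ)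
    (hF : ∀ ν : ℝ, F ν = ((ν / (2 * Real.pi) : ℝ) : ℂ) *
      ∫ lam in Ioi (ν ^ 2), (((lam * Real.sqrt (lam - ν ^ 2))⁻¹ : ℝ) : ℂ) * (f lam - f 0)) :
    Continuous F ∧ (∃ K : ℝ, ∀ ν : ℝ, ‖F ν‖ ≤ K) ∧
    Tendsto F atTop (nhds (-(f 0) / 2)) ∧
    Tendsto F atBot (nhds (f 0 / 2)) := by
  have hπ : (0:ℝ) < Real.pi := Real.pi_pos
  -- continuity of f on [0,∞)
  have hfc : ContinuousOn f (Ici 0) := fun x hx => (hderiv x hx).continuousWithinAt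
  -- boundedness of f on [0,∞)
  obtain ⟨A, hA⟩ : ∃ A : ℝ, ∀ lam ≥ A, ‖f lam‖ < 1 := by
    have h2 : ∀ᶠ lam in atTop, ‖f lam‖ < 1 := by
      have := hlim.norm
      simp only [norm_zero] at this
      exact this.eventually_lt_const one_pos
    exact eventually_atTop.mp h2
  obtain ⟨B, hB⟩ := (isCompact_Icc (a := (0:ℝ)) (b := max A 0)).exists_bound_of_continuousOn
    (hfc.mono (fun x hx => hx.1))
  set M : ℝ := max B 1 + ‖f 0‖ with hMdef
  have hgb : ∀ lam ∈ Ici (0:ℝ), ‖f lam - f 0‖ ≤ M := by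
    intro lam hlam
    have hb : ‖f lam‖ ≤ max B 1 := by
      rcases le_total lam (max A 0) with h | h
      · exact le_trans (hB lam ⟨hlam, h⟩) (le_max_left _ _)
      · exact le_trans (le_of_lt (hA lam (le_trans (le_max_left _ _) h))) (le_max_right _ _)
    calc ‖f lam - f 0‖ ≤ ‖f lam‖ + ‖f 0‖ := norm_sub_le _ _
      _ ≤ M := by rw [hMdef]; linarith
  have hM : 0 ≤ M := le_trans (norm_nonneg _) (hgb 0 (by norm_num))
  have hgc : ContinuousOn (fun lam => f lam - f 0) (Ici (0:ℝ)) := hfc.sub continuousOn_const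
  -- the auxiliary function H
  set H : ℝ → ℂ := fun ν => ∫ x in Ioi (0:ℝ),
      (((1 + x ^ 2)⁻¹ : ℝ) : ℂ) * (f (ν ^ 2 * (1 + x ^ 2)) - f 0) with hHdef
  -- key formula
  have key : ∀ ν : ℝ, ν ≠ 0 → F ν = ((ν / (Real.pi * |ν|) : ℝ) : ℂ) * H ν := by
    intro ν hν
    have hνa : (0:ℝ) < |ν| := abs_pos.mpr hν
    have hsubst := aux_subst (g := fun lam => f lam - f 0) hgc hgb hν
      (aux_integrableOn_target (g := fun lam => f lam - f 0) hgc hgb hν)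
    beta_reduce at hsubst
    have hHν : (∫ x in Ioi (0:ℝ), (((1 + x ^ 2)⁻¹ : ℝ) : ℂ) * (f (ν ^ 2 * (1 + x ^ 2)) - f 0))
        = H ν := rfl
    rw [hF ν, hsubst, hHν, ← mul_assoc, ← Complex.ofReal_mul]
    congr 2
    field_simp
  have coef_pos : ∀ ν : ℝ, 0 < ν → (ν / (Real.pi * |ν|) : ℝ) = 1 / Real.pi := by
    intro ν hν
    rw [abs_of_pos hν, div_eq_div_iff (by positivity) hπ.ne']
    ring
  have coef_neg : ∀ ν : ℝ, ν < 0 → (ν / (Real.pi * |ν|) : ℝ) = -(1 / Real.pi) := by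
    intro ν hν
    have h : (0:ℝ) < Real.pi * -ν := by nlinarith
    rw [abs_of_neg hν, div_eq_iff (ne_of_gt h)]
    field_simp
  -- measurability, bound, dominated convergence setup
  have hmeas : ∀ ν : ℝ, AEStronglyMeasurable
      (fun x : ℝ => (((1 + x ^ 2)⁻¹ : ℝ) : ℂ) * (f (ν ^ 2 * (1 + x ^ 2)) - f 0))
      (volume.restrict (Ioi 0)) := by
    intro ν
    apply Continuous.aestronglyMeasurable
    apply Continuous.mul
    · exact Complex.continuous_ofReal.comp
        ((continuous_const.add (continuous_pow 2)).inv₀ (fun x => by dsimp only [Pi.add_apply]; positivity))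
    · apply Continuous.sub _ continuous_const
      apply hfc.comp_continuous (by fun_prop)
      intro x
      simp only [mem_Ici]
      positivity
  have hbd : ∀ ν : ℝ, ∀ᵐ x ∂(volume.restrict (Ioi (0:ℝ))),
      ‖(((1 + x ^ 2)⁻¹ : ℝ) : ℂ) * (f (ν ^ 2 * (1 + x ^ 2)) - f 0)‖ ≤ M * (1 + x ^ 2)⁻¹ := by
    intro ν
    apply Eventually.of_forall
    intro x
    have h1 : (0:ℝ) < 1 + x ^ 2 := by positivity
    rw [norm_mul, Complex.norm_real, Real.norm_eq_abs, abs_of_pos (inv_pos.mpr h1)]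
    calc (1 + x ^ 2)⁻¹ * ‖f (ν ^ 2 * (1 + x ^ 2)) - f 0‖
        ≤ (1 + x ^ 2)⁻¹ * M := by
          apply mul_le_mul_of_nonneg_left _ (by positivity)
          exact hgb _ (by simp only [mem_Ici]; positivity)
      _ = M * (1 + x ^ 2)⁻¹ := by ring
  have hbint : Integrable (fun x : ℝ => M * (1 + x ^ 2)⁻¹) (volume.restrict (Ioi 0)) :=
    (integrable_inv_one_add_sq.integrableOn).const_mul _
  -- continuity of H
  have Hcont : Continuous H := by
    rw [hHdef]
    apply continuous_of_dominated hmeas hbd hbint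
    apply Eventually.of_forall
    intro x
    apply Continuous.mul continuous_const
    apply Continuous.sub _ continuous_const
    apply hfc.comp_continuous (by fun_prop)
    intro ν
    simp only [mem_Ici]
    positivity
  -- H 0 = 0
  have H0 : H 0 = 0 := by
    rw [hHdef]
    simp
  -- bound on H
  have Hnorm : ∀ ν : ℝ, ‖H ν‖ ≤ M * (Real.pi / 2) := by
    intro ν
    rw [hHdef]
    calc ‖∫ x in Ioi (0:ℝ), (((1 + x ^ 2)⁻¹ : ℝ) : ℂ) * (f (ν ^ 2 * (1 + x ^ 2)) - f 0)‖
        ≤ ∫ x in Ioi (0:ℝ), M * (1 + x ^ 2)⁻¹ :=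
          norm_integral_le_of_norm_le hbint (hbd ν)
      _ = M * (Real.pi / 2) := by
          rw [integral_const_mul]
          simp [integral_Ioi_inv_one_add_sq]
  -- norm bound for F
  have normF : ∀ ν : ℝ, ‖F ν‖ ≤ (1 / Real.pi) * ‖H ν‖ := by
    intro ν
    rcases eq_or_ne ν 0 with rfl | hν
    · have : F 0 = 0 := by rw [hF 0]; simp
      rw [this, norm_zero]
      positivity
    · have hνa : (0:ℝ) < |ν| := abs_pos.mpr hν
      rw [key ν hν, norm_mul, Complex.norm_real, Real.norm_eq_abs]
      apply mul_le_mul_of_nonneg_right _ (norm_nonneg _)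
      rw [abs_div, abs_mul, abs_abs, abs_of_pos hπ, div_le_iff₀ (by positivity)]
      have h2 : (1:ℝ)/Real.pi * (Real.pi * |ν|) = |ν| := by field_simp
      linarith
  -- pointwise limit of the integrand at ±∞
  have hgtop : Tendsto (fun lam => f lam - f 0) atTop (nhds (-(f 0))) := by
    simpa using hlim.sub_const (f 0)
  have hsq_top : Tendsto (fun ν : ℝ => ν ^ 2) atTop atTop :=
    tendsto_pow_atTop (by norm_num)
  have hsq_bot : Tendsto (fun ν : ℝ => ν ^ 2) atBot atTop := by
    have h1 : Tendsto (fun ν : ℝ => -ν) atBot atTop := tendsto_neg_atBot_atTop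
    have h := (tendsto_pow_atTop (n := 2) (by norm_num)).comp h1
    exact h.congr (fun ν => by simp [Function.comp])
  have hlimint : ∀ l : Filter ℝ, l.IsCountablyGenerated →
      Tendsto (fun ν : ℝ => ν ^ 2) l atTop →
      Tendsto H l (nhds (((Real.pi / 2 : ℝ) : ℂ) * (-(f 0)))) := by
    intro l hcg hsq
    have hptw : ∀ x : ℝ, Tendsto
        (fun ν : ℝ => (((1 + x ^ 2)⁻¹ : ℝ) : ℂ) * (f (ν ^ 2 * (1 + x ^ 2)) - f 0)) l
        (nhds ((((1 + x ^ 2)⁻¹ : ℝ) : ℂ) * (-(f 0)))) := by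
      intro x
      apply Tendsto.const_mul
      exact hgtop.comp (hsq.atTop_mul_const (by positivity))
    have := tendsto_integral_filter_of_dominated_convergence
      (μ := volume.restrict (Ioi (0:ℝ))) (F := fun ν x =>
        (((1 + x ^ 2)⁻¹ : ℝ) : ℂ) * (f (ν ^ 2 * (1 + x ^ 2)) - f 0))
      (f := fun x => (((1 + x ^ 2)⁻¹ : ℝ) : ℂ) * (-(f 0)))
      (fun x => M * (1 + x ^ 2)⁻¹)
      (Eventually.of_forall hmeas) (Eventually.of_forall hbd) hbint
      (Eventually.of_forall hptw)
    have hreal : (∫ x in Ioi (0:ℝ), (1 + x ^ 2)⁻¹) = Real.pi / 2 := by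
      simp
    have hcoe : (∫ x in Ioi (0:ℝ), (((1 + x ^ 2)⁻¹ : ℝ) : ℂ)) = ((Real.pi / 2 : ℝ) : ℂ) := by
      have h := Complex.ofRealCLM.integral_comp_comm
        (μ := volume.restrict (Ioi (0:ℝ))) (φ := fun x : ℝ => (1 + x ^ 2)⁻¹)
        integrable_inv_one_add_sq.integrableOn
      simpa [hreal] using h
    have hval : (∫ x in Ioi (0:ℝ), (((1 + x ^ 2)⁻¹ : ℝ) : ℂ) * (-(f 0)))
        = ((Real.pi / 2 : ℝ) : ℂ) * (-(f 0)) := by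
      rw [integral_mul_const, hcoe]
    rw [hHdef]
    exact hval ▸ this
  -- the three conclusions
  refine ⟨?_, ⟨(1 / Real.pi) * (M * (Real.pi / 2)), fun ν =>
      le_trans (normF ν) (mul_le_mul_of_nonneg_left (Hnorm ν) (by positivity))⟩, ?_, ?_⟩
  · -- continuity
    rw [continuous_iff_continuousAt]
    intro x
    rcases lt_trichotomy x 0 with hx | hx | hx
    · have hev : F =ᶠ[nhds x] fun ν => ((-(1 / Real.pi) : ℝ) : ℂ) * H ν := by
        filter_upwards [IsOpen.mem_nhds isOpen_Iio hx] with ν hν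
        rw [key ν (ne_of_lt hν), coef_neg ν hν]
      exact ContinuousAt.congr ((continuous_const.mul Hcont).continuousAt) hev.symm
    · subst hx
      have hF0 : F 0 = 0 := by rw [hF 0]; simp
      have : Tendsto F (nhds 0) (nhds 0) := by
        apply squeeze_zero_norm normF
        have := (Hcont.norm.tendsto 0).const_mul (1 / Real.pi)
        rw [H0, norm_zero, mul_zero] at this
        exact this
      rw [ContinuousAt, hF0]
      exact this
    · have hev : F =ᶠ[nhds x] fun ν => ((1 / Real.pi : ℝ) : ℂ) * H ν := by
        filter_upwards [IsOpen.mem_nhds isOpen_Ioi hx] with ν hν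
        rw [key ν (ne_of_gt hν), coef_pos ν hν]
      exact ContinuousAt.congr ((continuous_const.mul Hcont).continuousAt) hev.symm
  · -- limit at +∞
    have h1 : Tendsto (fun ν : ℝ => ((1 / Real.pi : ℝ) : ℂ) * H ν) atTop
        (nhds (((1 / Real.pi : ℝ) : ℂ) * (((Real.pi / 2 : ℝ) : ℂ) * (-(f 0))))) :=
      (hlimint atTop inferInstance hsq_top).const_mul _
    have hval : ((1 / Real.pi : ℝ) : ℂ) * (((Real.pi / 2 : ℝ) : ℂ) * (-(f 0))) = -(f 0) / 2 := by
      have hπc : (Real.pi : ℂ) ≠ 0 := Complex.ofReal_ne_zero.mpr (ne_of_gt hπ)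
      push_cast
      field_simp
    rw [hval] at h1
    apply h1.congr'
    filter_upwards [eventually_gt_atTop (0:ℝ)] with ν hν
    rw [key ν (ne_of_gt hν), coef_pos ν hν]
  · -- limit at -∞
    have h1 : Tendsto (fun ν : ℝ => ((-(1 / Real.pi) : ℝ) : ℂ) * H ν) atBot
        (nhds (((-(1 / Real.pi) : ℝ) : ℂ) * (((Real.pi / 2 : ℝ) : ℂ) * (-(f 0))))) :=
      (hlimint atBot inferInstance hsq_bot).const_mul _
    have hval : ((-(1 / Real.pi) : ℝ) : ℂ) * (((Real.pi / 2 : ℝ) : ℂ) * (-(f 0))) = f 0 / 2 := by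
      have hπc : (Real.pi : ℂ) ≠ 0 := Complex.ofReal_ne_zero.mpr (ne_of_gt hπ)
      push_cast
      field_simp
    rw [hval] at h1
    apply h1.congr'
    filter_upwards [eventually_lt_atBot (0:ℝ)] with ν hν
    rw [key ν (ne_of_lt hν), coef_neg ν hν]
end

section
/- For every s > 0 and every ν ∈ ℝ, the integral below converges absolutely and (ν/(2π)) ∫_{ν²}^∞ (e^{−sλ} − 1) λ^{−1} (λ − ν²)^{−1/2} dλ = −π^{−1/2} ∫₀^{s^{1/2} ν} e^{−y²} dy; that is, the Abel transform of the heat kernel function f(λ) = e^{−sλ} equals −(1/2) erf(s^{1/2} ν). -/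
open MeasureTheory Set

private lemma shift_deriv (c : ℝ) (S : Set ℝ) :
    ∀ x ∈ S, HasDerivWithinAt (fun u : ℝ => u + c) ((fun _ : ℝ => (1:ℝ)) x) S x :=
  fun x _ => ((hasDerivAt_id x).add_const c).hasDerivWithinAt

private lemma shift_integrableOn {c : ℝ} {S : Set ℝ} (hS : MeasurableSet S)
    (g : ℝ → ℝ) :
    IntegrableOn g ((fun u => u + c) '' S) ↔ IntegrableOn (fun u => g (u + c)) S := by
  rw [integrableOn_image_iff_integrableOn_abs_deriv_smul hS (shift_deriv c S)
      ((add_left_injective c).injOn)]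
  simp

private lemma shift_integral {c : ℝ} {S : Set ℝ} (hS : MeasurableSet S) (g : ℝ → ℝ) :
    ∫ x in (fun u => u + c) '' S, g x = ∫ x in S, g (x + c) := by
  rw [integral_image_eq_integral_abs_deriv_smul hS (shift_deriv c S)
      ((add_left_injective c).injOn)]
  simp

private lemma base_integrableOn {r : ℝ} (hr : 0 < r) :
    IntegrableOn (fun u : ℝ => Real.exp (-(r * u)) / Real.sqrt u) (Ioi 0) := by
  have h := integrableOn_rpow_mul_exp_neg_mul_rpow
    (by norm_num : (-1:ℝ) < -(1/2)) (by norm_num : (0:ℝ) < 1) hr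
  refine h.congr_fun (fun x hx => ?_) measurableSet_Ioi
  have hx0 : (0:ℝ) < x := hx
  dsimp only
  rw [Real.rpow_one, Real.rpow_neg hx0.le, ← Real.sqrt_eq_rpow, neg_mul]
  rw [div_eq_mul_inv, mul_comm]

private lemma base_integral {r : ℝ} (hr : 0 < r) :
    ∫ u in Ioi (0:ℝ), Real.exp (-(r * u)) / Real.sqrt u
      = Real.sqrt Real.pi / Real.sqrt r := by
  have h := Real.integral_rpow_mul_exp_neg_mul_Ioi (by norm_num : (0:ℝ) < 1/2) hr
  rw [Real.Gamma_one_half_eq, ← Real.sqrt_eq_rpow,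
    show (1:ℝ)/r = r⁻¹ from one_div r, Real.sqrt_inv] at h
  rw [div_eq_inv_mul, ← h]
  refine setIntegral_congr_fun measurableSet_Ioi (fun x hx => ?_)
  have hx0 : (0:ℝ) < x := hx
  rw [show (1:ℝ)/2 - 1 = -(1/2) by norm_num, Real.rpow_neg hx0.le,
    ← Real.sqrt_eq_rpow, div_eq_mul_inv, mul_comm]

private lemma shift_fun_eq (r c : ℝ) :
    (fun u : ℝ => Real.exp (-(r * (u + c))) / Real.sqrt (u + c - c))
      = fun u => Real.exp (-(r * c)) * (Real.exp (-(r * u)) / Real.sqrt u) := by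
  funext u
  rw [add_sub_cancel_right, show -(r * (u + c)) = -(r * u) + -(r * c) by ring,
    Real.exp_add]
  ring

private lemma gamma_shift_integrableOn {r : ℝ} (hr : 0 < r) (c : ℝ) :
    IntegrableOn (fun lam : ℝ => Real.exp (-(r * lam)) / Real.sqrt (lam - c)) (Ioi c) := by
  have himg : (fun u : ℝ => u + c) '' Ioi 0 = Ioi c := by
    rw [image_add_const_Ioi, zero_add]
  rw [← himg, shift_integrableOn measurableSet_Ioi]
  simp only [shift_fun_eq r c]
  exact (base_integrableOn hr).const_mul _

private lemma gamma_shift_integral {r : ℝ} (hr : 0 < r) (c : ℝ) :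
    ∫ lam in Ioi c, Real.exp (-(r * lam)) / Real.sqrt (lam - c)
      = Real.exp (-(r * c)) * (Real.sqrt Real.pi / Real.sqrt r) := by
  have himg : (fun u : ℝ => u + c) '' Ioi 0 = Ioi c := by
    rw [image_add_const_Ioi, zero_add]
  rw [← himg, shift_integral measurableSet_Ioi]
  simp only [shift_fun_eq r c]
  rw [integral_const_mul, base_integral hr]

private lemma exp_bound1 {x : ℝ} (hx : 0 ≤ x) : |Real.exp (-x) - 1| ≤ x := by
  rw [abs_sub_comm, abs_of_nonneg (by linarith [Real.exp_le_one_iff.mpr (neg_nonpos.mpr hx)])]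
  linarith [Real.add_one_le_exp (-x)]

private lemma exp_bound2 {x : ℝ} (hx : 0 ≤ x) : |Real.exp (-x) - 1| ≤ 1 := by
  rw [abs_sub_comm, abs_of_nonneg (by linarith [Real.exp_le_one_iff.mpr (neg_nonpos.mpr hx)])]
  linarith [Real.exp_pos (-x)]

private lemma main_integrableOn (s : ℝ) (hs : 0 < s) (ν : ℝ) :
    IntegrableOn
      (fun lam : ℝ => (Real.exp (-(s * lam)) - 1) / (lam * Real.sqrt (lam - ν ^ 2)))
      (Ioi (ν ^ 2)) := by
  set c := ν ^ 2 with hcdef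
  have hc : 0 ≤ c := sq_nonneg ν
  set g : ℝ → ℝ := fun lam => (Real.exp (-(s * lam)) - 1) / (lam * Real.sqrt (lam - c))
    with hg
  have hcont : ContinuousOn g (Ioi c) := by
    apply ContinuousOn.div
    · fun_prop
    · fun_prop
    · intro x hx
      have hx1 : c < x := hx
      have h1 : (0:ℝ) < x := lt_of_le_of_lt hc hx1
      have h2 : (0:ℝ) < Real.sqrt (x - c) := Real.sqrt_pos.mpr (by linarith)
      positivity
  have hmeas : AEStronglyMeasurable g (volume.restrict (Ioi c)) :=
    hcont.aestronglyMeasurable measurableSet_Ioi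
  rw [← Ioc_union_Ioi_eq_Ioi (by linarith : c ≤ c + 1)]
  refine IntegrableOn.union ?_ ?_
  · have hb : IntegrableOn (fun lam : ℝ => s / Real.sqrt (lam - c)) (Ioc c (c+1)) := by
      have himg : (fun u : ℝ => u + c) '' Ioc 0 1 = Ioc c (c+1) := by
        rw [image_add_const_Ioc, zero_add, add_comm]
      rw [← himg, shift_integrableOn measurableSet_Ioc]
      have hbase : IntegrableOn (fun u : ℝ => u ^ (-(1/2) : ℝ)) (Ioc (0:ℝ) 1) :=
        (intervalIntegrable_iff_integrableOn_Ioc_of_le zero_le_one).mp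
          (intervalIntegral.intervalIntegrable_rpow' (by norm_num))
      refine IntegrableOn.congr_fun (hbase.const_mul s) (fun u hu => ?_) measurableSet_Ioc
      have hu0 : (0:ℝ) < u := hu.1
      rw [add_sub_cancel_right, Real.rpow_neg hu0.le, ← Real.sqrt_eq_rpow,
        div_eq_mul_inv]
    refine Integrable.mono' hb (hmeas.mono_set Ioc_subset_Ioi_self) ?_
    refine (ae_restrict_iff' measurableSet_Ioc).mpr (.of_forall fun x hx => ?_)
    have hx1 : c < x := hx.1
    have hx0 : (0:ℝ) < x := lt_of_le_of_lt hc hx1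
    have hsq : (0:ℝ) < Real.sqrt (x - c) := Real.sqrt_pos.mpr (by linarith)
    have hnum : |Real.exp (-(s * x)) - 1| ≤ s * x := exp_bound1 (by positivity)
    rw [hg]
    simp only [norm_div, Real.norm_eq_abs]
    rw [abs_of_pos (by positivity : (0:ℝ) < x * Real.sqrt (x - c))]
    calc |Real.exp (-(s * x)) - 1| / (x * Real.sqrt (x - c))
        ≤ (s * x) / (x * Real.sqrt (x - c)) := by gcongr
        _ = s / Real.sqrt (x - c) := by
          field_simp
  · have hb : IntegrableOn (fun lam : ℝ => ((lam - c) * Real.sqrt (lam - c))⁻¹)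
        (Ioi (c+1)) := by
      have himg : (fun u : ℝ => u + c) '' Ioi 1 = Ioi (c+1) := by
        rw [image_add_const_Ioi, add_comm]
      rw [← himg, shift_integrableOn measurableSet_Ioi]
      have hbase : IntegrableOn (fun u : ℝ => u ^ (-(3/2) : ℝ)) (Ioi (1:ℝ)) :=
        integrableOn_Ioi_rpow_of_lt (by norm_num) one_pos
      refine hbase.congr_fun (fun u hu => ?_) measurableSet_Ioi
      have hu0 : (0:ℝ) < u := lt_trans one_pos hu
      rw [add_sub_cancel_right,
        show (-(3/2) : ℝ) = (-1) + (-(1/2)) by norm_num]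
      dsimp only
      rw [Real.rpow_add hu0, Real.rpow_neg_one, Real.rpow_neg hu0.le,
        ← Real.sqrt_eq_rpow, ← mul_inv]
    refine Integrable.mono' hb (hmeas.mono_set (Ioi_subset_Ioi (by linarith))) ?_
    refine (ae_restrict_iff' measurableSet_Ioi).mpr (.of_forall fun x hx => ?_)
    have hx1 : c + 1 < x := hx
    have hx0 : (0:ℝ) < x := by linarith
    have hsq : (0:ℝ) < Real.sqrt (x - c) := Real.sqrt_pos.mpr (by linarith)
    have hnum : |Real.exp (-(s * x)) - 1| ≤ 1 := exp_bound2 (by positivity)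
    rw [hg]
    simp only [norm_div, Real.norm_eq_abs]
    rw [abs_of_pos (by positivity : (0:ℝ) < x * Real.sqrt (x - c))]
    rw [inv_eq_one_div]
    refine div_le_div₀ (by norm_num) hnum (mul_pos (by linarith) hsq) ?_
    exact mul_le_mul_of_nonneg_right (by linarith) (Real.sqrt_nonneg _)

private lemma exp_integral {s : ℝ} (hs : 0 ≤ s) {lam : ℝ} (hlam : 0 < lam) :
    ∫ t in Ioc (0:ℝ) s, Real.exp (-(t * lam)) = (1 - Real.exp (-(s * lam))) / lam := by
  rw [← intervalIntegral.integral_of_le hs]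
  have hderiv : ∀ t ∈ uIcc (0:ℝ) s,
      HasDerivAt (fun t => -(1/lam) * Real.exp (-(t*lam))) (Real.exp (-(t*lam))) t := by
    intro t _
    have h1 : HasDerivAt (fun t : ℝ => -(t*lam)) (-lam) t := by
      have := ((hasDerivAt_id t).mul_const lam).neg
      rw [one_mul] at this
      exact this
    have h2 := (Real.hasDerivAt_exp (-(t*lam))).comp t h1
    have h3 := h2.const_mul (-(1/lam))
    exact h3.congr_deriv (by
      rw [mul_neg, neg_mul_neg, mul_comm (Real.exp _) lam, ← mul_assoc,
        one_div_mul_cancel hlam.ne', one_mul])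
  rw [intervalIntegral.integral_eq_sub_of_hasDerivAt hderiv
    ((Real.continuous_exp.comp (by fun_prop)).intervalIntegrable 0 s)]
  rw [zero_mul, neg_zero, Real.exp_zero]
  field_simp
  ring

private lemma pointwise_eq {s : ℝ} (hs : 0 ≤ s) {c lam : ℝ} (hc : 0 ≤ c) (hlam : c < lam) :
    ∫ t in Ioc (0:ℝ) s, Real.exp (-(t * lam)) / Real.sqrt (lam - c)
      = (1 - Real.exp (-(s * lam))) / (lam * Real.sqrt (lam - c)) := by
  have hlam0 : 0 < lam := lt_of_le_of_lt hc hlam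
  rw [integral_div, exp_integral hs hlam0, div_div]

private lemma sqrtpi_div_integrableOn {s : ℝ} (hs : 0 < s) :
    IntegrableOn (fun t : ℝ => Real.sqrt Real.pi * t ^ (-(1/2) : ℝ)) (Ioc 0 s) :=
  ((intervalIntegrable_iff_integrableOn_Ioc_of_le hs.le).mp
    (intervalIntegral.intervalIntegrable_rpow' (by norm_num))).const_mul _

private lemma h_integrableOn {s : ℝ} (hs : 0 < s) (c : ℝ) (hc : 0 ≤ c) :
    IntegrableOn (fun t : ℝ => Real.exp (-(t * c)) * (Real.sqrt Real.pi / Real.sqrt t))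
      (Ioc 0 s) := by
  refine Integrable.mono' (sqrtpi_div_integrableOn hs) ?_ ?_
  · exact ((by fun_prop : Measurable fun t : ℝ =>
      Real.exp (-(t * c)) * (Real.sqrt Real.pi / Real.sqrt t))).aestronglyMeasurable
  · refine (ae_restrict_iff' measurableSet_Ioc).mpr (.of_forall fun t ht => ?_)
    have ht0 : (0:ℝ) < t := ht.1
    have he : Real.exp (-(t * c)) ≤ 1 := Real.exp_le_one_iff.mpr (by nlinarith)
    have hsq : (0:ℝ) < Real.sqrt t := Real.sqrt_pos.mpr ht0
    rw [Real.norm_eq_abs, abs_of_nonneg (by positivity), Real.rpow_neg ht0.le,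
      ← Real.sqrt_eq_rpow, ← div_eq_mul_inv]
    calc Real.exp (-(t * c)) * (Real.sqrt Real.pi / Real.sqrt t)
        ≤ 1 * (Real.sqrt Real.pi / Real.sqrt t) :=
          mul_le_mul_of_nonneg_right he (by positivity)
      _ = Real.sqrt Real.pi / Real.sqrt t := one_mul _

private lemma fubini_eq (s : ℝ) (hs : 0 < s) (ν : ℝ) :
    ∫ lam in Ioi (ν^2), (Real.exp (-(s * lam)) - 1) / (lam * Real.sqrt (lam - ν^2))
      = - ∫ t in Ioc (0:ℝ) s,
          Real.exp (-(t * ν^2)) * (Real.sqrt Real.pi / Real.sqrt t) := by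
  set c := ν^2 with hcdef
  have hc : 0 ≤ c := sq_nonneg ν
  set μ := volume.restrict (Ioc (0:ℝ) s) with hμ
  set νm := volume.restrict (Ioi c) with hνm
  set F : ℝ × ℝ → ℝ := fun p => Real.exp (-(p.1 * p.2)) / Real.sqrt (p.2 - c) with hF
  have hFmeas : AEStronglyMeasurable F (μ.prod νm) :=
    ((by fun_prop : Measurable F)).aestronglyMeasurable
  have hFnonneg : ∀ p : ℝ × ℝ, 0 ≤ F p := by
    intro p
    have := Real.exp_pos (-(p.1 * p.2))
    have := Real.sqrt_nonneg (p.2 - c)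
    positivity
  have hInt : Integrable F (μ.prod νm) := by
    refine (integrable_prod_iff hFmeas).mpr ⟨?_, ?_⟩
    · refine (ae_restrict_iff' measurableSet_Ioc).mpr (.of_forall fun t ht => ?_)
      exact gamma_shift_integrableOn ht.1 c
    · have hcongr : (fun t : ℝ => ∫ lam, ‖F (t, lam)‖ ∂νm)
          =ᵐ[μ] fun t => Real.exp (-(t * c)) * (Real.sqrt Real.pi / Real.sqrt t) := by
        refine (ae_restrict_iff' measurableSet_Ioc).mpr (.of_forall fun t ht => ?_)
        have : (fun lam => ‖F (t, lam)‖) = fun lam => F (t, lam) := by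
          funext lam; exact Real.norm_of_nonneg (hFnonneg _)
        show (∫ lam, ‖F (t, lam)‖ ∂νm)
          = Real.exp (-(t * c)) * (Real.sqrt Real.pi / Real.sqrt t)
        simp only [this]
        exact gamma_shift_integral ht.1 c
      exact (h_integrableOn hs c hc).congr hcongr.symm
  have hswap := integral_integral_swap
    (f := fun t lam => Real.exp (-(t * lam)) / Real.sqrt (lam - c)) hInt
  have hL : (∫ t, (∫ lam, Real.exp (-(t * lam)) / Real.sqrt (lam - c) ∂νm) ∂μ)
      = ∫ t in Ioc (0:ℝ) s, Real.exp (-(t * c)) * (Real.sqrt Real.pi / Real.sqrt t) := by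
    refine integral_congr_ae ((ae_restrict_iff' measurableSet_Ioc).mpr
      (.of_forall fun t ht => ?_))
    exact gamma_shift_integral ht.1 c
  have hR : (∫ lam, (∫ t, Real.exp (-(t * lam)) / Real.sqrt (lam - c) ∂μ) ∂νm)
      = ∫ lam in Ioi c, (1 - Real.exp (-(s * lam))) / (lam * Real.sqrt (lam - c)) := by
    refine integral_congr_ae ((ae_restrict_iff' measurableSet_Ioi).mpr
      (.of_forall fun lam hlam => ?_))
    exact pointwise_eq hs.le hc hlam
  have key : ∫ t in Ioc (0:ℝ) s, Real.exp (-(t * c)) * (Real.sqrt Real.pi / Real.sqrt t)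
      = ∫ lam in Ioi c, (1 - Real.exp (-(s * lam))) / (lam * Real.sqrt (lam - c)) := by
    rw [← hL, ← hR]; exact hswap
  rw [key, ← integral_neg]
  refine setIntegral_congr_fun measurableSet_Ioi (fun lam hlam => ?_)
  ring

private lemma sqrt_image {s ν : ℝ} (hs : 0 < s) (hν : 0 < ν) :
    (fun t : ℝ => ν * Real.sqrt t) '' Ioo 0 s = Ioo 0 (ν * Real.sqrt s) := by
  ext y
  constructor
  · rintro ⟨t, ht, rfl⟩
    exact ⟨mul_pos hν (Real.sqrt_pos.mpr ht.1),
      by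
        have h1 := Real.sqrt_lt_sqrt ht.1.le ht.2
        simpa using mul_lt_mul_of_pos_left h1 hν⟩
  · rintro ⟨hy0, hy1⟩
    refine ⟨(y / ν)^2, ⟨by positivity, ?_⟩, ?_⟩
    · have h1 : y / ν < Real.sqrt s := by
        rw [div_lt_iff₀ hν]; linarith [mul_comm ν (Real.sqrt s)]
      have h2 : 0 < y / ν := by positivity
      nlinarith [Real.sq_sqrt hs.le]
    · show ν * Real.sqrt ((y / ν) ^ 2) = y
      rw [Real.sqrt_sq (by positivity)]
      field_simp

private lemma rhs_eq {s : ℝ} (hs : 0 < s) {ν : ℝ} (hν : 0 < ν) :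
    ∫ y in (0:ℝ)..(Real.sqrt s * ν), Real.exp (-y ^ 2)
      = ∫ t in Ioo (0:ℝ) s, (ν / 2) * (Real.exp (-(t * ν^2)) / Real.sqrt t) := by
  have hsν : 0 < Real.sqrt s * ν := mul_pos (Real.sqrt_pos.mpr hs) hν
  rw [intervalIntegral.integral_of_le hsν.le, integral_Ioc_eq_integral_Ioo,
    show Real.sqrt s * ν = ν * Real.sqrt s from mul_comm _ _, ← sqrt_image hs hν]
  rw [integral_image_eq_integral_abs_deriv_smul (f' := fun t => ν * (1 / (2 * Real.sqrt t)))
    measurableSet_Ioo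
    (fun t ht => ((Real.hasDerivAt_sqrt (ne_of_gt ht.1)).const_mul ν).hasDerivWithinAt)
    (fun a ha b hb h => (Real.sqrt_inj ha.1.le hb.1.le).mp
      (mul_left_cancel₀ (ne_of_gt hν) h))]
  refine setIntegral_congr_fun measurableSet_Ioo (fun t ht => ?_)
  have ht0 : (0:ℝ) < t := ht.1
  have hsq : (0:ℝ) < Real.sqrt t := Real.sqrt_pos.mpr ht0
  rw [smul_eq_mul, abs_of_pos (by positivity), mul_pow, Real.sq_sqrt ht0.le]
  rw [show ν^2 * t = t * ν^2 from mul_comm _ _]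
  field_simp

private lemma even_int (a : ℝ) :
    ∫ y in (0:ℝ)..(-a), Real.exp (-y^2) = - ∫ y in (0:ℝ)..a, Real.exp (-y^2) := by
  have h := intervalIntegral.integral_comp_neg (a := 0) (b := a)
    (f := fun y => Real.exp (-y^2))
  simp only [neg_sq, neg_zero] at h
  rw [intervalIntegral.integral_symm, ← h]

private lemma main_eq_pos (s : ℝ) (hs : 0 < s) {ν : ℝ} (hν : 0 < ν) :
    (ν / (2 * Real.pi)) *
        ∫ lam in Ioi (ν ^ 2), (Real.exp (-(s * lam)) - 1) / (lam * Real.sqrt (lam - ν ^ 2))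
      = -(Real.sqrt Real.pi)⁻¹ * ∫ y in (0:ℝ)..(Real.sqrt s * ν), Real.exp (-y ^ 2) := by
  rw [fubini_eq s hs ν, rhs_eq hs hν, integral_Ioc_eq_integral_Ioo]
  have h1 : (fun t : ℝ => Real.exp (-(t * ν^2)) * (Real.sqrt Real.pi / Real.sqrt t))
      = fun t : ℝ => Real.sqrt Real.pi * (Real.exp (-(t * ν^2)) / Real.sqrt t) := by
    funext t; ring
  rw [h1, integral_const_mul, integral_const_mul]
  set I := ∫ t in Ioo (0:ℝ) s, Real.exp (-(t * ν^2)) / Real.sqrt t with hI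
  have hπ : Real.sqrt Real.pi * Real.sqrt Real.pi = Real.pi :=
    Real.mul_self_sqrt Real.pi_pos.le
  have h2 : Real.sqrt Real.pi ≠ 0 := by
    have := Real.pi_pos; nlinarith
  have h3 : Real.pi ≠ 0 := Real.pi_ne_zero
  field_simp
  linear_combination (-I) * hπ

/-- For every `s > 0` and `ν ∈ ℝ` the integral converges absolutely and
`(ν/(2π)) ∫_{ν²}^∞ (e^{-sλ} - 1) λ^{-1} (λ - ν²)^{-1/2} dλ
  = -π^{-1/2} ∫₀^{√s ν} e^{-y²} dy = -(1/2) erf(√s ν)`. -/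
theorem stmt_18 (s : ℝ) (hs : 0 < s) (ν : ℝ) :
    IntegrableOn
      (fun lam : ℝ => (Real.exp (-(s * lam)) - 1) / (lam * Real.sqrt (lam - ν ^ 2)))
      (Ioi (ν ^ 2)) ∧
    (ν / (2 * Real.pi)) *
        ∫ lam in Ioi (ν ^ 2), (Real.exp (-(s * lam)) - 1) / (lam * Real.sqrt (lam - ν ^ 2))
      = -(Real.sqrt Real.pi)⁻¹ * ∫ y in (0 : ℝ)..(Real.sqrt s * ν), Real.exp (-y ^ 2) := by
  refine ⟨main_integrableOn s hs ν, ?_⟩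
  rcases lt_trichotomy ν 0 with hν | rfl | hν
  · have hpos := main_eq_pos s hs (neg_pos.mpr hν)
    simp only [neg_sq] at hpos
    rw [show Real.sqrt s * -ν = -(Real.sqrt s * ν) by ring, even_int] at hpos
    linear_combination -hpos
  · simp
  · exact main_eq_pos s hs hν
end
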